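/- arXiv:1004.5507 — 9 statements merged into one kernel-verified Lean document; each statement's English description precedes it below -/
import Mathlib

section
/- Let u be a measurable function on a metric measure space X, s ∈ (0,∞), ε ∈ (0,s], and N ∈ ℤ. If g⃗ = {g_k}_{k∈ℤ} ∈ 𝔻̃^{s,ε,N}(u), then the sequence h⃗ = {h_k}_{k∈ℤ} with h_k := ∑_{j=k−N}^{∞} 2^{(k−j+1)ε} g_j belongs to 𝔻^s(u). -/
open MeasureTheory ENNReal

/-- `g` is a fractional `s`-Hajłasz gradient of `u` (Definition 1.1), `𝔻^s(u)`. -/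
def IsFracHajlaszGradient {X : Type*} [MetricSpace X] [MeasurableSpace X]
    (μ : Measure X) (s : ℝ) (u : X → ℝ) (g : ℤ → X → ℝ≥0∞) : Prop :=
  (∀ k, Measurable (g k)) ∧
  ∃ E : Set X, μ E = 0 ∧ ∀ (k : ℤ), ∀ x ∉ E, ∀ y ∉ E,
    (2 : ℝ) ^ (-k - 1) ≤ dist x y → dist x y < (2 : ℝ) ^ (-k) →
    ENNReal.ofReal |u x - u y| ≤ ENNReal.ofReal (dist x y ^ s) * (g k x + g k y)

/-- The class `𝔻̃^{s,ε,N}(u)`. -/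
def MemTildeD {X : Type*} [MetricSpace X] [MeasurableSpace X]
    (μ : Measure X) (s ε : ℝ) (N : ℤ) (u : X → ℝ) (g : ℤ → X → ℝ≥0∞) : Prop :=
  (∀ k, Measurable (g k)) ∧
  ∃ E : Set X, μ E = 0 ∧ ∀ x ∉ E, ∀ y ∉ E,
    ENNReal.ofReal |u x - u y| ≤ ENNReal.ofReal (dist x y ^ (s - ε)) *
      ∑' k : ℤ, ENNReal.ofReal ((2 : ℝ) ^ (-(k : ℝ) * ε)) * (g k x + g k y) *
        (if (2 : ℝ) ^ (-k - 1 - N) ≤ dist x y then 1 else 0)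
/-- Theorem 2.1, (iii) ⟹ (i) construction: if `g⃗ ∈ 𝔻̃^{s,ε,N}(u)` then
`h_k := ∑_{j ≥ k-N} 2^{(k-j+1)ε} g_j` is in `𝔻^s(u)`. -/
theorem tildeD_to_fracHajlaszGradient {X : Type*} [MetricSpace X] [MeasurableSpace X]
    (μ : Measure X) (s ε : ℝ) (N : ℤ) (hs : 0 < s) (hε : 0 < ε) (hεs : ε ≤ s)
    (u : X → ℝ) (hu : Measurable u) (g : ℤ → X → ℝ≥0∞)
    (hg : MemTildeD μ s ε N u g) :
    IsFracHajlaszGradient μ s u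
      (fun k x => ∑' j : ℤ, if k - N ≤ j then
        ENNReal.ofReal ((2 : ℝ) ^ (((k - j + 1 : ℤ) : ℝ) * ε)) * g j x else 0) := by
  obtain ⟨hmeas, E, hE, hineq⟩ := hg
  constructor
  · intro k
    refine Measurable.ennreal_tsum fun j => ?_
    by_cases h : k - N ≤ j
    · simpa [h] using (hmeas j).const_mul _
    · simpa [h] using measurable_const
  refine ⟨E, hE, fun k x hx y hy hd1 hd2 => ?_⟩
  have hd0 : (0:ℝ) < dist x y := lt_of_lt_of_le (by positivity) hd1
  refine (hineq x hx y hy).trans ?_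
  simp only
  rw [← ENNReal.tsum_add, ← ENNReal.tsum_mul_left, ← ENNReal.tsum_mul_left]
  refine ENNReal.tsum_le_tsum fun j => ?_
  by_cases hj : k - N ≤ j
  · have hχ : (2:ℝ)^(-j-1-N) ≤ dist x y :=
      le_trans (zpow_le_zpow_right₀ (by norm_num) (by omega)) hd1
    have key : dist x y ^ (s-ε) * (2:ℝ)^(-(j:ℝ)*ε)
        ≤ dist x y ^ s * (2:ℝ)^(((k-j+1:ℤ):ℝ)*ε) := by
      have h1 : dist x y ^ (-ε) ≤ (2:ℝ) ^ (((k:ℝ)+1) * ε) := by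
        rw [Real.rpow_neg hd0.le,
          show ((k:ℝ)+1)*ε = -((-(k:ℝ)-1)*ε) by ring, Real.rpow_neg (by norm_num)]
        refine inv_anti₀ (by positivity) ?_
        calc (2:ℝ)^((-(k:ℝ)-1)*ε) = ((2:ℝ)^(-(k:ℝ)-1))^ε := Real.rpow_mul (by norm_num) _ _
        _ = ((2:ℝ)^(-k-1:ℤ))^ε := by
            rw [show (-(k:ℝ)-1) = ((-k-1:ℤ):ℝ) by push_cast; ring, Real.rpow_intCast]
        _ ≤ dist x y ^ ε := Real.rpow_le_rpow (by positivity) hd1 hε.le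
      calc dist x y^(s-ε) * (2:ℝ)^(-(j:ℝ)*ε)
          = dist x y^s * (dist x y^(-ε) * (2:ℝ)^(-(j:ℝ)*ε)) := by
            rw [show s - ε = s + -ε by ring, Real.rpow_add hd0]; ring
      _ ≤ dist x y^s * ((2:ℝ)^(((k:ℝ)+1)*ε) * (2:ℝ)^(-(j:ℝ)*ε)) := by gcongr
      _ = dist x y^s * (2:ℝ)^(((k-j+1:ℤ):ℝ)*ε) := by
            rw [← Real.rpow_add (by norm_num)]; push_cast; ring_nf
    simp only [hj, if_true, hχ, mul_one]
    rw [← mul_add (ENNReal.ofReal ((2:ℝ)^(((k-j+1:ℤ):ℝ)*ε))), ← mul_assoc, ← mul_assoc,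
      ← ENNReal.ofReal_mul (by positivity), ← ENNReal.ofReal_mul (by positivity)]
    exact mul_le_mul_left (ENNReal.ofReal_le_ofReal key) _
  · have hχ : ¬ ((2:ℝ)^(-j-1-N) ≤ dist x y) := by
      push_neg
      exact lt_of_lt_of_le hd2 (zpow_le_zpow_right₀ (by norm_num) (by omega))
    simp [hχ, hj]
end

section
/- Let u be a measurable function on a metric measure space X, s ∈ (0,∞), ε ∈ (0,∞), and N ∈ ℤ. If g⃗ = {g_k}_{k∈ℤ} ∈ 𝔻̄^{s,ε,N}(u), then the sequence h⃗ = {h_k}_{k∈ℤ} with h_k := ∑_{j=−∞}^{k−N} 2^{(j−k)ε} g_j belongs to 𝔻^s(u). -/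
open MeasureTheory ENNReal

/-- The class `𝔻̄^{s,ε,N}(u)`. -/
def MemBarD {X : Type*} [MetricSpace X] [MeasurableSpace X]
    (μ : Measure X) (s ε : ℝ) (N : ℤ) (u : X → ℝ) (g : ℤ → X → ℝ≥0∞) : Prop :=
  (∀ k, Measurable (g k)) ∧
  ∃ E : Set X, μ E = 0 ∧ ∀ x ∉ E, ∀ y ∉ E,
    ENNReal.ofReal |u x - u y| ≤ ENNReal.ofReal (dist x y ^ (s + ε)) *
      ∑' k : ℤ, ENNReal.ofReal ((2 : ℝ) ^ ((k : ℝ) * ε)) * (g k x + g k y) *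
        (if 0 < dist x y ∧ dist x y < (2 : ℝ) ^ (-k - N) then 1 else 0)

/-- Theorem 2.1, (iv) ⟹ (i) construction: if `g⃗ ∈ 𝔻̄^{s,ε,N}(u)` then
`h_k := ∑_{j ≤ k-N} 2^{(j-k)ε} g_j` is in `𝔻^s(u)`. -/
theorem barD_to_fracHajlaszGradient {X : Type*} [MetricSpace X] [MeasurableSpace X]
    (μ : Measure X) (s ε : ℝ) (N : ℤ) (hs : 0 < s) (hε : 0 < ε)
    (u : X → ℝ) (hu : Measurable u) (g : ℤ → X → ℝ≥0∞)
    (hg : MemBarD μ s ε N u g) :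
    IsFracHajlaszGradient μ s u
      (fun k x => ∑' j : ℤ, if j ≤ k - N then
        ENNReal.ofReal ((2 : ℝ) ^ (((j - k : ℤ) : ℝ) * ε)) * g j x else 0) := by
  obtain ⟨hmeas, E, hE, hbound⟩ := hg
  constructor
  · intro k
    apply Measurable.ennreal_tsum
    intro j
    by_cases h : j ≤ k - N
    · simp only [h, if_true]
      exact measurable_const.mul (hmeas j)
    · simpa [h] using measurable_const
  · refine ⟨E, hE, fun k x hx y hy hlo hhi => ?_⟩
    have hd : 0 < dist x y := lt_of_lt_of_le (by positivity) hlo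
    refine (hbound x hx y hy).trans ?_
    simp only []
    rw [← ENNReal.tsum_mul_left, ← ENNReal.tsum_add, ← ENNReal.tsum_mul_left]
    refine ENNReal.tsum_le_tsum fun j => ?_
    by_cases hχ : 0 < dist x y ∧ dist x y < (2 : ℝ) ^ (-j - N)
    · have hlt : (2 : ℝ) ^ (-k - 1) < (2 : ℝ) ^ (-j - N) := lt_of_le_of_lt hlo hχ.2
      have hjk : j ≤ k - N := by
        have := (zpow_lt_zpow_iff_right₀ (by norm_num : (1:ℝ) < 2)).mp hlt
        omega
      rw [if_pos hχ, mul_one]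
      simp only [if_pos hjk]
      rw [← mul_add, ← mul_assoc, ← mul_assoc]
      refine mul_le_mul_left ?_ _
      rw [← ENNReal.ofReal_mul (by positivity), ← ENNReal.ofReal_mul (by positivity)]
      refine ENNReal.ofReal_le_ofReal ?_
      have h1 : dist x y ^ (s + ε) = dist x y ^ s * dist x y ^ ε := Real.rpow_add hd s ε
      have h2 : dist x y ^ ε ≤ (2 : ℝ) ^ ((-k : ℝ) * ε) := by
        have hdk : dist x y ≤ (2 : ℝ) ^ ((-k : ℝ)) := by
          rw [← Real.rpow_intCast 2 (-k)] at hhi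
          push_cast at hhi ⊢
          exact hhi.le
        calc dist x y ^ ε ≤ ((2 : ℝ) ^ ((-k : ℝ))) ^ ε :=
              Real.rpow_le_rpow hd.le hdk hε.le
          _ = (2 : ℝ) ^ ((-k : ℝ) * ε) := by
              rw [← Real.rpow_mul (by norm_num)]
      calc dist x y ^ (s + ε) * (2 : ℝ) ^ ((j : ℝ) * ε)
          = dist x y ^ s * (dist x y ^ ε * (2 : ℝ) ^ ((j : ℝ) * ε)) := by rw [h1]; ring
        _ ≤ dist x y ^ s * ((2 : ℝ) ^ ((-k : ℝ) * ε) * (2 : ℝ) ^ ((j : ℝ) * ε)) := by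
            gcongr
        _ = dist x y ^ s * (2 : ℝ) ^ (((j - k : ℤ) : ℝ) * ε) := by
            rw [← Real.rpow_add (by norm_num : (0:ℝ) < 2)]
            push_cast
            ring_nf
    · rw [if_neg hχ, mul_zero, mul_zero]
      exact zero_le
end

section
/- For s, p ∈ (0,∞) and q ∈ (0,∞], and for any N₁, N₂ ∈ ℤ≥0, the norm inf over g⃗ ∈ 𝔻^{s,N₁,N₂}(u) of ‖g⃗‖_{L^p(X,ℓ^q)} is comparable (with constants independent of u) to ‖u‖_{Ṁ^s_{p,q}(X)} = inf over g⃗ ∈ 𝔻^s(u) of ‖g⃗‖_{L^p(X,ℓ^q)}. -/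
open MeasureTheory ENNReal

/-- The class `𝔻^{s,N₁,N₂}(u)`. -/
def MemDN {X : Type*} [MetricSpace X] [MeasurableSpace X]
    (μ : Measure X) (s : ℝ) (N₁ N₂ : ℕ) (u : X → ℝ) (g : ℤ → X → ℝ≥0∞) : Prop :=
  (∀ k, Measurable (g k)) ∧
  ∃ E : Set X, μ E = 0 ∧ ∀ (k : ℤ), ∀ x ∉ E, ∀ y ∉ E,
    (2 : ℝ) ^ (-k - 1 - N₁) ≤ dist x y → dist x y < (2 : ℝ) ^ (-k + N₂) →
    ENNReal.ofReal |u x - u y| ≤ ENNReal.ofReal (dist x y ^ s) * (g k x + g k y)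

/-- The `ℓ^q` norm of a sequence in `[0,∞]` (with `q ∈ (0,∞]`). -/
noncomputable def lqNorm (q : ℝ≥0∞) (a : ℤ → ℝ≥0∞) : ℝ≥0∞ :=
  if q = ∞ then ⨆ k, a k else (∑' k, a k ^ q.toReal) ^ (1 / q.toReal)

/-- The `L^p(X, ℓ^q)` norm of a sequence of functions. -/
noncomputable def LpLqNorm {X : Type*} [MeasurableSpace X] (μ : Measure X) (p : ℝ)
    (q : ℝ≥0∞) (g : ℤ → X → ℝ≥0∞) : ℝ≥0∞ :=
  (∫⁻ x, lqNorm q (fun k => g k x) ^ p ∂μ) ^ (1 / p)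

/-- The `ℓ^q` norm of the window-sum sequence is controlled by the `ℓ^q` norm. -/
lemma lq_window_le (q : ℝ≥0∞) (hq : 0 < q) (N₁ N₂ : ℕ) (a : ℤ → ℝ≥0∞) :
    lqNorm q (fun k => ∑ j ∈ Finset.Icc (k - (N₂:ℤ)) (k + N₁), a j) ≤
      (((N₁:ℝ≥0∞) + N₂ + 1) * ((N₁:ℝ≥0∞) + N₂ + 1) ^ (1 / q.toReal)) * lqNorm q a := by
  set M : ℝ≥0∞ := (N₁:ℝ≥0∞) + N₂ + 1 with hM
  have hMn : (((N₁ + N₂ + 1 : ℕ) : ℝ≥0∞)) = M := by push_cast [hM]; ring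
  have hcard : ∀ k : ℤ, (Finset.Icc (k - (N₂:ℤ)) (k + N₁)).card = N₁ + N₂ + 1 := by
    intro k; rw [Int.card_Icc]; omega
  rcases eq_or_ne q ∞ with hqi | hqf
  · simp only [lqNorm, hqi, if_true, ENNReal.toReal_top, one_div, GroupWithZero.inv_zero,
      ENNReal.rpow_zero, mul_one]
    refine iSup_le fun k => ?_
    calc ∑ j ∈ Finset.Icc (k - (N₂:ℤ)) (k + N₁), a j
        ≤ ∑ j ∈ Finset.Icc (k - (N₂:ℤ)) (k + N₁), ⨆ i, a i :=
          Finset.sum_le_sum fun j _ => le_iSup a j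
      _ = M * ⨆ i, a i := by
          rw [Finset.sum_const, hcard, nsmul_eq_mul, hMn]
  · have hr : 0 < q.toReal := ENNReal.toReal_pos hq.ne' hqf
    simp only [lqNorm, hqf, if_false]
    set r := q.toReal
    have step1 : ∀ k : ℤ, (∑ j ∈ Finset.Icc (k - (N₂:ℤ)) (k + N₁), a j) ^ r ≤
        M ^ r * ∑ j ∈ Finset.Icc (k - (N₂:ℤ)) (k + N₁), a j ^ r := by
      intro k
      set S := ∑ j ∈ Finset.Icc (k - (N₂:ℤ)) (k + N₁), a j ^ r with hS
      have h1 : ∀ j ∈ Finset.Icc (k - (N₂:ℤ)) (k + N₁), a j ≤ S ^ (1/r) := by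
        intro j hj
        have := Finset.single_le_sum (f := fun j => a j ^ r) (fun i _ => zero_le) hj
        calc a j = (a j ^ r) ^ (1/r) := by
              rw [← ENNReal.rpow_mul, mul_one_div_cancel hr.ne', ENNReal.rpow_one]
          _ ≤ S ^ (1/r) := ENNReal.rpow_le_rpow this (by positivity)
      calc (∑ j ∈ Finset.Icc (k - (N₂:ℤ)) (k + N₁), a j) ^ r
          ≤ ((Finset.Icc (k - (N₂:ℤ)) (k + N₁)).card • (S ^ (1/r))) ^ r :=
            ENNReal.rpow_le_rpow (Finset.sum_le_card_nsmul _ _ _ h1) hr.le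
        _ = (M * S ^ (1/r)) ^ r := by rw [nsmul_eq_mul, hcard, hMn]
        _ = M ^ r * S := by
            rw [ENNReal.mul_rpow_of_nonneg _ _ hr.le, ← ENNReal.rpow_mul,
              one_div_mul_cancel hr.ne', ENNReal.rpow_one]
    have step2 : (∑' k : ℤ, ∑ j ∈ Finset.Icc (k - (N₂:ℤ)) (k + N₁), a j ^ r) =
        M * ∑' k : ℤ, a k ^ r := by
      have hre : ∀ k : ℤ, ∑ j ∈ Finset.Icc (k - (N₂:ℤ)) (k + N₁), a j ^ r =
          ∑ i ∈ Finset.Icc (-(N₂:ℤ)) (N₁:ℤ), a (k + i) ^ r := by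
        intro k
        rw [show k - (N₂:ℤ) = k + -(N₂:ℤ) by ring, ← Finset.map_add_left_Icc,
          Finset.sum_map]
        rfl
      simp_rw [hre]
      rw [Summable.tsum_finsetSum (fun i _ => ENNReal.summable)]
      have : ∀ i : ℤ, (∑' k : ℤ, a (k + i) ^ r) = ∑' k : ℤ, a k ^ r := fun i =>
        (Equiv.addRight i).tsum_eq (fun k => a k ^ r)
      simp_rw [this, Finset.sum_const, nsmul_eq_mul]
      congr 1
      rw [← hMn]
      norm_cast
      rw [Int.card_Icc]; omega
    calc (∑' k : ℤ, (∑ j ∈ Finset.Icc (k - (N₂:ℤ)) (k + N₁), a j) ^ r) ^ (1/r)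
        ≤ (∑' k : ℤ, M ^ r * ∑ j ∈ Finset.Icc (k - (N₂:ℤ)) (k + N₁), a j ^ r) ^ (1/r) :=
          ENNReal.rpow_le_rpow (ENNReal.tsum_le_tsum step1) (by positivity)
      _ = (M ^ r * (M * ∑' k : ℤ, a k ^ r)) ^ (1/r) := by rw [ENNReal.tsum_mul_left, step2]
      _ = M * M ^ (1/r) * (∑' k : ℤ, a k ^ r) ^ (1/r) := by
          rw [ENNReal.mul_rpow_of_nonneg _ _ (by positivity),
            ENNReal.mul_rpow_of_nonneg _ _ (by positivity), ← ENNReal.rpow_mul,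
            mul_one_div_cancel hr.ne', ENNReal.rpow_one, mul_assoc]

/-- A pointwise `ℓ^q` comparison upgrades to an `L^p(ℓ^q)` comparison. -/
lemma LpLq_le_const {X : Type*} [MeasurableSpace X] (μ : Measure X) {p : ℝ} (hp : 0 < p)
    (q : ℝ≥0∞) {C₀ : ℝ≥0∞} (hC₀ : C₀ ≠ ∞) (g h : ℤ → X → ℝ≥0∞)
    (hpt : ∀ x, lqNorm q (fun k => h k x) ≤ C₀ * lqNorm q (fun k => g k x)) :
    LpLqNorm μ p q h ≤ C₀ * LpLqNorm μ p q g := by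
  unfold LpLqNorm
  calc (∫⁻ x, lqNorm q (fun k => h k x) ^ p ∂μ) ^ (1/p)
      ≤ (∫⁻ x, (C₀ * lqNorm q (fun k => g k x)) ^ p ∂μ) ^ (1/p) :=
        ENNReal.rpow_le_rpow
          (lintegral_mono fun x => ENNReal.rpow_le_rpow (hpt x) hp.le) (by positivity)
    _ = (∫⁻ x, C₀ ^ p * lqNorm q (fun k => g k x) ^ p ∂μ) ^ (1/p) := by
        simp_rw [ENNReal.mul_rpow_of_nonneg _ _ hp.le]
    _ = (C₀ ^ p * ∫⁻ x, lqNorm q (fun k => g k x) ^ p ∂μ) ^ (1/p) := by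
        rw [lintegral_const_mul' _ _ (ENNReal.rpow_ne_top_of_nonneg hp.le hC₀)]
    _ = C₀ * (∫⁻ x, lqNorm q (fun k => g k x) ^ p ∂μ) ^ (1/p) := by
        rw [ENNReal.mul_rpow_of_nonneg _ _ (by positivity), ← ENNReal.rpow_mul,
          mul_one_div_cancel hp.ne', ENNReal.rpow_one]

/-- Theorem 2.1 (I), (i) ⇔ (ii): for `s, p ∈ (0,∞)`, `q ∈ (0,∞]` and `N₁, N₂ ∈ ℤ₊`,
`inf_{g⃗ ∈ 𝔻^{s,N₁,N₂}(u)} ‖g⃗‖_{L^p(ℓ^q)} ∼ ‖u‖_{Ṁ^s_{p,q}(X)}` with constants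
independent of `u`. -/
theorem DN_norm_equiv_hajlaszTL_norm {X : Type*} [MetricSpace X] [MeasurableSpace X]
    (μ : Measure X) (s p : ℝ) (q : ℝ≥0∞) (hs : 0 < s) (hp : 0 < p) (hq : 0 < q)
    (N₁ N₂ : ℕ) :
    ∃ C : ℝ≥0∞, 0 < C ∧ C ≠ ∞ ∧ ∀ u : X → ℝ, Measurable u →
      ((⨅ g ∈ {g : ℤ → X → ℝ≥0∞ | MemDN μ s N₁ N₂ u g}, LpLqNorm μ p q g) ≤
        C * ⨅ g ∈ {g : ℤ → X → ℝ≥0∞ | IsFracHajlaszGradient μ s u g}, LpLqNorm μ p q g) ∧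
      ((⨅ g ∈ {g : ℤ → X → ℝ≥0∞ | IsFracHajlaszGradient μ s u g}, LpLqNorm μ p q g) ≤
        C * ⨅ g ∈ {g : ℤ → X → ℝ≥0∞ | MemDN μ s N₁ N₂ u g}, LpLqNorm μ p q g) := by
  set M : ℝ≥0∞ := (N₁:ℝ≥0∞) + N₂ + 1 with hM
  have hM1 : 1 ≤ M := by rw [hM]; exact le_add_self
  have hMne : M ≠ ∞ := by finiteness
  set C : ℝ≥0∞ := M * M ^ (1 / q.toReal) with hC
  have hCr1 : (1:ℝ≥0∞) ≤ M ^ (1 / q.toReal) := by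
    rw [← ENNReal.one_rpow (1 / q.toReal)]
    exact ENNReal.rpow_le_rpow hM1 (by positivity)
  have hC1 : 1 ≤ C := by
    calc (1:ℝ≥0∞) = 1 * 1 := (mul_one 1).symm
    _ ≤ M * M ^ (1 / q.toReal) := mul_le_mul' hM1 hCr1
  have hCpos : 0 < C := lt_of_lt_of_le zero_lt_one hC1
  have hCne : C ≠ ∞ :=
    ENNReal.mul_ne_top hMne (ENNReal.rpow_ne_top_of_nonneg (by positivity) hMne)
  refine ⟨C, hCpos, hCne, fun u hu => ?_⟩
  -- the inclusion 𝔻^{s,N₁,N₂}(u) ⊆ 𝔻^s(u)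
  have hsub : {g : ℤ → X → ℝ≥0∞ | MemDN μ s N₁ N₂ u g} ⊆
      {g : ℤ → X → ℝ≥0∞ | IsFracHajlaszGradient μ s u g} := by
    rintro g ⟨hmeas, E, hE, hineq⟩
    refine ⟨hmeas, E, hE, fun k x hx y hy h1 h2 => hineq k x hx y hy ?_ ?_⟩
    · exact le_trans (zpow_le_zpow_right₀ one_le_two (by omega)) h1
    · exact lt_of_lt_of_le h2 (zpow_le_zpow_right₀ one_le_two (by omega))
  have heasy : (⨅ g ∈ {g : ℤ → X → ℝ≥0∞ | IsFracHajlaszGradient μ s u g}, LpLqNorm μ p q g)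
      ≤ ⨅ g ∈ {g : ℤ → X → ℝ≥0∞ | MemDN μ s N₁ N₂ u g}, LpLqNorm μ p q g :=
    le_iInf₂ fun g hg => iInf₂_le g (hsub hg)
  constructor
  · -- hard direction
    rw [mul_comm, ← ENNReal.div_le_iff_le_mul (Or.inl hCpos.ne') (Or.inl hCne)]
    refine le_iInf₂ fun g hg => ?_
    rw [ENNReal.div_le_iff_le_mul (Or.inl hCpos.ne') (Or.inl hCne)]
    obtain ⟨hmeas, E, hE, hineq⟩ := hg
    set h : ℤ → X → ℝ≥0∞ :=
      fun k x => ∑ j ∈ Finset.Icc (k - (N₂:ℤ)) (k + N₁), g j x with hh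
    have hhmem : h ∈ {g : ℤ → X → ℝ≥0∞ | MemDN μ s N₁ N₂ u g} := by
      refine ⟨fun k => Finset.measurable_sum _ fun j _ => hmeas j, E, hE,
        fun k x hx y hy hlo hhi => ?_⟩
      have hd : 0 < dist x y :=
        lt_of_lt_of_le (zpow_pos (by norm_num : (0:ℝ) < 2) _) hlo
      obtain ⟨n, hn1, hn2⟩ := exists_mem_Ico_zpow hd (by norm_num : (1:ℝ) < 2)
      set j : ℤ := -n - 1 with hj
      have hjlo : (2:ℝ) ^ (-j - 1) ≤ dist x y := by
        rw [show -j - 1 = n by omega]; exact hn1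
      have hjhi : dist x y < (2:ℝ) ^ (-j) := by
        rw [show -j = n + 1 by omega]; exact hn2
      have hjmem : j ∈ Finset.Icc (k - (N₂:ℤ)) (k + N₁) := by
        have e1 : (-k - 1 - (N₁:ℤ)) < n + 1 :=
          (zpow_lt_zpow_iff_right₀ (by norm_num : (1:ℝ) < 2)).mp (lt_of_le_of_lt hlo hn2)
        have e2 : n < -k + (N₂:ℤ) :=
          (zpow_lt_zpow_iff_right₀ (by norm_num : (1:ℝ) < 2)).mp (lt_of_le_of_lt hn1 hhi)
        rw [Finset.mem_Icc]; omega
      calc ENNReal.ofReal |u x - u y|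
          ≤ ENNReal.ofReal (dist x y ^ s) * (g j x + g j y) :=
            hineq j x hx y hy hjlo hjhi
        _ ≤ ENNReal.ofReal (dist x y ^ s) * (h k x + h k y) := by
            refine mul_le_mul_right (add_le_add ?_ ?_) _
            · exact Finset.single_le_sum (f := fun j => g j x)
                (fun i _ => zero_le) hjmem
            · exact Finset.single_le_sum (f := fun j => g j y)
                (fun i _ => zero_le) hjmem
    have hnorm : LpLqNorm μ p q h ≤ C * LpLqNorm μ p q g :=
      LpLq_le_const μ hp q hCne g h fun x => lq_window_le q hq N₁ N₂ (fun k => g k x)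
    calc (⨅ g ∈ {g : ℤ → X → ℝ≥0∞ | MemDN μ s N₁ N₂ u g}, LpLqNorm μ p q g)
        ≤ LpLqNorm μ p q h := iInf₂_le h hhmem
      _ ≤ C * LpLqNorm μ p q g := hnorm
      _ = LpLqNorm μ p q g * C := mul_comm _ _
  · exact le_trans heasy (le_mul_of_one_le_left zero_le hC1)
end

section
/- Poincaré-type inequality for fractional Hajłasz gradients: there exists a constant C (depending only on n and s) such that for all x ∈ ℝⁿ, k ∈ ℤ, all locally integrable u, and all g⃗ ∈ 𝔻^s(u), one has inf_{c∈ℝ} ⨍_{B(x,2^{-k})} |u(y) − c| dy ≤ C 2^{-ks} ∑_{j=k−3}^{k} ⨍_{B(x,2^{-k+2})} g_j(y) dy. -/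
open MeasureTheory ENNReal

open Metric

lemma avg_aux {I J V W c : ℝ≥0∞} (hIJ : I ≤ J) (hW : W = c * V)
    (hc0 : c ≠ 0) (hct : c ≠ ⊤) : I / V ≤ c * (J / W) := by
  have h : c * (J / W) = J / V := by
    rw [hW, ← mul_div_assoc, ENNReal.mul_div_mul_left _ _ hc0 hct]
  rw [h]
  exact ENNReal.div_le_div_right hIJ _

/-- Lemma 2.1: Poincaré-type inequality for fractional Hajłasz gradients on `ℝⁿ`:
`inf_c ⨍_{B(x,2^{-k})} |u-c| ≤ C 2^{-ks} ∑_{j=k-3}^{k} ⨍_{B(x,2^{-k+2})} g_j`. -/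
theorem poincare_type_fracHajlasz (n : ℕ) (s : ℝ) (hs0 : 0 < s) (hs1 : s ≤ 1) :
    ∃ C : ℝ, 0 < C ∧
      ∀ (x : EuclideanSpace ℝ (Fin n)) (k : ℤ) (u : EuclideanSpace ℝ (Fin n) → ℝ)
        (g : ℤ → EuclideanSpace ℝ (Fin n) → ℝ≥0∞),
        Measurable u → LocallyIntegrable u volume →
        IsFracHajlaszGradient volume s u g →
        (⨅ c : ℝ, (∫⁻ y in Metric.ball x ((2 : ℝ) ^ (-k)), ENNReal.ofReal |u y - c|) /
            volume (Metric.ball x ((2 : ℝ) ^ (-k)))) ≤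
          ENNReal.ofReal (C * (2 : ℝ) ^ (-(k : ℝ) * s)) *
            ∑ j ∈ Finset.Icc (k - 3) k,
              (∫⁻ y in Metric.ball x ((2 : ℝ) ^ (-k + 2)), g j y) /
                volume (Metric.ball x ((2 : ℝ) ^ (-k + 2))) := by
  refine ⟨(4:ℝ) ^ s * ((4:ℝ) ^ n + (16:ℝ) ^ n), by positivity, ?_⟩
  intro x k u g hu hloc hG
  obtain ⟨hgmeas, E, hE0, hH⟩ := hG
  set r : ℝ := (2:ℝ) ^ (-k) with hr_def
  have hr : 0 < r := zpow_pos (by norm_num) _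
  have h4r : (2:ℝ) ^ (-k + 2) = 4 * r := by
    rw [hr_def, zpow_add₀ (by norm_num : (2:ℝ) ≠ 0)]
    norm_num [mul_comm]
  rcases Nat.eq_zero_or_pos n with hn | hn
  · subst hn
    refine le_trans (iInf_le _ (u x)) ?_
    have hzero : ∀ y : EuclideanSpace ℝ (Fin 0), ENNReal.ofReal |u y - u x| = 0 := by
      intro y; rw [Subsingleton.elim y x]; simp
    simp only [hzero, lintegral_zero, ENNReal.zero_div]
    exact zero_le
  · -- main case n ≥ 1
    have hvol : ∀ (c : EuclideanSpace ℝ (Fin n)) (ρ : ℝ), 0 < ρ →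
        volume (ball c ρ) = ENNReal.ofReal (ρ ^ n) *
          volume (ball (0 : EuclideanSpace ℝ (Fin n)) 1) := by
      intro c ρ hρ
      rw [Measure.addHaar_ball_of_pos volume c hρ, finrank_euclideanSpace_fin]
    set w : EuclideanSpace ℝ (Fin n) := EuclideanSpace.single (⟨0, hn⟩ : Fin n) (2*r) with hw_def
    set x' : EuclideanSpace ℝ (Fin n) := x + w with hx'_def
    have hxx' : dist x x' = 2 * r := by
      rw [hx'_def, dist_eq_norm', add_sub_cancel_left, hw_def, EuclideanSpace.norm_single,
        Real.norm_eq_abs, abs_of_pos (by positivity)]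
    set B : Set (EuclideanSpace ℝ (Fin n)) := ball x r with hB_def
    set B' : Set (EuclideanSpace ℝ (Fin n)) := ball x' (r/4) with hB'_def
    set B4 : Set (EuclideanSpace ℝ (Fin n)) := ball x (4*r) with hB4_def
    have hB0 : volume B ≠ 0 := (measure_ball_pos _ _ hr).ne'
    have hBt : volume B ≠ ⊤ := measure_ball_lt_top.ne
    have hB'0 : volume B' ≠ 0 := (measure_ball_pos _ _ (by positivity)).ne'
    have hB't : volume B' ≠ ⊤ := measure_ball_lt_top.ne
    have h4B : volume B4 = ENNReal.ofReal ((4:ℝ)^n) * volume B := by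
      rw [hB4_def, hB_def, hvol x _ (by positivity), hvol x r hr, ← mul_assoc,
        ← ENNReal.ofReal_mul (by positivity)]
      congr 2
      ring
    have h16B' : volume B4 = ENNReal.ofReal ((16:ℝ)^n) * volume B' := by
      rw [hB4_def, hB'_def, hvol x _ (by positivity), hvol x' _ (by positivity), ← mul_assoc,
        ← ENNReal.ofReal_mul (by positivity)]
      congr 2
      rw [← mul_pow]
      congr 1
      ring
    set c4s : ℝ≥0∞ := ENNReal.ofReal ((4*r) ^ s) with hc4s_def
    set JS : Finset ℤ := Finset.Icc (k-3) k with hJS_def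
    -- STEP A : pointwise estimate
    have key : ∀ y ∉ E, y ∈ B → ∀ z ∉ E, z ∈ B' →
        ENNReal.ofReal |u y - u z| ≤ c4s * ∑ j ∈ JS, (g j y + g j z) := by
      intro y hyE hyB z hzE hzB
      have h1 : dist y x < r := mem_ball.1 hyB
      have h2 : dist z x' < r/4 := mem_ball.1 hzB
      have hd1 : 3*r/4 ≤ dist y z := by
        have h3 : dist x x' ≤ dist x y + dist y z + dist z x' := dist_triangle4 x y z x'
        rw [hxx'] at h3
        rw [dist_comm] at h1
        linarith
      have hd2 : dist y z ≤ 13*r/4 := by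
        have h3 : dist y z ≤ dist y x + dist x x' + dist x' z := dist_triangle4 y x x' z
        rw [hxx'] at h3
        rw [dist_comm x' z] at h3
        linarith
      have hdpos : 0 < dist y z := lt_of_lt_of_le (by linarith) hd1
      obtain ⟨m, hm1, hm2⟩ := exists_mem_Ico_zpow hdpos (by norm_num : (1:ℝ) < 2)
      set j : ℤ := -m - 1 with hj_def
      have hjm : -j - 1 = m := by omega
      have hjm2 : -j = m + 1 := by omega
      have hj1 : j ≤ k := by
        have hlt : (2:ℝ) ^ (-k-1) < 2 ^ (m+1) := by
          have hrk : (2:ℝ) ^ (-k-1) = r/2 := by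
            rw [hr_def, zpow_sub₀ (by norm_num : (2:ℝ) ≠ 0), zpow_one]
          rw [hrk]
          calc r/2 < 3*r/4 := by linarith
            _ ≤ dist y z := hd1
            _ < 2^(m+1) := hm2
        have := (zpow_lt_zpow_iff_right₀ (by norm_num : (1:ℝ) < 2)).1 hlt
        omega
      have hj2 : k - 3 ≤ j := by
        have hlt : (2:ℝ) ^ m < 2 ^ (-k+2) := by
          calc (2:ℝ)^m ≤ dist y z := hm1
            _ ≤ 13*r/4 := hd2
            _ < 4*r := by linarith
            _ = 2^(-k+2) := h4r.symm
        have := (zpow_lt_zpow_iff_right₀ (by norm_num : (1:ℝ) < 2)).1 hlt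
        omega
      have hj : j ∈ JS := Finset.mem_Icc.2 ⟨hj2, hj1⟩
      have hH' := hH j y hyE z hzE (by rw [hjm]; exact hm1) (by rw [hjm2]; exact hm2)
      refine hH'.trans ?_
      have hle : ENNReal.ofReal (dist y z ^ s) ≤ c4s := by
        apply ENNReal.ofReal_le_ofReal
        exact Real.rpow_le_rpow dist_nonneg (by linarith) hs0.le
      calc ENNReal.ofReal (dist y z ^ s) * (g j y + g j z)
          ≤ c4s * (g j y + g j z) := mul_le_mul' hle le_rfl
        _ ≤ c4s * ∑ j ∈ JS, (g j y + g j z) :=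
            mul_le_mul' le_rfl (Finset.single_le_sum (f := fun j => g j y + g j z) (fun i _ => zero_le) hj)
    have haeE : ∀ᵐ p ∂(volume : Measure (EuclideanSpace ℝ (Fin n))), p ∉ E :=
      measure_eq_zero_iff_ae_notMem.1 hE0
    set SB : ℝ≥0∞ := ∑ j ∈ JS, ∫⁻ y in B, g j y with hSB_def
    set SB' : ℝ≥0∞ := ∑ j ∈ JS, ∫⁻ y in B', g j y with hSB'_def
    set S4 : ℝ≥0∞ := ∑ j ∈ JS, ∫⁻ y in B4, g j y with hS4_def
    -- STEP B : integrate in y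
    have stepB : ∀ z ∉ E, z ∈ B' → (∫⁻ y in B, ENNReal.ofReal |u y - u z|)
        ≤ c4s * (SB + (∑ j ∈ JS, g j z) * volume B) := by
      intro z hzE hzB
      have h1 : (∫⁻ y in B, ENNReal.ofReal |u y - u z|)
          ≤ ∫⁻ y in B, c4s * ∑ j ∈ JS, (g j y + g j z) := by
        refine lintegral_mono_ae ?_
        filter_upwards [ae_restrict_of_ae haeE, ae_restrict_mem measurableSet_ball]
          with y hyE hyB
        exact key y hyE hyB z hzE hzB
      refine h1.trans (le_of_eq ?_)
      rw [lintegral_const_mul' _ _ ofReal_ne_top]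
      congr 1
      rw [lintegral_finset_sum' (f := fun j y => g j y + g j z) _ (fun j _ => ((hgmeas j).add measurable_const).aemeasurable)]
      have heq : ∀ j ∈ JS, (∫⁻ y in B, (g j y + g j z)) = (∫⁻ y in B, g j y) + g j z * volume B := by
        intro j _
        rw [lintegral_add_left (hgmeas j), setLIntegral_const]
      rw [Finset.sum_congr rfl heq, Finset.sum_add_distrib, ← Finset.sum_mul]
    -- STEP C : integrate in z, divide
    have stepC : (⨅ c : ℝ, (∫⁻ y in B, ENNReal.ofReal |u y - c|) / volume B)
        ≤ c4s * (SB / volume B + SB' / volume B') := by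
      set F : ℝ → ℝ≥0∞ := fun c => (∫⁻ y in B, ENNReal.ofReal |u y - c|) / volume B with hF_def
      have h1 : (⨅ c, F c) * volume B' ≤ ∫⁻ z in B', F (u z) := by
        rw [← setLIntegral_const B' (⨅ c, F c)]
        exact lintegral_mono fun z => iInf_le F (u z)
      have h2 : ∫⁻ z in B', F (u z) ≤ c4s * (SB / volume B) * volume B' + c4s * SB' := by
        have hp : ∀ᵐ z ∂(volume.restrict B'),
            F (u z) ≤ c4s * (SB / volume B + ∑ j ∈ JS, g j z) := by
          filter_upwards [ae_restrict_of_ae haeE, ae_restrict_mem measurableSet_ball]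
            with z hzE hzB
          calc F (u z) ≤ (c4s * (SB + (∑ j ∈ JS, g j z) * volume B)) / volume B :=
              ENNReal.div_le_div_right (stepB z hzE hzB) _
            _ = c4s * (SB / volume B + ∑ j ∈ JS, g j z) := by
              rw [mul_add, ENNReal.add_div, mul_div_assoc, mul_div_assoc, mul_div_assoc,
                ENNReal.div_self hB0 hBt, mul_one, ← mul_add]
        calc ∫⁻ z in B', F (u z)
            ≤ ∫⁻ z in B', c4s * (SB / volume B + ∑ j ∈ JS, g j z) := lintegral_mono_ae hp
          _ = c4s * (SB / volume B) * volume B' + c4s * SB' := by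
            rw [lintegral_const_mul' _ _ ofReal_ne_top, lintegral_add_left measurable_const,
              setLIntegral_const, lintegral_finset_sum' _ (fun j _ => (hgmeas j).aemeasurable), mul_add,
              ← hSB'_def, mul_assoc]
      have h3 : (⨅ c, F c) ≤ (c4s * (SB / volume B) * volume B' + c4s * SB') / volume B' :=
        (ENNReal.le_div_iff_mul_le (Or.inl hB'0) (Or.inl hB't)).2 (h1.trans h2)
      refine h3.trans (le_of_eq ?_)
      rw [ENNReal.add_div, mul_div_assoc, ENNReal.div_self hB'0 hB't, mul_one, mul_div_assoc,
        mul_add]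
    -- STEP D : compare averages on B, B' with the average on B4
    have hSBle : SB / volume B ≤ ENNReal.ofReal ((4:ℝ)^n) * (S4 / volume B4) :=
      avg_aux (Finset.sum_le_sum fun j _ =>
          lintegral_mono_set (ball_subset_ball (by linarith))) h4B
        (ENNReal.ofReal_pos.2 (by positivity)).ne' ofReal_ne_top
    have hSB'le : SB' / volume B' ≤ ENNReal.ofReal ((16:ℝ)^n) * (S4 / volume B4) :=
      avg_aux (Finset.sum_le_sum fun j _ =>
          lintegral_mono_set (ball_subset_ball' (by rw [dist_comm, hxx']; linarith))) h16B'
        (ENNReal.ofReal_pos.2 (by positivity)).ne' ofReal_ne_top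
    have master : (⨅ c : ℝ, (∫⁻ y in B, ENNReal.ofReal |u y - c|) / volume B)
        ≤ (ENNReal.ofReal ((4:ℝ)^n) + ENNReal.ofReal ((16:ℝ)^n)) * c4s * (S4 / volume B4) := by
      refine stepC.trans ?_
      calc c4s * (SB / volume B + SB' / volume B')
          ≤ c4s * (ENNReal.ofReal ((4:ℝ)^n) * (S4 / volume B4)
              + ENNReal.ofReal ((16:ℝ)^n) * (S4 / volume B4)) :=
            mul_le_mul' le_rfl (add_le_add hSBle hSB'le)
        _ = (ENNReal.ofReal ((4:ℝ)^n) + ENNReal.ofReal ((16:ℝ)^n)) * c4s * (S4 / volume B4) := by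
            ring
    rw [h4r, ← hB4_def]
    have hsum : ∑ j ∈ JS, (∫⁻ y in B4, g j y) / volume B4 = S4 / volume B4 := by
      rw [hS4_def]
      simp only [div_eq_mul_inv]
      rw [← Finset.sum_mul]
    have hconst : ENNReal.ofReal ((4:ℝ)^s * ((4:ℝ)^n + (16:ℝ)^n) * (2:ℝ)^(-(k:ℝ)*s))
        = (ENNReal.ofReal ((4:ℝ)^n) + ENNReal.ofReal ((16:ℝ)^n)) * c4s := by
      rw [← ENNReal.ofReal_add (by positivity) (by positivity), hc4s_def,
        ← ENNReal.ofReal_mul (by positivity)]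
      congr 1
      have h1 : (4*r)^s = (4:ℝ)^s * (2:ℝ)^(-(k:ℝ)*s) := by
        rw [Real.mul_rpow (by norm_num) hr.le]
        congr 1
        rw [hr_def, ← Real.rpow_intCast 2 (-k), ← Real.rpow_mul (by norm_num)]
        congr 1
        push_cast
        ring
      rw [h1]
      ring
    rw [hsum, hconst]
    exact master
end

section
/- Let s ∈ (0,1], p ∈ (0,1], and ε, ε′ ∈ (0,s) with ε < ε′. If u is measurable on ℝⁿ and g⃗ = {g_j} ∈ 𝔻^s(u), then the function g := ( ∑_{j ≥ k−2} 2^{-j(s−ε)p} g_j^p )^{1/p} is an ε-gradient of u on the ball B(x, 2^{-k+1}), for every x ∈ ℝⁿ and k ∈ ℤ. -/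
open MeasureTheory ENNReal

/-- `g` is an `ε`-gradient of `u` on the set `B`. -/
def IsHajlaszGradientOn {X : Type*} [MetricSpace X] [MeasurableSpace X]
    (μ : Measure X) (ε : ℝ) (B : Set X) (u : X → ℝ) (g : X → ℝ≥0∞) : Prop :=
  Measurable g ∧
  ∃ E : Set X, μ E = 0 ∧ ∀ x ∈ B \ E, ∀ y ∈ B \ E,
    ENNReal.ofReal |u x - u y| ≤ ENNReal.ofReal (dist x y ^ ε) * (g x + g y)

/-- From the proof of Lemma 2.3: if `g⃗ ∈ 𝔻^s(u)`, then
`g := (∑_{j ≥ k-2} 2^{-j(s-ε)p} g_j^p)^{1/p}` is an `ε`-gradient of `u` on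
`B(x, 2^{-k+1})`. -/
theorem truncated_sum_is_gradient_on_ball (n : ℕ) (s p ε ε' : ℝ)
    (hs0 : 0 < s) (hs1 : s ≤ 1) (hp0 : 0 < p) (hp1 : p ≤ 1)
    (hε : 0 < ε) (hε' : ε < ε') (hε's : ε' < s)
    (u : EuclideanSpace ℝ (Fin n) → ℝ) (hu : Measurable u)
    (g : ℤ → EuclideanSpace ℝ (Fin n) → ℝ≥0∞)
    (hg : IsFracHajlaszGradient volume s u g)
    (x : EuclideanSpace ℝ (Fin n)) (k : ℤ) :
    IsHajlaszGradientOn volume ε (Metric.ball x ((2 : ℝ) ^ (-k + 1))) u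
      (fun y => (∑' j : ℤ, if k - 2 ≤ j then
        ENNReal.ofReal ((2 : ℝ) ^ (-(j : ℝ) * (s - ε) * p)) * g j y ^ p else 0) ^ (1 / p)) := by
  obtain ⟨hgm, E, hE0, hE⟩ := hg
  set G : EuclideanSpace ℝ (Fin n) → ℝ≥0∞ := fun y => (∑' j : ℤ, if k - 2 ≤ j then
        ENNReal.ofReal ((2 : ℝ) ^ (-(j : ℝ) * (s - ε) * p)) * g j y ^ p else 0) ^ (1 / p)
        with hGdef
  have hsε : 0 < s - ε := by linarith
  -- key estimate: single term below G
  have key : ∀ (j : ℤ), k - 2 ≤ j → ∀ y,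
      ENNReal.ofReal ((2 : ℝ) ^ (-(j : ℝ) * (s - ε))) * g j y ≤ G y := by
    intro j hj y
    have h1 : (if k - 2 ≤ j then
        ENNReal.ofReal ((2 : ℝ) ^ (-(j : ℝ) * (s - ε) * p)) * g j y ^ p else 0)
        ≤ ∑' j : ℤ, if k - 2 ≤ j then
        ENNReal.ofReal ((2 : ℝ) ^ (-(j : ℝ) * (s - ε) * p)) * g j y ^ p else 0 :=
      ENNReal.le_tsum j
    rw [if_pos hj] at h1
    have h2 := ENNReal.rpow_le_rpow h1 (one_div_nonneg.mpr hp0.le)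
    rw [ENNReal.mul_rpow_of_nonneg _ _ (one_div_nonneg.mpr hp0.le),
      ENNReal.ofReal_rpow_of_pos (Real.rpow_pos_of_pos two_pos _),
      ← ENNReal.rpow_mul, ← Real.rpow_mul (by norm_num : (0:ℝ) ≤ 2),
      mul_one_div, mul_div_cancel_right₀ _ hp0.ne', mul_one_div,
      div_self hp0.ne', ENNReal.rpow_one] at h2
    exact h2
  refine ⟨?_, E, hE0, ?_⟩
  · apply Measurable.comp ENNReal.continuous_rpow_const.measurable
    apply Measurable.ennreal_tsum
    intro j
    split_ifs
    · exact (measurable_const.mul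
        ((ENNReal.continuous_rpow_const.measurable).comp (hgm j)))
    · exact measurable_const
  · rintro y ⟨hyB, hyE⟩ z ⟨hzB, hzE⟩
    rcases eq_or_ne y z with rfl | hyz
    · simp
    have hd : 0 < dist y z := dist_pos.mpr hyz
    -- find dyadic scale
    obtain ⟨m, hm1, hm2⟩ := exists_mem_Ico_zpow hd one_lt_two
    set j : ℤ := -(m + 1) with hjdef
    have hj1 : (2:ℝ) ^ (-j - 1) ≤ dist y z := by
      rw [show (-j - 1 : ℤ) = m by omega]; exact hm1
    have hj2 : dist y z < (2:ℝ) ^ (-j) := by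
      rw [show (-j : ℤ) = m + 1 by omega]; exact hm2
    -- j ≥ k - 2
    have hdball : dist y z < (2:ℝ) ^ (-k + 2) := by
      calc dist y z ≤ dist y x + dist x z := dist_triangle y x z
        _ < (2:ℝ) ^ (-k+1) + (2:ℝ) ^ (-k+1) := by
            rw [Metric.mem_ball] at hyB hzB
            rw [dist_comm x z]; exact add_lt_add hyB hzB
        _ = (2:ℝ) ^ (-k + 2) := by
            rw [← two_mul, show (-k + 2 : ℤ) = 1 + (-k+1) by ring,
              zpow_add₀ (two_ne_zero) 1 (-k+1), zpow_one]
    have hjk : k - 2 ≤ j := by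
      have : (2:ℝ) ^ m < (2:ℝ) ^ (-k + 2) := lt_of_le_of_lt hm1 hdball
      have hm : m < -k + 2 := by
        by_contra hcon
        push_neg at hcon
        exact absurd (zpow_le_zpow_right₀ (by norm_num : (1:ℝ) ≤ 2) hcon) (not_le.mpr this)
      omega
    -- main estimate
    have hmain := hE j y hyE z hzE hj1 hj2
    refine le_trans hmain ?_
    have hds : dist y z ^ s = dist y z ^ ε * dist y z ^ (s - ε) := by
      rw [← Real.rpow_add hd]; ring_nf
    have hdse : dist y z ^ (s - ε) ≤ (2:ℝ) ^ (-(j:ℝ) * (s - ε)) := by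
      have h2j : ((2:ℝ) ^ (-j : ℤ)) = (2:ℝ) ^ ((-j : ℤ) : ℝ) := by
        rw [Real.rpow_intCast]
      calc dist y z ^ (s - ε) ≤ ((2:ℝ) ^ (-j : ℤ)) ^ (s - ε) :=
            Real.rpow_le_rpow hd.le hj2.le hsε.le
        _ = (2:ℝ) ^ (-(j:ℝ) * (s - ε)) := by
            rw [h2j, ← Real.rpow_mul (by norm_num : (0:ℝ) ≤ 2)]
            norm_num
    calc ENNReal.ofReal (dist y z ^ s) * (g j y + g j z)
        = ENNReal.ofReal (dist y z ^ ε) *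
            (ENNReal.ofReal (dist y z ^ (s - ε)) * (g j y + g j z)) := by
          rw [hds, ENNReal.ofReal_mul (Real.rpow_nonneg dist_nonneg _), mul_assoc]
      _ ≤ ENNReal.ofReal (dist y z ^ ε) *
            (ENNReal.ofReal ((2:ℝ) ^ (-(j:ℝ) * (s - ε))) * (g j y + g j z)) := by
          gcongr
          
      _ = ENNReal.ofReal (dist y z ^ ε) *
            (ENNReal.ofReal ((2:ℝ) ^ (-(j:ℝ) * (s - ε))) * g j y
              + ENNReal.ofReal ((2:ℝ) ^ (-(j:ℝ) * (s - ε))) * g j z) := by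
          rw [mul_add]
      _ ≤ ENNReal.ofReal (dist y z ^ ε) * (G y + G z) := by
          gcongr
          · exact key j hjk y
          · exact key j hjk z
end

section
/- Telescoping estimate on RD-spaces: let (X,d,μ) be an Ahlfors-regular-type doubling metric measure space with reverse doubling, and let K₀ ∈ ℕ satisfy μ(B(x, 2^{K₀} r)) ≥ 2 μ(B(x,r)) for all x and admissible r. Then for every u ∈ L¹_loc(X), every Lebesgue point x of u, and every admissible k ∈ ℤ, |u(x) − u_{B(x,2^{-k})}| ≤ C ∑_{j ≥ k} ⨍_{B(x,2^{-j})} ⨍_{B(x,2^{-j+K₀+1}) ∖ B(x,2^{-j+1})} |u(y) − u(z)| dμ(z) dμ(y), with C depending only on the doubling constants and K₀. -/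
open MeasureTheory ENNReal

section helpers
variable {X : Type} [MeasurableSpace X] {μ : Measure X} {u : X → ℝ} {A S : Set X}

lemma setAvg_nonneg' {f : X → ℝ} (hf : ∀ y, 0 ≤ f y) (μ : Measure X) (S : Set X) :
    0 ≤ ⨍ y in S, f y ∂μ := by
  rw [setAverage_eq, smul_eq_mul]
  exact mul_nonneg (inv_nonneg.2 ENNReal.toReal_nonneg) (integral_nonneg fun y => hf y)

lemma inner_pt_bound' (hA0 : μ A ≠ 0) (hA : μ A ≠ ∞) (huA : IntegrableOn u A μ) (y : X) :
    |u y - ⨍ z in A, u z ∂μ| ≤ ⨍ z in A, |u y - u z| ∂μ := by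
  have hm : 0 < (μ A).toReal := ENNReal.toReal_pos hA0 hA
  rw [setAverage_eq, setAverage_eq, smul_eq_mul, smul_eq_mul]
  have hconst : IntegrableOn (fun _ : X => u y) A μ :=
    integrableOn_const hA
  have hsub : ∫ z in A, (u y - u z) ∂μ = (μ A).toReal * u y - ∫ z in A, u z ∂μ := by
    rw [integral_sub hconst huA, setIntegral_const, smul_eq_mul, measureReal_def]
  have h1 : u y - ((μ A).toReal)⁻¹ * ∫ z in A, u z ∂μ
      = ((μ A).toReal)⁻¹ * ∫ z in A, (u y - u z) ∂μ := by
    rw [hsub]; field_simp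
  rw [measureReal_def, h1, abs_mul, abs_of_nonneg (inv_nonneg.2 hm.le)]
  gcongr
  calc |∫ z in A, (u y - u z) ∂μ| ≤ ∫ z in A, |u y - u z| ∂μ := by
        simpa [Real.norm_eq_abs] using
          norm_integral_le_integral_norm (fun z => u y - u z) (μ := μ.restrict A)
    _ ≤ _ := le_rfl

lemma inner_fn_integrable' (hA0 : μ A ≠ 0) (hA : μ A ≠ ∞) (hS : μ S ≠ ∞)
    (huA : IntegrableOn u A μ) (huS : IntegrableOn u S μ) :
    IntegrableOn (fun y => ⨍ z in A, |u y - u z| ∂μ) S μ := by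
  have hm : 0 < (μ A).toReal := ENNReal.toReal_pos hA0 hA
  set F : ℝ → ℝ := fun t => ⨍ z in A, |t - u z| ∂μ with hF
  have hFint : ∀ t : ℝ, IntegrableOn (fun z => |t - u z|) A μ := fun t =>
    ((integrableOn_const hA).sub huA).abs
  have hlip : LipschitzWith 1 F := by
    apply LipschitzWith.of_dist_le_mul
    intro t s
    rw [Real.dist_eq, Real.dist_eq]; push_cast; rw [one_mul]
    have key : ∀ t s : ℝ, F t - F s ≤ |t - s| := by
      intro t s
      have hmono : ∫ z in A, |t - u z| ∂μ ≤ ∫ z in A, (|s - u z| + |t - s|) ∂μ := by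
        apply integral_mono (hFint t) ((hFint s).add (integrableOn_const hA))
        intro z
        calc |t - u z| = |(s - u z) + (t - s)| := by ring_nf
          _ ≤ |s - u z| + |t - s| := abs_add_le _ _
      have : ∫ z in A, (|s - u z| + |t - s|) ∂μ
          = (∫ z in A, |s - u z| ∂μ) + (μ A).toReal * |t - s| := by
        rw [integral_add (hFint s) (integrableOn_const hA),
          setIntegral_const, smul_eq_mul, measureReal_def]
      rw [this] at hmono
      simp only [hF, setAverage_eq, smul_eq_mul]
      rw [sub_le_iff_le_add]
      calc ((μ A).toReal)⁻¹ * ∫ z in A, |t - u z| ∂μ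
          ≤ ((μ A).toReal)⁻¹ * ((∫ z in A, |s - u z| ∂μ) + (μ A).toReal * |t - s|) := by
            gcongr
        _ = |t - s| + ((μ A).toReal)⁻¹ * ∫ z in A, |s - u z| ∂μ := by field_simp; ring
    rw [abs_sub_le_iff]
    constructor
    · exact key t s
    · calc F s - F t ≤ |s - t| := key s t
        _ = |t - s| := abs_sub_comm s t
  have hmeas : AEStronglyMeasurable (fun y => F (u y)) (μ.restrict S) :=
    hlip.continuous.comp_aestronglyMeasurable huS.aestronglyMeasurable
  apply Integrable.mono' ((huS.abs.add (integrableOn_const hS) :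
    IntegrableOn (fun y => |u y| + ⨍ z in A, |u z| ∂μ) S μ)) hmeas
  filter_upwards with y
  have hnn : 0 ≤ F (u y) := by
    simp only [hF, setAverage_eq, smul_eq_mul]
    exact mul_nonneg (inv_nonneg.2 hm.le) (integral_nonneg fun z => abs_nonneg _)
  rw [Real.norm_eq_abs, abs_of_nonneg hnn]
  simp only [hF, setAverage_eq, smul_eq_mul]
  have : ∫ z in A, |u y - u z| ∂μ ≤ ∫ z in A, (|u y| + |u z|) ∂μ := by
    apply integral_mono (hFint (u y)) ((integrableOn_const hA).add huA.abs)
    intro z; exact (abs_sub _ _).trans le_rfl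
  calc ((μ A).toReal)⁻¹ * ∫ z in A, |u y - u z| ∂μ
      ≤ ((μ A).toReal)⁻¹ * ∫ z in A, (|u y| + |u z|) ∂μ := by gcongr
    _ = |u y| + ((μ A).toReal)⁻¹ * ∫ z in A, |u z| ∂μ := by
        rw [integral_add (integrableOn_const hA (C := |u y|)) huA.abs,
          setIntegral_const, smul_eq_mul, measureReal_def]
        field_simp

lemma avg_pair' (hS0 : μ S ≠ 0) (hS : μ S ≠ ∞) (hA0 : μ A ≠ 0) (hA : μ A ≠ ∞)
    (huS : IntegrableOn u S μ) (huA : IntegrableOn u A μ) :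
    |(⨍ y in S, u y ∂μ) - ⨍ z in A, u z ∂μ| ≤ ⨍ y in S, ⨍ z in A, |u y - u z| ∂μ ∂μ := by
  have hm : 0 < (μ S).toReal := ENNReal.toReal_pos hS0 hS
  set c := ⨍ z in A, u z ∂μ with hc
  have hconst : IntegrableOn (fun _ : X => c) S μ := integrableOn_const hS
  have h1 : (⨍ y in S, u y ∂μ) - c = ((μ S).toReal)⁻¹ * ∫ y in S, (u y - c) ∂μ := by
    rw [integral_sub huS hconst, setIntegral_const, smul_eq_mul, setAverage_eq, smul_eq_mul, measureReal_def]
    field_simp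
  rw [h1, abs_mul, abs_of_nonneg (inv_nonneg.2 hm.le),
    setAverage_eq (μ := μ) (s := S), smul_eq_mul, measureReal_def]
  gcongr
  calc |∫ y in S, (u y - c) ∂μ| ≤ ∫ y in S, |u y - c| ∂μ := by
        simpa [Real.norm_eq_abs] using
          norm_integral_le_integral_norm (fun y => u y - c) (μ := μ.restrict S)
    _ ≤ ∫ y in S, ⨍ z in A, |u y - u z| ∂μ ∂μ := by
        apply integral_mono ((huS.sub hconst).abs) (inner_fn_integrable' hA0 hA hS huA huS)
        intro y
        exact inner_pt_bound' hA0 hA huA y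

lemma avg_mono_set' {h : X → ℝ} (hsub : S ⊆ A) (hS0 : μ S ≠ 0) (hS : μ S ≠ ∞) (hA : μ A ≠ ∞)
    (hh : ∀ y, 0 ≤ h y) (hhA : IntegrableOn h A μ) :
    ⨍ y in S, h y ∂μ ≤ ((μ A).toReal / (μ S).toReal) * ⨍ y in A, h y ∂μ := by
  have hm : 0 < (μ S).toReal := ENNReal.toReal_pos hS0 hS
  rw [setAverage_eq, setAverage_eq, smul_eq_mul, smul_eq_mul]
  have hmono : ∫ y in S, h y ∂μ ≤ ∫ y in A, h y ∂μ :=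
    setIntegral_mono_set hhA (Filter.Eventually.of_forall hh)
      (HasSubset.Subset.eventuallyLE hsub)
  have hApos : 0 < (μ A).toReal :=
    ENNReal.toReal_pos (fun h0 => hS0 (le_antisymm (h0 ▸ measure_mono hsub) zero_le)) hA
  calc ((μ S).toReal)⁻¹ * ∫ y in S, h y ∂μ ≤ ((μ S).toReal)⁻¹ * ∫ y in A, h y ∂μ := by gcongr
    _ = (μ A).toReal / (μ S).toReal * (((μ A).toReal)⁻¹ * ∫ y in A, h y ∂μ) := by
        field_simp
end helpers

/-- Telescoping estimate (4.6) on RD-spaces: for `u ∈ L¹_loc` and a Lebesgue point `x`,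
`|u(x) − u_{B(x,2^{-k})}| ≤ C ∑_{j ≥ k} ⨍_{B(x,2^{-j})} ⨍_{B(x,2^{-j+K₀+1}) ∖ B(x,2^{-j+1})}
|u(y) − u(z)| dμ(z) dμ(y)`, with `C` depending only on the doubling constants and `K₀`. -/
theorem telescoping_RD (C₁ C₂ : ℝ≥0∞) (κ n : ℝ) (K₀ : ℕ)
    (hC₁0 : 0 < C₁) (hC₁1 : C₁ ≤ 1) (hC₂1 : 1 ≤ C₂) (hC₂ : C₂ ≠ ∞)
    (hκ0 : 0 < κ) (hκn : κ ≤ n) (hK₀ : 0 < K₀) :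
    ∃ C : ℝ≥0∞, 0 < C ∧ C ≠ ∞ ∧
      ∀ (X : Type) [MetricSpace X] [MeasurableSpace X] [BorelSpace X] (μ : Measure X),
        (∀ (x : X) (r : ℝ), 0 < r → 0 < μ (Metric.ball x r) ∧ μ (Metric.ball x r) < ∞) →
        (∀ (x : X) (r lam : ℝ), 0 < r → 1 ≤ lam →
          C₁ * ENNReal.ofReal (lam ^ κ) * μ (Metric.ball x r) ≤ μ (Metric.ball x (lam * r)) ∧
          μ (Metric.ball x (lam * r)) ≤ C₂ * ENNReal.ofReal (lam ^ n) * μ (Metric.ball x r)) →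
        (∀ (x : X) (r : ℝ), 0 < r →
          2 * μ (Metric.ball x r) ≤ μ (Metric.ball x ((2 : ℝ) ^ K₀ * r))) →
        ∀ u : X → ℝ, (∀ (z : X) (r : ℝ), IntegrableOn u (Metric.ball z r) μ) →
        ∀ x : X,
          Filter.Tendsto (fun r => ⨍ y in Metric.ball x r, u y ∂μ)
            (nhdsWithin 0 (Set.Ioi 0)) (nhds (u x)) →
        ∀ k : ℤ,
          ENNReal.ofReal |u x - ⨍ y in Metric.ball x ((2 : ℝ) ^ (-k)), u y ∂μ| ≤
            C * ∑' j : ℤ, if k ≤ j then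
              ENNReal.ofReal (⨍ y in Metric.ball x ((2 : ℝ) ^ (-j)),
                ⨍ z in Metric.ball x ((2 : ℝ) ^ (-j + K₀ + 1)) \ Metric.ball x ((2 : ℝ) ^ (-j + 1)),
                  |u y - u z| ∂μ ∂μ)
            else 0 := by
  classical
  set c : ℝ := (C₂ * ENNReal.ofReal ((2:ℝ) ^ n)).toReal with hc
  have hcnn : 0 ≤ c := ENNReal.toReal_nonneg
  refine ⟨1 + C₂ * ENNReal.ofReal ((2:ℝ) ^ n), lt_of_lt_of_le one_pos le_self_add, ?_, ?_⟩
  · exact ENNReal.add_ne_top.2 ⟨one_ne_top, ENNReal.mul_ne_top hC₂ ofReal_ne_top⟩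
  intro X _ _ _ μ hpos hdoub hrev u hint x hleb k
  -- basic objects
  set B : ℤ → Set X := fun j => Metric.ball x ((2:ℝ) ^ (-j)) with hB
  set Ann : ℤ → Set X := fun j =>
    Metric.ball x ((2:ℝ) ^ (-j + (K₀:ℤ) + 1)) \ Metric.ball x ((2:ℝ) ^ (-j + 1)) with hAnn
  set T : ℤ → ℝ := fun j => ⨍ y in B j, ⨍ z in Ann j, |u y - u z| ∂μ ∂μ with hT
  set a : ℤ → ℝ := fun j => ⨍ y in B j, u y ∂μ with ha
  have h2 : (0:ℝ) < 2 := two_pos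
  have hBpos : ∀ j : ℤ, 0 < μ (B j) := fun j => (hpos x _ (by positivity)).1
  have hBfin : ∀ j : ℤ, μ (B j) < ∞ := fun j => (hpos x _ (by positivity)).2
  have huB : ∀ j : ℤ, IntegrableOn u (B j) μ := fun j => hint x _
  have huA : ∀ j : ℤ, IntegrableOn u (Ann j) μ := fun j =>
    (hint x ((2:ℝ) ^ (-j + (K₀:ℤ) + 1))).mono_set Set.diff_subset
  have hAfin : ∀ j : ℤ, μ (Ann j) < ∞ := fun j =>
    lt_of_le_of_lt (measure_mono Set.diff_subset) (hpos x _ (by positivity)).2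
  have hApos : ∀ j : ℤ, 0 < μ (Ann j) := by
    intro j
    have hr : (0:ℝ) < (2:ℝ) ^ (-j + 1) := by positivity
    have hradius : (2:ℝ) ^ K₀ * (2:ℝ) ^ (-j + 1) = (2:ℝ) ^ (-j + (K₀:ℤ) + 1) := by
      rw [← zpow_natCast (2:ℝ) K₀, ← zpow_add₀ (two_ne_zero)]
      ring_nf
    have hbig := hrev x ((2:ℝ) ^ (-j + 1)) hr
    rw [hradius] at hbig
    have hsub : Metric.ball x ((2:ℝ) ^ (-j + 1)) ⊆ Metric.ball x ((2:ℝ) ^ (-j + (K₀:ℤ) + 1)) :=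
      Metric.ball_subset_ball (zpow_le_zpow_right₀ one_le_two (by omega))
    have hdiff : μ (Ann j) = μ (Metric.ball x ((2:ℝ) ^ (-j + (K₀:ℤ) + 1)))
        - μ (Metric.ball x ((2:ℝ) ^ (-j + 1))) :=
      measure_diff hsub measurableSet_ball.nullMeasurableSet (hpos x _ hr).2.ne
    have hge : μ (Metric.ball x ((2:ℝ) ^ (-j + 1))) ≤ μ (Ann j) := by
      rw [hdiff]
      exact ENNReal.le_sub_of_add_le_left (hpos x _ hr).2.ne (by rw [← two_mul]; exact hbig)
    exact lt_of_lt_of_le (hpos x _ hr).1 hge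
  -- doubling comparison between consecutive balls
  have hdouble : ∀ j : ℤ, (μ (B j)).toReal ≤ c * (μ (B (j+1))).toReal := by
    intro j
    have hr : (0:ℝ) < (2:ℝ) ^ (-(j+1)) := by positivity
    have h21 : (2:ℝ) * (2:ℝ) ^ (-(j+1)) = (2:ℝ) ^ (-j) := by
      rw [mul_comm, ← zpow_add_one₀ (two_ne_zero : (2:ℝ) ≠ 0)]
      congr 1
      ring
    have := (hdoub x ((2:ℝ) ^ (-(j+1))) 2 hr one_le_two).2
    rw [h21] at this
    have hfin : C₂ * ENNReal.ofReal ((2:ℝ) ^ n) * μ (B (j+1)) ≠ ∞ :=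
      ENNReal.mul_ne_top (ENNReal.mul_ne_top hC₂ ofReal_ne_top) (hBfin (j+1)).ne
    calc (μ (B j)).toReal ≤ (C₂ * ENNReal.ofReal ((2:ℝ) ^ n) * μ (B (j+1))).toReal :=
          ENNReal.toReal_mono hfin this
      _ = c * (μ (B (j+1))).toReal := by
          rw [ENNReal.toReal_mul]
  -- nonnegativity of T
  have hT0 : ∀ j : ℤ, 0 ≤ T j := fun j =>
    setAvg_nonneg' (fun y => setAvg_nonneg' (fun z => abs_nonneg _) μ (Ann j)) μ (B j)
  -- key estimate
  have key : ∀ j : ℤ, |a (j+1) - a j| ≤ (1 + c) * T j := by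
    intro j
    have hBsub : B (j+1) ⊆ B j :=
      Metric.ball_subset_ball (zpow_le_zpow_right₀ one_le_two (by omega))
    have h1 : |a (j+1) - ⨍ z in Ann j, u z ∂μ| ≤ ⨍ y in B (j+1), ⨍ z in Ann j, |u y - u z| ∂μ ∂μ :=
      avg_pair' (hBpos (j+1)).ne' (hBfin (j+1)).ne (hApos j).ne' (hAfin j).ne
        (huB (j+1)) (huA j)
    have h2' : |a j - ⨍ z in Ann j, u z ∂μ| ≤ T j :=
      avg_pair' (hBpos j).ne' (hBfin j).ne (hApos j).ne' (hAfin j).ne (huB j) (huA j)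
    have h3 : ⨍ y in B (j+1), ⨍ z in Ann j, |u y - u z| ∂μ ∂μ
        ≤ ((μ (B j)).toReal / (μ (B (j+1))).toReal) * T j :=
      avg_mono_set' hBsub (hBpos (j+1)).ne' (hBfin (j+1)).ne (hBfin j).ne
        (fun y => setAvg_nonneg' (fun z => abs_nonneg _) μ (Ann j))
        (inner_fn_integrable' (hApos j).ne' (hAfin j).ne (hBfin j).ne (huA j) (huB j))
    have hratio : (μ (B j)).toReal / (μ (B (j+1))).toReal ≤ c := by
      rw [div_le_iff₀ (ENNReal.toReal_pos (hBpos (j+1)).ne' (hBfin (j+1)).ne)]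
      exact hdouble j
    calc |a (j+1) - a j|
        ≤ |a (j+1) - ⨍ z in Ann j, u z ∂μ| + |a j - ⨍ z in Ann j, u z ∂μ| := by
          have h4 := abs_sub_le (a (j+1)) (⨍ z in Ann j, u z ∂μ) (a j)
          rwa [abs_sub_comm (⨍ z in Ann j, u z ∂μ) (a j)] at h4
      _ ≤ ((μ (B j)).toReal / (μ (B (j+1))).toReal) * T j + T j := add_le_add (h1.trans h3) h2'
      _ ≤ c * T j + T j := add_le_add (mul_le_mul_of_nonneg_right hratio (hT0 j)) le_rfl
      _ = (1 + c) * T j := by ring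
  -- telescoping and limit
  have htele : ∀ N : ℕ, |a (k + N) - a k| ≤ ∑ i ∈ Finset.range N, (1 + c) * T (k + i) := by
    intro N
    have hstep : a (k + N) - a k = ∑ i ∈ Finset.range N, (a (k + i + 1) - a (k + i)) := by
      have hsum := Finset.sum_range_sub (fun i : ℕ => a (k + i)) N
      have h0 : ((0:ℕ):ℤ) = 0 := rfl
      rw [h0, add_zero] at hsum
      rw [← hsum]
      refine Finset.sum_congr rfl fun i _ => ?_
      have hcast : k + (((i+1:ℕ)):ℤ) = k + (i:ℤ) + 1 := by push_cast; ring
      rw [hcast]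
    rw [hstep]
    refine (Finset.abs_sum_le_sum_abs _ _).trans (Finset.sum_le_sum fun i _ => ?_)
    exact key (k + i)
  have hrtend : Filter.Tendsto (fun N : ℕ => (2:ℝ) ^ (-(k + (N:ℤ)))) Filter.atTop
      (nhdsWithin 0 (Set.Ioi 0)) := by
    apply tendsto_nhdsWithin_of_tendsto_nhds_of_eventually_within
    · have heq : ∀ N : ℕ, (2:ℝ) ^ (-(k + (N:ℤ))) = (2:ℝ) ^ (-k) * ((2:ℝ)⁻¹) ^ N := by
        intro N
        rw [← zpow_natCast ((2:ℝ)⁻¹) N, inv_zpow, ← zpow_neg, neg_add,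
          zpow_add₀ (two_ne_zero : (2:ℝ) ≠ 0)]
      simp only [heq]
      have := (tendsto_pow_atTop_nhds_zero_of_lt_one (by norm_num : (0:ℝ) ≤ 2⁻¹)
        (by norm_num : (2:ℝ)⁻¹ < 1)).const_mul ((2:ℝ) ^ (-k))
      simpa using this
    · filter_upwards with N
      exact Set.mem_Ioi.2 (by positivity)
  have htend : Filter.Tendsto (fun N : ℕ => a (k + N)) Filter.atTop (nhds (u x)) :=
    hleb.comp hrtend
  -- pass to ENNReal
  have hsum_bound : ∀ N : ℕ, ENNReal.ofReal |a (k + N) - a k|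
      ≤ ∑' i : ℕ, ENNReal.ofReal ((1 + c) * T (k + i)) := by
    intro N
    calc ENNReal.ofReal |a (k + N) - a k|
        ≤ ENNReal.ofReal (∑ i ∈ Finset.range N, (1 + c) * T (k + i)) :=
          ENNReal.ofReal_le_ofReal (htele N)
      _ = ∑ i ∈ Finset.range N, ENNReal.ofReal ((1 + c) * T (k + i)) :=
          ENNReal.ofReal_sum_of_nonneg fun i _ => mul_nonneg (by positivity) (hT0 _)
      _ ≤ ∑' i : ℕ, ENNReal.ofReal ((1 + c) * T (k + i)) := ENNReal.sum_le_tsum _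
  have hlim : Filter.Tendsto (fun N : ℕ => ENNReal.ofReal |a (k + N) - a k|) Filter.atTop
      (nhds (ENNReal.ofReal |u x - a k|)) := by
    have habs : Filter.Tendsto (fun N : ℕ => |a (k + N) - a k|) Filter.atTop
        (nhds |u x - a k|) := (htend.sub_const (a k)).abs
    exact (ENNReal.continuous_ofReal.tendsto _).comp habs
  have hmain : ENNReal.ofReal |u x - a k| ≤ ∑' i : ℕ, ENNReal.ofReal ((1 + c) * T (k + i)) :=
    le_of_tendsto hlim (Filter.Eventually.of_forall hsum_bound)
  -- rewrite RHS
  have hCof : ENNReal.ofReal (1 + c) = 1 + C₂ * ENNReal.ofReal ((2:ℝ) ^ n) := by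
    rw [ENNReal.ofReal_add zero_le_one hcnn, ENNReal.ofReal_one, hc,
      ENNReal.ofReal_toReal (ENNReal.mul_ne_top hC₂ ofReal_ne_top)]
  have hsplit : ∀ i : ℕ, ENNReal.ofReal ((1 + c) * T (k + i))
      = ENNReal.ofReal (1 + c) * ENNReal.ofReal (T (k + i)) := fun i =>
    ENNReal.ofReal_mul (by positivity)
  have hinj : Function.Injective (fun i : ℕ => k + (i:ℤ)) := fun a b h => by
    simpa using h
  have htsum : (∑' i : ℕ, ENNReal.ofReal (T (k + i)))
      ≤ ∑' j : ℤ, if k ≤ j then ENNReal.ofReal (T j) else 0 := by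
    have hle := ENNReal.tsum_comp_le_tsum_of_injective hinj
      (fun j : ℤ => if k ≤ j then ENNReal.ofReal (T j) else 0)
    have h1 : ∀ i : ℕ, ENNReal.ofReal (T (k + i))
        = (fun j : ℤ => if k ≤ j then ENNReal.ofReal (T j) else 0) (k + (i:ℤ)) := fun i =>
      (if_pos (by omega)).symm
    calc (∑' i : ℕ, ENNReal.ofReal (T (k + i)))
        = ∑' i : ℕ, (fun j : ℤ => if k ≤ j then ENNReal.ofReal (T j) else 0) (k + (i:ℤ)) :=
          tsum_congr h1
      _ ≤ _ := hle
  calc ENNReal.ofReal |u x - ⨍ y in Metric.ball x ((2:ℝ) ^ (-k)), u y ∂μ|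
      = ENNReal.ofReal |u x - a k| := rfl
    _ ≤ ∑' i : ℕ, ENNReal.ofReal ((1 + c) * T (k + i)) := hmain
    _ = ENNReal.ofReal (1 + c) * ∑' i : ℕ, ENNReal.ofReal (T (k + i)) := by
        simp only [hsplit]; exact ENNReal.tsum_mul_left
    _ ≤ ENNReal.ofReal (1 + c) * ∑' j : ℤ, (if k ≤ j then ENNReal.ofReal (T j) else 0) :=
        mul_le_mul_right htsum _
    _ = (1 + C₂ * ENNReal.ofReal ((2:ℝ) ^ n)) *
          ∑' j : ℤ, (if k ≤ j then ENNReal.ofReal (T j) else 0) := by rw [hCof]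
end

section
/- Equivalence with the Bourdon–Pajot Besov space: for s ∈ (0,∞) and p ∈ [1,∞) on an RD-space X, the space Ḃ^s_p(X) of locally p-integrable u with ∫_X ∫_X |u(x)−u(y)|^p / (d(x,y)^{sp} V(x,y)) dμ(y) dμ(x) < ∞ coincides with the Hajłasz–Besov space Ṅ^s_{p,p}(X) (= Ṁ^s_{p,p}(X)), with equivalent norms. -/
open MeasureTheory ENNReal

/-- The `p`-th power of the Bourdon–Pajot Besov norm:
`∫∫ |u(x)−u(y)|^p / (d(x,y)^{sp} V(x,y)) dμ(y) dμ(x)`, where `V(x,y) = μ(B(x,d(x,y)))`. -/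
noncomputable def BPnormP {X : Type*} [MetricSpace X] [MeasurableSpace X]
    (μ : Measure X) (s p : ℝ) (u : X → ℝ) : ℝ≥0∞ :=
  ∫⁻ x, ∫⁻ y, ENNReal.ofReal |u x - u y| ^ p /
    (ENNReal.ofReal (dist x y ^ (s * p)) * μ (Metric.ball x (dist x y))) ∂μ ∂μ

/-- The `p`-th power of the Hajłasz–Besov norm of `Ṁ^s_{p,p}(X) = Ṅ^s_{p,p}(X)`. -/
noncomputable def MnormP {X : Type*} [MetricSpace X] [MeasurableSpace X]
    (μ : Measure X) (s p : ℝ) (u : X → ℝ) : ℝ≥0∞ :=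
  ⨅ g ∈ {g : ℤ → X → ℝ≥0∞ | IsFracHajlaszGradient μ s u g},
    ∫⁻ x, ∑' k : ℤ, g k x ^ p ∂μ

section BPHhelpers

open MeasureTheory ENNReal Metric Set

set_option linter.unusedSectionVars false
set_option linter.unusedVariables false

variable {X : Type*} [MetricSpace X] [MeasurableSpace X] [BorelSpace X] {μ : Measure X}

theorem my_doubling (μ : Measure X) (C₂ : ℝ≥0∞) (n : ℝ) (hC₂1 : 1 ≤ C₂) (hn : 0 < n)
    (hRD : ∀ (x : X) (r lam : ℝ), 0 < r →
      ENNReal.ofReal r < 2 * EMetric.diam (Set.univ : Set X) → 1 ≤ lam →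
      ENNReal.ofReal (lam * r) < 2 * EMetric.diam (Set.univ : Set X) →
      μ (Metric.ball x (lam * r)) ≤ C₂ * ENNReal.ofReal (lam ^ n) * μ (Metric.ball x r))
    (x : X) (r lam : ℝ) (hr : 0 < r) (hlam : 1 ≤ lam) :
    μ (ball x (lam * r)) ≤ C₂ * ENNReal.ofReal (lam ^ n) * μ (ball x r) := by
  set Δ := EMetric.diam (Set.univ : Set X) with hΔdef
  have hlam0 : (0:ℝ) < lam := lt_of_lt_of_le one_pos hlam
  have hone : (1:ℝ≥0∞) ≤ C₂ * ENNReal.ofReal (lam ^ n) := by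
    calc (1:ℝ≥0∞) = 1 * 1 := (one_mul 1).symm
    _ ≤ C₂ * ENNReal.ofReal (lam ^ n) :=
      mul_le_mul' hC₂1 (ENNReal.one_le_ofReal.mpr (Real.one_le_rpow hlam hn.le))
  by_cases hcase : ENNReal.ofReal (lam * r) < 2 * Δ
  · have h1 : ENNReal.ofReal r < 2 * Δ :=
      lt_of_le_of_lt (ENNReal.ofReal_le_ofReal (le_mul_of_one_le_left hr.le hlam)) hcase
    exact hRD x r lam hr h1 hlam hcase
  · push_neg at hcase
    have hΔtop : Δ ≠ ∞ := by
      intro h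
      rw [h, ENNReal.mul_top two_ne_zero] at hcase
      exact (lt_irrefl _ (lt_of_le_of_lt hcase ENNReal.ofReal_lt_top)).elim
    set t := Δ.toReal with htdef
    have hdistle : ∀ y : X, dist x y ≤ t := by
      intro y
      have h1 : edist x y ≤ Δ := EMetric.edist_le_diam_of_mem (Set.mem_univ x) (Set.mem_univ y)
      rw [dist_edist]
      exact ENNReal.toReal_mono hΔtop h1
    by_cases hrt : t < r
    · have hsub : ball x (lam * r) ⊆ ball x r := fun y hy =>
        mem_ball'.mpr (lt_of_le_of_lt (hdistle y) hrt)
      exact le_trans (μ.mono hsub) (le_mul_of_one_le_left' hone)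
    · push_neg at hrt
      have ht0 : 0 < t := lt_of_lt_of_le hr hrt
      have hΔ0 : Δ ≠ 0 := by
        intro h
        have h2 := ht0
        rw [htdef, h, ENNReal.toReal_zero] at h2
        exact lt_irrefl 0 h2
      set lam' := 3 / 2 * t / r with hlam'def
      have hlam'1 : 1 ≤ lam' := (le_div_iff₀ hr).mpr (by nlinarith)
      have e1 : lam' * r = 3 / 2 * t := by rw [hlam'def]; field_simp
      have hΔeq : ENNReal.ofReal t = Δ := ENNReal.ofReal_toReal hΔtop
      have hΔlt : Δ < 2 * Δ := by rw [two_mul]; exact ENNReal.lt_add_right hΔtop hΔ0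
      have c1 : ENNReal.ofReal r < 2 * Δ := by
        refine lt_of_le_of_lt ?_ hΔlt
        rw [← hΔeq]
        exact ENNReal.ofReal_le_ofReal hrt
      have h2tΔ : ENNReal.ofReal (2 * t) = 2 * Δ := by
        rw [ENNReal.ofReal_mul (by norm_num : (0:ℝ) ≤ 2), hΔeq, ENNReal.ofReal_ofNat]
      have c2 : ENNReal.ofReal (lam' * r) < 2 * Δ := by
        rw [e1, ← h2tΔ]
        exact (ENNReal.ofReal_lt_ofReal_iff (by linarith)).mpr (by linarith)
      have key := hRD x r lam' hr c1 hlam'1 c2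
      have h2t : 2 * t ≤ lam * r := by
        have h3 : ENNReal.ofReal (2 * t) ≤ ENNReal.ofReal (lam * r) := by
          rw [h2tΔ]; exact hcase
        exact (ENNReal.ofReal_le_ofReal_iff (by positivity)).mp h3
      have hsub : ball x (lam * r) ⊆ ball x (lam' * r) := fun y hy => by
        rw [mem_ball']
        refine lt_of_le_of_lt (hdistle y) ?_
        rw [e1]; linarith
      have hlam'le : lam' ≤ lam := by
        rw [hlam'def, div_le_iff₀ hr]; nlinarith
      calc μ (ball x (lam * r)) ≤ μ (ball x (lam' * r)) := μ.mono hsub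
        _ ≤ C₂ * ENNReal.ofReal (lam' ^ n) * μ (ball x r) := key
        _ ≤ C₂ * ENNReal.ofReal (lam ^ n) * μ (ball x r) := by
            have h4 : lam' ^ n ≤ lam ^ n := Real.rpow_le_rpow (by linarith) hlam'le hn.le
            exact mul_le_mul_left (mul_le_mul_right (ENNReal.ofReal_le_ofReal h4) C₂) _


theorem my_totallyBounded (μ : Measure X) (C₂ : ℝ≥0∞) (n : ℝ) (hC₂ : C₂ ≠ ∞) (hn : 0 < n)
    (D : ∀ (x : X) (r lam : ℝ), 0 < r → 1 ≤ lam →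
      μ (ball x (lam * r)) ≤ C₂ * ENNReal.ofReal (lam ^ n) * μ (ball x r))
    (hμ : ∀ (x : X) (r : ℝ), 0 < r → 0 < μ (Metric.ball x r) ∧ μ (Metric.ball x r) < ∞)
    (x₀ : X) (R : ℝ) (hR : 0 < R) : TotallyBounded (ball x₀ R) := by
  classical
  rw [Metric.totallyBounded_iff]
  intro ε hε
  by_contra hnot
  push_neg at hnot
  have hε2R : ε < 2 * R := by
    by_contra hge
    push_neg at hge
    refine (hnot {x₀} (finite_singleton x₀) ?_).elim
    intro z hz
    simp only [mem_iUnion, mem_singleton_iff, exists_prop, iUnion_iUnion_eq_left]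
    exact mem_ball.mpr (lt_of_lt_of_le (mem_ball.mp hz) (by linarith))
  have key : ∀ t : Finset X, ∃ z, z ∈ ball x₀ R ∧ ∀ y ∈ t, ε ≤ dist z y := by
    intro t
    by_contra h
    push_neg at h
    refine hnot ↑t t.finite_toSet fun z hz => ?_
    obtain ⟨y, hy, hd⟩ := h z hz
    exact mem_iUnion₂.mpr ⟨y, hy, mem_ball.mpr hd⟩
  choose F hF1 hF2 using key
  let q : ℕ → Finset X := fun m => Nat.rec ∅ (fun _ t => insert (F t) t) m
  let p : ℕ → X := fun m => F (q m)
  have hq_succ : ∀ m, q (m + 1) = insert (p m) (q m) := fun m => rfl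
  have hq_mono : ∀ i m, i ≤ m → q i ⊆ q m := by
    intro i m him
    induction m with
    | zero =>
      have : i = 0 := by omega
      rw [this]
    | succ m ih =>
      rcases Nat.lt_or_ge i (m+1) with h | h
      · exact subset_trans (ih (by omega)) (by rw [hq_succ]; exact Finset.subset_insert _ _)
      · have : i = m + 1 := by omega
        rw [this]
  have hp_mem : ∀ i m, i < m → p i ∈ q m := by
    intro i m him
    have h1 : p i ∈ q (i+1) := by rw [hq_succ]; exact Finset.mem_insert_self _ _
    exact hq_mono (i+1) m him h1
  have hsep : ∀ i m, i < m → ε ≤ dist (p m) (p i) := fun i m him =>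
    hF2 (q m) (p i) (hp_mem i m him)
  have hball : ∀ m, p m ∈ ball x₀ R := fun m => hF1 (q m)
  have hdisj : ∀ i j, i ≠ j → Disjoint (ball (p i) (ε/2)) (ball (p j) (ε/2)) := by
    intro i j hij
    rcases Nat.lt_or_ge i j with h | h
    · exact ball_disjoint_ball (by rw [dist_comm]; linarith [hsep i j h])
    · exact ball_disjoint_ball (by linarith [hsep j i (by omega)])
  set V₀ := μ (ball x₀ (2 * R)) with hV₀
  have hV₀pos : 0 < V₀ := (hμ x₀ (2*R) (by linarith)).1
  have hV₀top : V₀ < ∞ := (hμ x₀ (2*R) (by linarith)).2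
  set Dc := C₂ * ENNReal.ofReal ((6 * R / ε) ^ n) with hDc
  have hDctop : Dc ≠ ∞ := ENNReal.mul_ne_top hC₂ ENNReal.ofReal_ne_top
  have hlower : ∀ i : ℕ, V₀ ≤ Dc * μ (ball (p i) (ε/2)) := by
    intro i
    have hlam1 : (1:ℝ) ≤ 6 * R / ε := by
      rw [le_div_iff₀ hε]; linarith
    have hlamr : 6 * R / ε * (ε/2) = 3 * R := by field_simp; ring
    have hsub : ball x₀ (2*R) ⊆ ball (p i) (3*R) := by
      intro z hz
      have h1 : dist (p i) x₀ < R := mem_ball.mp (hball i)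
      have h2 : dist z x₀ < 2*R := mem_ball.mp hz
      have : dist z (p i) ≤ dist z x₀ + dist x₀ (p i) := dist_triangle _ _ _
      rw [dist_comm x₀ (p i)] at this
      exact mem_ball.mpr (by linarith)
    calc V₀ ≤ μ (ball (p i) (3*R)) := μ.mono hsub
      _ = μ (ball (p i) (6 * R / ε * (ε/2))) := by rw [hlamr]
      _ ≤ Dc * μ (ball (p i) (ε/2)) := D (p i) (ε/2) (6*R/ε) (by linarith) hlam1
  set δ := V₀ / Dc with hδ
  have hDc0 : Dc ≠ 0 := by
    intro h
    have h2 := hlower 0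
    rw [h, zero_mul] at h2
    exact hV₀pos.ne' (le_antisymm h2 (zero_le))
  set δ := V₀ / Dc with hδ
  have hδpos : 0 < δ := ENNReal.div_pos hV₀pos.ne' hDctop
  have hδtop : δ ≠ ∞ := (ENNReal.div_lt_top hV₀top.ne hDc0).ne
  have hδle : ∀ i : ℕ, δ ≤ μ (ball (p i) (ε/2)) := fun i =>
    ENNReal.div_le_of_le_mul' (hlower i)
  have hsmall : ∀ i : ℕ, ball (p i) (ε/2) ⊆ ball x₀ (2*R) := by
    intro i z hz
    have h1 : dist (p i) x₀ < R := mem_ball.mp (hball i)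
    have h2 : dist z (p i) < ε/2 := mem_ball.mp hz
    have h3 : dist z x₀ ≤ dist z (p i) + dist (p i) x₀ := dist_triangle _ _ _
    exact mem_ball.mpr (by linarith)
  obtain ⟨N, hN⟩ := ENNReal.exists_nat_gt ((ENNReal.div_lt_top hV₀top.ne hδpos.ne').ne)
  have hVN : V₀ < N * δ := by
    rwa [ENNReal.div_lt_iff (Or.inl hδpos.ne') (Or.inl hδtop)] at hN
  have hsum : (N : ℝ≥0∞) * δ ≤ V₀ := by
    calc (N:ℝ≥0∞) * δ = ∑ _i ∈ Finset.range N, δ := by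
          rw [Finset.sum_const, Finset.card_range, nsmul_eq_mul]
      _ ≤ ∑ i ∈ Finset.range N, μ (ball (p i) (ε/2)) := Finset.sum_le_sum fun i _ => hδle i
      _ = μ (⋃ i ∈ Finset.range N, ball (p i) (ε/2)) :=
          (measure_biUnion_finset (fun i _ j _ hij => hdisj i j hij)
            (fun i _ => measurableSet_ball)).symm
      _ ≤ V₀ := μ.mono (by
          intro z hz
          simp only [mem_iUnion, exists_prop] at hz
          obtain ⟨i, _, hi⟩ := hz
          exact hsmall i hi)
  exact lt_irrefl _ (lt_of_lt_of_le hVN hsum)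


theorem my_univ_eq [Nonempty X] (x₀ : X) : (univ : Set X) = ⋃ m : ℕ, ball x₀ (m+1) := by
  ext y
  simp only [mem_iUnion, mem_univ, true_iff, mem_ball]
  obtain ⟨m, hm⟩ := exists_nat_gt (dist y x₀)
  exact ⟨m, by linarith⟩

theorem my_sigmaFinite [Nonempty X]
    (hμ : ∀ (x : X) (r : ℝ), 0 < r → 0 < μ (Metric.ball x r) ∧ μ (Metric.ball x r) < ∞) :
    SigmaFinite μ := by
  obtain ⟨x₀⟩ := (inferInstance : Nonempty X)
  refine Measure.FiniteSpanningSetsIn.sigmaFinite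
    (C := (univ : Set (Set X)))
    ⟨fun m => ball x₀ (m + 1), fun m => mem_univ _,
     fun m => (hμ x₀ (m + 1) (by positivity)).2, (my_univ_eq x₀).symm⟩

theorem my_secondCountable [Nonempty X] (μ : Measure X) (C₂ : ℝ≥0∞) (n : ℝ)
    (hC₂ : C₂ ≠ ∞) (hn : 0 < n)
    (D : ∀ (x : X) (r lam : ℝ), 0 < r → 1 ≤ lam →
      μ (ball x (lam * r)) ≤ C₂ * ENNReal.ofReal (lam ^ n) * μ (ball x r))
    (hμ : ∀ (x : X) (r : ℝ), 0 < r → 0 < μ (Metric.ball x r) ∧ μ (Metric.ball x r) < ∞)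
    (htb : ∀ (x₀ : X) (R : ℝ), 0 < R → TotallyBounded (ball x₀ R)) :
    SecondCountableTopology X := by
  obtain ⟨x₀⟩ := (inferInstance : Nonempty X)
  have h : TopologicalSpace.IsSeparable (univ : Set X) := by
    rw [my_univ_eq x₀]
    exact TopologicalSpace.IsSeparable.iUnion fun m =>
      (htb x₀ (m+1) (by positivity)).isSeparable
  have h2 : TopologicalSpace.SeparableSpace X := TopologicalSpace.isSeparable_univ_iff.mp h
  exact UniformSpace.secondCountable_of_separable X

theorem my_meas_kernel [SecondCountableTopology X] [SFinite μ] {F : X → X → ℝ≥0∞}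
    (hF : Measurable (Function.uncurry F)) (r : ℝ) :
    Measurable fun x => ∫⁻ z in ball x r, F x z ∂μ := by
  have h1 : ∀ x, ∫⁻ z in ball x r, F x z ∂μ = ∫⁻ z, (ball x r).indicator (F x) z ∂μ := fun x =>
    (lintegral_indicator measurableSet_ball _).symm
  simp_rw [h1]
  apply Measurable.lintegral_prod_right'
    (f := fun q : X × X => (ball q.1 r).indicator (F q.1) q.2)
  have hs : MeasurableSet {q : X × X | q.2 ∈ ball q.1 r} :=
    (isOpen_lt (continuous_snd.dist continuous_fst) continuous_const).measurableSet
  have h2 : (fun q : X × X => (ball q.1 r).indicator (F q.1) q.2)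
      = ({q : X × X | q.2 ∈ ball q.1 r}).indicator (Function.uncurry F) := by
    funext q
    by_cases hq : q.2 ∈ ball q.1 r
    · rw [indicator_of_mem hq, indicator_of_mem (show q ∈ {q : X × X | q.2 ∈ ball q.1 r} from hq)]
      rfl
    · rw [indicator_of_notMem hq,
        indicator_of_notMem (show q ∉ {q : X × X | q.2 ∈ ball q.1 r} from hq)]
  rw [h2]
  exact hF.indicator hs

theorem my_meas_ball [SecondCountableTopology X] [SFinite μ] (r : ℝ) :
    Measurable fun x : X => μ (ball x r) := by
  have h1 : ∀ x : X, μ (ball x r) = ∫⁻ z in ball x r, (1:ℝ≥0∞) ∂μ := fun x => by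
    rw [setLIntegral_one]
  simp_rw [h1]
  exact my_meas_kernel (F := fun _ _ => (1:ℝ≥0∞)) measurable_const r

theorem my_meas_N {u : X → ℝ} (hu : Measurable u) (p : ℝ) :
    Measurable (Function.uncurry fun x z : X => ENNReal.ofReal |u x - u z| ^ p) := by
  have h1 : Measurable fun q : X × X => ENNReal.ofReal |u q.1 - u q.2| :=
    ENNReal.measurable_ofReal.comp ((hu.comp measurable_fst).sub (hu.comp measurable_snd)).abs
  exact (ENNReal.continuous_rpow_const (y := p)).measurable.comp h1

theorem my_exists_k {d : ℝ} (hd : 0 < d) : ∃ k : ℤ, (2:ℝ) ^ (-k - 1) ≤ d ∧ d < 2 ^ (-k) := by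
  set L := Real.logb 2 d with hL
  refine ⟨-⌊L⌋ - 1, ?_, ?_⟩
  · have h1 : (2:ℝ) ^ ((⌊L⌋ : ℝ)) ≤ 2 ^ L :=
      Real.rpow_le_rpow_of_exponent_le one_le_two (Int.floor_le L)
    rw [Real.rpow_intCast] at h1
    rw [Real.rpow_logb two_pos (by norm_num) hd] at h1
    have h0 : -(-⌊L⌋ - 1) - 1 = ⌊L⌋ := by ring
    rw [h0]
    exact h1
  · have h1 : (2:ℝ) ^ L < 2 ^ ((⌊L⌋ : ℝ) + 1) :=
      Real.rpow_lt_rpow_of_exponent_lt one_lt_two (Int.lt_floor_add_one L)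
    rw [Real.rpow_logb two_pos (by norm_num) hd] at h1
    have h2 : ((⌊L⌋ : ℝ) + 1) = ((⌊L⌋ + 1 : ℤ) : ℝ) := by push_cast; ring
    rw [h2, Real.rpow_intCast] at h1
    have h0 : -(-⌊L⌋ - 1) = ⌊L⌋ + 1 := by ring
    rw [h0]
    exact h1


theorem my_geom {c : ℝ} (hc : 0 < c) {d : ℝ} (hd : 0 < d) :
    ∑' k : ℤ, (if d < (2:ℝ) ^ (-k + 1) then ENNReal.ofReal (((2:ℝ) ^ (k + 1)) ^ c) else 0)
      ≤ ENNReal.ofReal ((4 / d) ^ c) * (1 - ENNReal.ofReal ((2:ℝ) ^ (-c)))⁻¹ := by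
  set L := Real.logb 2 d with hLdef
  set K : ℤ := ⌈-L⌉ with hKdef
  set q : ℝ≥0∞ := ENNReal.ofReal ((2:ℝ) ^ (-c)) with hqdef
  set A : ℝ≥0∞ := ENNReal.ofReal ((4 / d) ^ c) with hAdef
  have hdL : (2:ℝ) ^ L = d := Real.rpow_logb two_pos (by norm_num) hd
  have hKL : (K:ℝ) < -L + 1 := by
    have := Int.ceil_lt_add_one (-L)
    exact this
  have hcd : ∀ k : ℤ, d < (2:ℝ) ^ (-k + 1) → k ≤ K := by
    intro k hk
    have h1 : (2:ℝ) ^ L < 2 ^ ((-k + 1 : ℤ) : ℝ) := by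
      rw [Real.rpow_intCast, hdL]; exact hk
    have h2 : L < ((-k + 1 : ℤ) : ℝ) := by
      by_contra hging
      push_neg at hging
      exact absurd h1 (not_lt.mpr (Real.rpow_le_rpow_of_exponent_le one_le_two hging))
    have h3 : (k : ℝ) - 1 < -L := by push_cast at h2 ⊢; linarith
    have h4 : -L ≤ (K : ℝ) := Int.le_ceil (-L)
    have h5 : (k : ℝ) - 1 < (K : ℝ) := lt_of_lt_of_le h3 h4
    have h6 : k - 1 < K := by exact_mod_cast h5
    omega
  set f : ℤ → ℝ≥0∞ := fun k => if k ≤ K then A * q ^ ((K - k).toNat) else 0 with hfdef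
  have hterm : ∀ k : ℤ,
      (if d < (2:ℝ) ^ (-k + 1) then ENNReal.ofReal (((2:ℝ) ^ (k + 1)) ^ c) else 0) ≤ f k := by
    intro k
    by_cases hk : d < (2:ℝ) ^ (-k + 1)
    · have hkK := hcd k hk
      rw [if_pos hk, hfdef]
      simp only [if_pos hkK]
      set i : ℕ := (K - k).toNat with hidef
      have hi : (i : ℝ) = (K : ℝ) - k := by
        have : ((K - k).toNat : ℤ) = K - k := Int.toNat_of_nonneg (by omega)
        exact_mod_cast this
      -- rewrite everything as rpow of 2
      have e1 : ((2:ℝ) ^ (k + 1 : ℤ)) ^ c = (2:ℝ) ^ (((k:ℝ) + 1) * c) := by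
        rw [← Real.rpow_intCast 2 (k+1), ← Real.rpow_mul two_pos.le]
        push_cast
        ring_nf
      have e2 : (4 / d : ℝ) = (2:ℝ) ^ ((2:ℝ) - L) := by
        rw [Real.rpow_sub two_pos, hdL]
        norm_num
      have e3 : (4/d : ℝ) ^ c * ((2:ℝ) ^ (-c)) ^ (i:ℕ) = (2:ℝ) ^ (((2:ℝ) - L) * c + (-c) * i) := by
        rw [e2, ← Real.rpow_natCast ((2:ℝ) ^ (-c)) i, ← Real.rpow_mul two_pos.le,
          ← Real.rpow_mul two_pos.le, ← Real.rpow_add two_pos]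
      have hexp : ((k:ℝ) + 1) * c ≤ ((2:ℝ) - L) * c + (-c) * i := by
        rw [hi]
        have hKL' : (K:ℝ) ≤ 1 - L := by linarith
        nlinarith [hc.le]
      have hle : ((2:ℝ) ^ (k + 1 : ℤ)) ^ c ≤ (4/d : ℝ) ^ c * ((2:ℝ) ^ (-c)) ^ (i:ℕ) := by
        rw [e1, e3]
        exact Real.rpow_le_rpow_of_exponent_le one_le_two hexp
      calc ENNReal.ofReal (((2:ℝ) ^ (k + 1 : ℤ)) ^ c)
          ≤ ENNReal.ofReal ((4/d : ℝ) ^ c * ((2:ℝ) ^ (-c)) ^ (i:ℕ)) := ENNReal.ofReal_le_ofReal hle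
        _ = A * q ^ (i:ℕ) := by
            rw [ENNReal.ofReal_mul (by positivity), hAdef, hqdef, ENNReal.ofReal_pow (by positivity)]
    · rw [if_neg hk]
      exact zero_le
  refine le_trans (ENNReal.tsum_le_tsum hterm) ?_
  set e : ℕ → ℤ := fun i => K - i with hedef
  have hinj : Function.Injective e := by
    intro a b h
    simp only [hedef] at h
    omega
  have hsupp : Function.support f ⊆ Set.range e := by
    intro k hk
    have hkK : k ≤ K := by
      by_contra h
      exact hk (by rw [hfdef]; simp only [if_neg h])
    exact ⟨(K - k).toNat, by simp only [hedef]; omega⟩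
  rw [← hinj.tsum_eq hsupp]
  have hfe : ∀ i : ℕ, f (e i) = A * q ^ i := by
    intro i
    rw [hfdef, hedef]
    simp only
    rw [if_pos (by omega : K - (i:ℤ) ≤ K)]
    have h9 : (K - (K - (i:ℤ))).toNat = i := by omega
    rw [h9]
  simp_rw [hfe]
  rw [ENNReal.tsum_mul_left, ENNReal.tsum_geometric]


theorem my_direction2 {X : Type*} [MetricSpace X] [MeasurableSpace X] [BorelSpace X]
    [SecondCountableTopology X]
    (μ : Measure X) [SFinite μ] (C₂ : ℝ≥0∞) (n : ℝ) (hC₂1 : 1 ≤ C₂) (hC₂ : C₂ ≠ ∞) (hn : 0 < n)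
    (D : ∀ (x : X) (r lam : ℝ), 0 < r → 1 ≤ lam →
      μ (ball x (lam * r)) ≤ C₂ * ENNReal.ofReal (lam ^ n) * μ (ball x r))
    (hμ : ∀ (x : X) (r : ℝ), 0 < r → 0 < μ (Metric.ball x r) ∧ μ (Metric.ball x r) < ∞)
    (s p : ℝ) (hs : 0 < s) (hp : 1 ≤ p) (u : X → ℝ) (hu : Measurable u) :
    MnormP μ s p u ≤ ((2:ℝ≥0∞) ^ (p-1) * (C₂ * ENNReal.ofReal ((8:ℝ) ^ n))
      * (ENNReal.ofReal ((4:ℝ) ^ (s*p)) * (1 - ENNReal.ofReal ((2:ℝ) ^ (-(s*p))))⁻¹))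
      * BPnormP μ s p u := by
  have hp0 : (0:ℝ) < p := lt_of_lt_of_le one_pos hp
  have hsp : 0 < s * p := mul_pos hs hp0
  set N : X → X → ℝ≥0∞ := fun x z => ENNReal.ofReal |u x - u z| ^ p with hN
  set Rk : ℤ → ℝ := fun k => (2:ℝ) ^ (-k + 1) with hRk
  have hRkpos : ∀ k, 0 < Rk k := fun k => zpow_pos two_pos _
  set I : ℤ → X → ℝ≥0∞ := fun k x => ∫⁻ z in ball x (Rk k), N x z ∂μ with hI
  set M : ℤ → X → ℝ≥0∞ := fun k x => μ (ball x (Rk k)) with hM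
  set a : ℤ → ℝ≥0∞ := fun k => ENNReal.ofReal (((2:ℝ) ^ (k + 1)) ^ (s * p)) with ha
  set D8 : ℝ≥0∞ := C₂ * ENNReal.ofReal ((8:ℝ) ^ n) with hD8
  set B0 : ℝ≥0∞ := (2:ℝ≥0∞) ^ (p - 1) * D8 with hB0
  set g : ℤ → X → ℝ≥0∞ := fun k x => (B0 * a k * (I k x / M k x)) ^ p⁻¹ with hg
  set G : ℝ≥0∞ := ENNReal.ofReal ((4:ℝ) ^ (s*p)) * (1 - ENNReal.ofReal ((2:ℝ) ^ (-(s*p))))⁻¹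
    with hG
  have hMpos : ∀ k x, 0 < M k x := fun k x => (hμ x (Rk k) (hRkpos k)).1
  have hMtop : ∀ k x, M k x < ∞ := fun k x => (hμ x (Rk k) (hRkpos k)).2
  have hD8top : D8 ≠ ∞ := ENNReal.mul_ne_top hC₂ ENNReal.ofReal_ne_top
  have h2top : ((2:ℝ≥0∞) ^ (p-1)) ≠ ∞ :=
    (ENNReal.rpow_lt_top_of_nonneg (by linarith) (by norm_num)).ne
  have hB0top : B0 ≠ ∞ := ENNReal.mul_ne_top h2top hD8top
  have hGtop : G ≠ ∞ := by
    refine ENNReal.mul_ne_top ENNReal.ofReal_ne_top (ENNReal.inv_ne_top.mpr ?_)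
    intro h0
    have h1 : ENNReal.ofReal ((2:ℝ) ^ (-(s*p))) < 1 := by
      rw [← ENNReal.ofReal_one]
      refine (ENNReal.ofReal_lt_ofReal_iff one_pos).mpr ?_
      exact Real.rpow_lt_one_of_one_lt_of_neg one_lt_two (by linarith)
    exact (tsub_pos_of_lt h1).ne' h0
  -- measurability
  have hNmeasx : ∀ x, Measurable (N x) := by
    intro x
    exact (ENNReal.continuous_rpow_const (y := p)).measurable.comp
      (ENNReal.measurable_ofReal.comp ((measurable_const.sub hu).abs))
  have hImeas : ∀ k, Measurable fun x => I k x := fun k => my_meas_kernel (my_meas_N hu p) (Rk k)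
  have hMmeas : ∀ k, Measurable fun x => M k x := fun k => my_meas_ball (Rk k)
  have hgmeas : ∀ k, Measurable (g k) := by
    intro k
    exact (ENNReal.continuous_rpow_const (y := p⁻¹)).measurable.comp
      (((hImeas k).div (hMmeas k)).const_mul _)
  have gpow : ∀ k x, g k x ^ p = B0 * a k * (I k x / M k x) := fun k x =>
    ENNReal.rpow_inv_rpow hp0.ne' _
  -- the gradient property
  have hgrad : IsFracHajlaszGradient μ s u g := by
    refine ⟨hgmeas, ∅, measure_empty, ?_⟩
    intro k x _ y _ h1 h2
    set r : ℝ := (2:ℝ) ^ (-k - 1) with hr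
    have hrpos : 0 < r := zpow_pos two_pos _
    set d := dist x y with hd
    have hd0 : 0 < d := lt_of_lt_of_le hrpos h1
    have hzf1 : Rk k = 4 * r := by
      rw [hRk, hr]
      simp only
      rw [show (-k+1 : ℤ) = (-k-1) + 2 by ring, zpow_add₀ (by norm_num : (2:ℝ) ≠ 0)]
      ring
    have hzf2 : (2:ℝ) ^ (-k) = 2 * r := by
      rw [hr, show (-k : ℤ) = (-k-1) + 1 by ring, zpow_add₀ (by norm_num : (2:ℝ) ≠ 0)]
      ring
    have hm0 := (hμ x r hrpos).1
    have hmtop := (hμ x r hrpos).2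
    have key2 : ∀ z, N x y ≤ (2:ℝ≥0∞) ^ (p-1) * (N x z + N y z) := by
      intro z
      have t1 : ENNReal.ofReal |u x - u y|
          ≤ ENNReal.ofReal |u x - u z| + ENNReal.ofReal |u z - u y| :=
        le_trans (ENNReal.ofReal_le_ofReal (abs_sub_le (u x) (u z) (u y))) ENNReal.ofReal_add_le
      calc N x y = ENNReal.ofReal |u x - u y| ^ p := rfl
        _ ≤ (ENNReal.ofReal |u x - u z| + ENNReal.ofReal |u z - u y|) ^ p :=
            ENNReal.rpow_le_rpow t1 hp0.le
        _ ≤ (2:ℝ≥0∞) ^ (p-1) * (ENNReal.ofReal |u x - u z| ^ p + ENNReal.ofReal |u z - u y| ^ p) :=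
            ENNReal.rpow_add_le_mul_rpow_add_rpow _ _ hp
        _ = (2:ℝ≥0∞) ^ (p-1) * (N x z + N y z) := by
            rw [hN]
            simp only
            rw [abs_sub_comm (u z) (u y)]
    have hsub1 : ball x r ⊆ ball x (Rk k) := ball_subset_ball (by rw [hzf1]; linarith)
    have hsub2 : ball x r ⊆ ball y (Rk k) := by
      intro z hz
      have hz1 : dist z x < r := mem_ball.mp hz
      have hz2 : dist z y ≤ dist z x + dist x y := dist_triangle _ _ _
      have hz3 : dist x y < 2 * r := by rw [← hzf2]; exact h2
      exact mem_ball.mpr (by rw [hzf1]; linarith)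
    have big : μ (ball x r) * N x y ≤ (2:ℝ≥0∞) ^ (p-1) * (I k x + I k y) := by
      calc μ (ball x r) * N x y = ∫⁻ _ in ball x r, N x y ∂μ := by
            rw [setLIntegral_const, mul_comm]
        _ ≤ ∫⁻ z in ball x r, (2:ℝ≥0∞) ^ (p-1) * (N x z + N y z) ∂μ :=
            setLIntegral_mono (((hNmeasx x).add (hNmeasx y)).const_mul _) (fun z _ => key2 z)
        _ = (2:ℝ≥0∞) ^ (p-1) * (∫⁻ z in ball x r, N x z ∂μ + ∫⁻ z in ball x r, N y z ∂μ) := by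
            rw [lintegral_const_mul' _ _ h2top, lintegral_add_left (hNmeasx x)]
        _ ≤ (2:ℝ≥0∞) ^ (p-1) * (I k x + I k y) :=
            mul_le_mul_right (add_le_add (lintegral_mono_set hsub1) (lintegral_mono_set hsub2)) _
    have hNxy : N x y ≤ (2:ℝ≥0∞) ^ (p-1) * (I k x + I k y) / μ (ball x r) := by
      have e : N x y * μ (ball x r) / μ (ball x r) = N x y := by
        rw [mul_div_assoc, ENNReal.div_self hm0.ne' hmtop.ne, mul_one]
      rw [← e, mul_comm]
      exact ENNReal.div_le_div_right big _
    have hMx : M k x ≤ D8 * μ (ball x r) := by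
      rw [hM]
      simp only
      rw [hzf1]
      calc μ (ball x (4*r)) ≤ C₂ * ENNReal.ofReal ((4:ℝ) ^ n) * μ (ball x r) :=
            D x r 4 hrpos (by norm_num)
        _ ≤ D8 * μ (ball x r) := by
            refine mul_le_mul_left (mul_le_mul_right (ENNReal.ofReal_le_ofReal
              (Real.rpow_le_rpow (by norm_num) (by norm_num) hn.le)) C₂) _
    have hMy : M k y ≤ D8 * μ (ball x r) := by
      have hsub3 : ball y (Rk k) ⊆ ball x (8 * r) := by
        intro z hz
        have hz1 : dist z y < Rk k := mem_ball.mp hz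
        have hz2 : dist z x ≤ dist z y + dist y x := dist_triangle _ _ _
        have hz3 : dist y x < 2 * r := by rw [dist_comm, ← hzf2]; exact h2
        rw [hzf1] at hz1
        exact mem_ball.mpr (by linarith)
      calc M k y ≤ μ (ball x (8*r)) := μ.mono hsub3
        _ ≤ C₂ * ENNReal.ofReal ((8:ℝ) ^ n) * μ (ball x r) := D x r 8 hrpos (by norm_num)
        _ = D8 * μ (ball x r) := by rw [hD8]
    have hdivb : ∀ (J : ℝ≥0∞) (k' : ℤ) (w : X), M k' w ≤ D8 * μ (ball x r) →
        J / μ (ball x r) ≤ D8 * (J / M k' w) := by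
      intro J k' w hMw
      have hD80 : D8 ≠ 0 := by
        intro h0
        rw [h0, zero_mul] at hMw
        exact (hMpos k' w).ne' (le_antisymm hMw (zero_le))
      calc J / μ (ball x r) = D8 * J / (D8 * μ (ball x r)) :=
            (ENNReal.mul_div_mul_left J (μ (ball x r)) hD80 hD8top).symm
        _ ≤ D8 * J / M k' w := ENNReal.div_le_div_left hMw _
        _ = D8 * (J / M k' w) := mul_div_assoc _ _ _
    have main : N x y ≤ B0 * (I k x / M k x) + B0 * (I k y / M k y) := by
      calc N x y ≤ (2:ℝ≥0∞) ^ (p-1) * (I k x + I k y) / μ (ball x r) := hNxy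
        _ = (2:ℝ≥0∞) ^ (p-1) * ((I k x + I k y) / μ (ball x r)) := mul_div_assoc _ _ _
        _ = (2:ℝ≥0∞) ^ (p-1) * (I k x / μ (ball x r) + I k y / μ (ball x r)) := by
            rw [ENNReal.add_div]
        _ ≤ (2:ℝ≥0∞) ^ (p-1) * (D8 * (I k x / M k x) + D8 * (I k y / M k y)) :=
            mul_le_mul_right (add_le_add (hdivb _ k x hMx) (hdivb _ k y hMy)) _
        _ = B0 * (I k x / M k x) + B0 * (I k y / M k y) := by rw [hB0]; ring
    have hone : (1:ℝ≥0∞) ≤ ENNReal.ofReal (d ^ (s*p)) * a k := by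
      have e0 : r * ((2:ℝ) ^ (k+1 : ℤ)) = 1 := by
        rw [hr, ← zpow_add₀ (by norm_num : (2:ℝ) ≠ 0)]
        norm_num
      have e1 : ENNReal.ofReal (r ^ (s*p)) * a k = 1 := by
        rw [ha]
        simp only
        rw [← ENNReal.ofReal_mul (by positivity),
          ← Real.mul_rpow hrpos.le (by positivity), e0, Real.one_rpow, ENNReal.ofReal_one]
      rw [← e1]
      exact mul_le_mul_left (ENNReal.ofReal_le_ofReal
        (Real.rpow_le_rpow hrpos.le h1 hsp.le)) _
    have chain : N x y ≤ (ENNReal.ofReal (d ^ s) * (g k x + g k y)) ^ p := by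
      calc N x y ≤ B0 * (I k x / M k x) + B0 * (I k y / M k y) := main
        _ = 1 * (B0 * (I k x / M k x) + B0 * (I k y / M k y)) := (one_mul _).symm
        _ ≤ (ENNReal.ofReal (d ^ (s*p)) * a k) * (B0 * (I k x / M k x) + B0 * (I k y / M k y)) :=
            mul_le_mul_left hone _
        _ = ENNReal.ofReal (d ^ (s*p)) * (B0 * a k * (I k x / M k x)
              + B0 * a k * (I k y / M k y)) := by ring
        _ = ENNReal.ofReal (d ^ (s*p)) * (g k x ^ p + g k y ^ p) := by rw [gpow, gpow]
        _ ≤ ENNReal.ofReal (d ^ (s*p)) * (g k x + g k y) ^ p :=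
            mul_le_mul_right (ENNReal.add_rpow_le_rpow_add _ _ hp) _
        _ = (ENNReal.ofReal (d ^ s) * (g k x + g k y)) ^ p := by
            rw [ENNReal.mul_rpow_of_nonneg _ _ hp0.le,
              ENNReal.ofReal_rpow_of_nonneg (Real.rpow_nonneg hd0.le s) hp0.le,
              ← Real.rpow_mul hd0.le]
    exact (ENNReal.rpow_le_rpow_iff hp0).mp chain
  -- the energy bound
  have energy : ∫⁻ x, ∑' k : ℤ, g k x ^ p ∂μ ≤ (B0 * G) * BPnormP μ s p u := by
    have pointw : ∀ x, ∑' k : ℤ, g k x ^ p ≤ (B0 * G) * ∫⁻ z, N x z /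
        (ENNReal.ofReal (dist x z ^ (s*p)) * μ (ball x (dist x z))) ∂μ := by
      intro x
      have hconst : ∀ k : ℤ, B0 * a k * (M k x)⁻¹ ≠ ∞ := by
        intro k
        exact ENNReal.mul_ne_top (ENNReal.mul_ne_top hB0top ENNReal.ofReal_ne_top)
          (ENNReal.inv_ne_top.mpr (hMpos k x).ne')
      have step1 : ∀ k : ℤ, g k x ^ p
          = ∫⁻ z, (B0 * a k * (M k x)⁻¹) * (ball x (Rk k)).indicator (N x) z ∂μ := by
        intro k
        rw [gpow, div_eq_mul_inv, hI]
        simp only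
        rw [← lintegral_indicator measurableSet_ball]
        rw [show B0 * a k * ((∫⁻ z, (ball x (Rk k)).indicator (N x) z ∂μ) * (M k x)⁻¹)
            = (B0 * a k * (M k x)⁻¹) * ∫⁻ z, (ball x (Rk k)).indicator (N x) z ∂μ from by ring]
        exact (lintegral_const_mul' _ _ (hconst k)).symm
      have step2 : ∑' k : ℤ, g k x ^ p
          = ∫⁻ z, ∑' k : ℤ, (B0 * a k * (M k x)⁻¹) * (ball x (Rk k)).indicator (N x) z ∂μ := by
        simp_rw [step1]
        rw [← lintegral_tsum]
        intro k
        exact (((hNmeasx x).indicator measurableSet_ball).const_mul _).aemeasurable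
      have step3 : ∀ z, ∑' k : ℤ, (B0 * a k * (M k x)⁻¹) * (ball x (Rk k)).indicator (N x) z
          ≤ (B0 * G) * (N x z /
            (ENNReal.ofReal (dist x z ^ (s*p)) * μ (ball x (dist x z)))) := by
        intro z
        by_cases hdz : 0 < dist x z
        · have termb : ∀ k : ℤ, (B0 * a k * (M k x)⁻¹) * (ball x (Rk k)).indicator (N x) z
              ≤ B0 * ((if dist x z < (2:ℝ) ^ (-k+1) then a k else 0)
                * ((μ (ball x (dist x z)))⁻¹ * N x z)) := by
            intro k
            by_cases hzk : z ∈ ball x (Rk k)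
            · have hdzRk : dist x z < Rk k := by rw [dist_comm]; exact mem_ball.mp hzk
              rw [indicator_of_mem hzk, if_pos (by rw [hRk] at hdzRk; exact hdzRk)]
              have hinv : (M k x)⁻¹ ≤ (μ (ball x (dist x z)))⁻¹ :=
                ENNReal.inv_le_inv' (μ.mono (ball_subset_ball hdzRk.le))
              calc B0 * a k * (M k x)⁻¹ * N x z
                  ≤ B0 * a k * (μ (ball x (dist x z)))⁻¹ * N x z :=
                    mul_le_mul_left (mul_le_mul_right hinv _) _
                _ = B0 * (a k * ((μ (ball x (dist x z)))⁻¹ * N x z)) := by ring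
            · rw [indicator_of_notMem hzk, mul_zero]
              exact zero_le
          refine le_trans (ENNReal.tsum_le_tsum termb) ?_
          rw [ENNReal.tsum_mul_left, ENNReal.tsum_mul_right]
          have hgeo := my_geom hsp hdz
          have hsplit : ENNReal.ofReal ((4 / dist x z) ^ (s*p))
              = ENNReal.ofReal ((4:ℝ) ^ (s*p)) * (ENNReal.ofReal (dist x z ^ (s*p)))⁻¹ := by
            rw [Real.div_rpow (by norm_num) hdz.le, ENNReal.ofReal_div_of_pos
              (Real.rpow_pos_of_pos hdz _), div_eq_mul_inv]
          have hb2 : (∑' k : ℤ, if dist x z < (2:ℝ) ^ (-k+1) then a k else 0)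
              ≤ G * (ENNReal.ofReal (dist x z ^ (s*p)))⁻¹ := by
            refine le_trans hgeo ?_
            rw [hsplit, hG]
            exact le_of_eq (by ring)
          calc B0 * ((∑' k : ℤ, if dist x z < (2:ℝ) ^ (-k+1) then a k else 0)
                * ((μ (ball x (dist x z)))⁻¹ * N x z))
              ≤ B0 * ((G * (ENNReal.ofReal (dist x z ^ (s*p)))⁻¹)
                * ((μ (ball x (dist x z)))⁻¹ * N x z)) :=
                mul_le_mul_right (mul_le_mul_left hb2 _) _
            _ = (B0 * G) * (N x z * ((ENNReal.ofReal (dist x z ^ (s*p)))⁻¹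
                * (μ (ball x (dist x z)))⁻¹)) := by ring
            _ = (B0 * G) * (N x z /
                (ENNReal.ofReal (dist x z ^ (s*p)) * μ (ball x (dist x z)))) := by
                rw [← ENNReal.mul_inv
                  (Or.inl (ENNReal.ofReal_pos.mpr (Real.rpow_pos_of_pos hdz _)).ne')
                  (Or.inl ENNReal.ofReal_ne_top), div_eq_mul_inv]
        · have hdz0 : dist x z = 0 := le_antisymm (not_lt.mp hdz) dist_nonneg
          have hxz : x = z := by
            have := dist_eq_zero.mp hdz0
            exact this
          have hNz : N x z = 0 := by
            rw [hN]
            simp only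
            rw [← hxz, sub_self, abs_zero, ENNReal.ofReal_zero,
              ENNReal.zero_rpow_of_pos hp0]
          have hz0 : ∀ k : ℤ, (B0 * a k * (M k x)⁻¹) * (ball x (Rk k)).indicator (N x) z = 0 := by
            intro k
            by_cases hzk : z ∈ ball x (Rk k)
            · rw [indicator_of_mem hzk, hNz, mul_zero]
            · rw [indicator_of_notMem hzk, mul_zero]
          simp_rw [hz0]
          rw [tsum_zero]
          exact zero_le
      calc ∑' k : ℤ, g k x ^ p
          = ∫⁻ z, ∑' k : ℤ, (B0 * a k * (M k x)⁻¹) * (ball x (Rk k)).indicator (N x) z ∂μ := step2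
        _ ≤ ∫⁻ z, (B0 * G) * (N x z /
            (ENNReal.ofReal (dist x z ^ (s*p)) * μ (ball x (dist x z)))) ∂μ :=
            lintegral_mono step3
        _ = (B0 * G) * ∫⁻ z, N x z /
            (ENNReal.ofReal (dist x z ^ (s*p)) * μ (ball x (dist x z))) ∂μ :=
            lintegral_const_mul' _ _ (ENNReal.mul_ne_top hB0top hGtop)
    calc ∫⁻ x, ∑' k : ℤ, g k x ^ p ∂μ
        ≤ ∫⁻ x, (B0 * G) * ∫⁻ z, N x z /
          (ENNReal.ofReal (dist x z ^ (s*p)) * μ (ball x (dist x z))) ∂μ ∂μ :=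
          lintegral_mono pointw
      _ = (B0 * G) * BPnormP μ s p u := by
          rw [lintegral_const_mul' _ _ (ENNReal.mul_ne_top hB0top hGtop)]
          rfl
  refine le_trans ?_ (le_trans energy (le_of_eq (by rw [hB0, hG])))
  exact iInf₂_le g hgrad


theorem my_inv_bound (A B Dc : ℝ≥0∞) (hA0 : A ≠ 0) (hAt : A ≠ ∞) (hB0 : B ≠ 0) (hBt : B ≠ ∞)
    (h : B ≤ Dc * A) : A⁻¹ ≤ Dc * B⁻¹ := by
  have e : A⁻¹ = A⁻¹ * B * B⁻¹ := by
    rw [mul_assoc, ENNReal.mul_inv_cancel hB0 hBt, mul_one]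
  rw [e]
  calc A⁻¹ * B * B⁻¹ ≤ A⁻¹ * (Dc * A) * B⁻¹ :=
      mul_le_mul_left (mul_le_mul_right h _) _
    _ = Dc * (A⁻¹ * A) * B⁻¹ := by ring
    _ = Dc * B⁻¹ := by rw [ENNReal.inv_mul_cancel hA0 hAt, mul_one]

theorem my_direction1 {X : Type*} [MetricSpace X] [MeasurableSpace X] [BorelSpace X]
    [SecondCountableTopology X]
    (μ : Measure X) [SigmaFinite μ] (C₂ : ℝ≥0∞) (n : ℝ) (hC₂ : C₂ ≠ ∞) (hn : 0 < n)
    (D : ∀ (x : X) (r lam : ℝ), 0 < r → 1 ≤ lam →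
      μ (Metric.ball x (lam * r)) ≤ C₂ * ENNReal.ofReal (lam ^ n) * μ (Metric.ball x r))
    (hμ : ∀ (x : X) (r : ℝ), 0 < r → 0 < μ (Metric.ball x r) ∧ μ (Metric.ball x r) < ∞)
    (s p : ℝ) (hs : 0 < s) (hp : 1 ≤ p) (u : X → ℝ)
    (g : ℤ → X → ℝ≥0∞) (hg : IsFracHajlaszGradient μ s u g) :
    BPnormP μ s p u ≤ ((2:ℝ≥0∞) ^ (p-1) * (C₂ * ENNReal.ofReal ((2:ℝ) ^ n)
      + C₂ * ENNReal.ofReal ((4:ℝ) ^ n) * (C₂ * ENNReal.ofReal ((2:ℝ) ^ n))))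
      * ∫⁻ x, ∑' k : ℤ, g k x ^ p ∂μ := by
  obtain ⟨hgm, E, hE0, hE⟩ := hg
  have hp0 : (0:ℝ) < p := lt_of_lt_of_le one_pos hp
  have hsp : 0 < s * p := mul_pos hs hp0
  have h2top : ((2:ℝ≥0∞) ^ (p-1)) ≠ ∞ :=
    (ENNReal.rpow_lt_top_of_nonneg (by linarith) (by norm_num)).ne
  set D₂ : ℝ≥0∞ := C₂ * ENNReal.ofReal ((2:ℝ) ^ n) with hD₂
  set D₄ : ℝ≥0∞ := C₂ * ENNReal.ofReal ((4:ℝ) ^ n) with hD₄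
  have hD₂top : D₂ ≠ ∞ := ENNReal.mul_ne_top hC₂ ENNReal.ofReal_ne_top
  have hD₄top : D₄ ≠ ∞ := ENNReal.mul_ne_top hC₂ ENNReal.ofReal_ne_top
  have hgpm : ∀ j, Measurable fun x => g j x ^ p := fun j =>
    (ENNReal.continuous_rpow_const (y := p)).measurable.comp (hgm j)
  set m : ℤ → X → ℝ≥0∞ := fun j x => μ (ball x ((2:ℝ) ^ (-j-1))) with hm
  have hrpos : ∀ j : ℤ, (0:ℝ) < 2 ^ (-j-1) := fun j => zpow_pos two_pos _
  have hmpos : ∀ j x, 0 < m j x := fun j x => (hμ x _ (hrpos j)).1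
  have hmtop : ∀ j x, m j x < ∞ := fun j x => (hμ x _ (hrpos j)).2
  have hzf : ∀ j : ℤ, (2:ℝ) ^ (-j) = 2 * 2 ^ (-j-1) := by
    intro j
    rw [show (-j : ℤ) = (-j-1) + 1 by ring, zpow_add₀ (by norm_num : (2:ℝ) ≠ 0)]
    ring
  have hdb2 : ∀ (w : X) (j : ℤ), μ (ball w ((2:ℝ) ^ (-j))) ≤ D₂ * μ (ball w ((2:ℝ) ^ (-j-1))) := by
    intro w j
    rw [hzf j]
    exact D w _ 2 (hrpos j) one_le_two
  set ind : ℤ → X → X → ℝ≥0∞ := fun j x y =>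
    if (2:ℝ) ^ (-j-1) ≤ dist x y ∧ dist x y < (2:ℝ) ^ (-j) then 1 else 0 with hind
  set Φ : X → X → ℝ≥0∞ := fun x y =>
    ∑' j : ℤ, (g j x ^ p + g j y ^ p) * ind j x y * (m j x)⁻¹ with hΦ
  -- pointwise estimate
  have claimA : ∀ x ∉ E, ∀ y ∉ E, ENNReal.ofReal |u x - u y| ^ p /
      (ENNReal.ofReal (dist x y ^ (s*p)) * μ (ball x (dist x y)))
      ≤ (2:ℝ≥0∞) ^ (p-1) * Φ x y := by
    intro x hx y hy
    by_cases hd : 0 < dist x y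
    · obtain ⟨k, hk1, hk2⟩ := my_exists_k hd
      have hEk := hE k x hx y hy hk1 hk2
      have num : ENNReal.ofReal |u x - u y| ^ p ≤ ENNReal.ofReal (dist x y ^ (s*p))
          * ((2:ℝ≥0∞) ^ (p-1) * (g k x ^ p + g k y ^ p)) := by
        calc ENNReal.ofReal |u x - u y| ^ p
            ≤ (ENNReal.ofReal (dist x y ^ s) * (g k x + g k y)) ^ p :=
              ENNReal.rpow_le_rpow hEk hp0.le
          _ = ENNReal.ofReal (dist x y ^ (s*p)) * (g k x + g k y) ^ p := by
              rw [ENNReal.mul_rpow_of_nonneg _ _ hp0.le,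
                ENNReal.ofReal_rpow_of_nonneg (Real.rpow_nonneg hd.le s) hp0.le,
                ← Real.rpow_mul hd.le]
          _ ≤ ENNReal.ofReal (dist x y ^ (s*p)) * ((2:ℝ≥0∞) ^ (p-1) * (g k x ^ p + g k y ^ p)) :=
              mul_le_mul_right (ENNReal.rpow_add_le_mul_rpow_add_rpow _ _ hp) _
      have hdsp0 : ENNReal.ofReal (dist x y ^ (s*p)) ≠ 0 :=
        (ENNReal.ofReal_pos.mpr (Real.rpow_pos_of_pos hd _)).ne'
      calc ENNReal.ofReal |u x - u y| ^ p /
          (ENNReal.ofReal (dist x y ^ (s*p)) * μ (ball x (dist x y)))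
          ≤ (ENNReal.ofReal (dist x y ^ (s*p)) * ((2:ℝ≥0∞) ^ (p-1) * (g k x ^ p + g k y ^ p))) /
            (ENNReal.ofReal (dist x y ^ (s*p)) * μ (ball x (dist x y))) :=
            ENNReal.div_le_div_right num _
        _ = ((2:ℝ≥0∞) ^ (p-1) * (g k x ^ p + g k y ^ p)) / μ (ball x (dist x y)) :=
            ENNReal.mul_div_mul_left _ _ hdsp0 ENNReal.ofReal_ne_top
        _ ≤ ((2:ℝ≥0∞) ^ (p-1) * (g k x ^ p + g k y ^ p)) * (m k x)⁻¹ := by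
            rw [div_eq_mul_inv]
            exact mul_le_mul_right (ENNReal.inv_le_inv' (μ.mono (ball_subset_ball hk1))) _
        _ = (2:ℝ≥0∞) ^ (p-1) * ((g k x ^ p + g k y ^ p) * ind k x y * (m k x)⁻¹) := by
            rw [hind]
            simp only
            rw [if_pos ⟨hk1, hk2⟩]
            ring
        _ ≤ (2:ℝ≥0∞) ^ (p-1) * Φ x y := mul_le_mul_right (ENNReal.le_tsum k) _
    · have hd0 : dist x y = 0 := le_antisymm (not_lt.mp hd) dist_nonneg
      have hxy : x = y := dist_eq_zero.mp hd0
      rw [← hxy, sub_self, abs_zero, ENNReal.ofReal_zero, ENNReal.zero_rpow_of_pos hp0,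
        ENNReal.zero_div]
      exact zero_le
  -- measurability of the j-th term
  have hindm : ∀ j : ℤ, MeasurableSet {q : X × X |
      (2:ℝ) ^ (-j-1) ≤ dist q.1 q.2 ∧ dist q.1 q.2 < (2:ℝ) ^ (-j)} := by
    intro j
    have hc : Continuous fun q : X × X => dist q.1 q.2 := continuous_fst.dist continuous_snd
    exact (isClosed_le continuous_const hc).measurableSet.inter
      (isOpen_lt hc continuous_const).measurableSet
  have hindmy : ∀ j (x : X), Measurable fun y => ind j x y := by
    intro j x
    rw [hind]
    refine Measurable.ite ?_ measurable_const measurable_const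
    exact (hindm j).preimage (measurable_prodMk_left)
  have hindmq : ∀ j, Measurable fun q : X × X => ind j q.1 q.2 := by
    intro j
    rw [hind]
    exact Measurable.ite (hindm j) measurable_const measurable_const
  have hterm1q : ∀ j, Measurable fun q : X × X => g j q.1 ^ p * ind j q.1 q.2 * (m j q.1)⁻¹ :=
    fun j => (((hgpm j).comp measurable_fst).mul (hindmq j)).mul
      (((my_meas_ball _).comp measurable_fst).inv)
  have hterm2q : ∀ j, Measurable fun q : X × X => g j q.2 ^ p * ind j q.1 q.2 * (m j q.1)⁻¹ :=
    fun j => (((hgpm j).comp measurable_snd).mul (hindmq j)).mul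
      (((my_meas_ball _).comp measurable_fst).inv)
  have htermq : ∀ j, Measurable fun q : X × X =>
      (g j q.1 ^ p + g j q.2 ^ p) * ind j q.1 q.2 * (m j q.1)⁻¹ :=
    fun j => ((((hgpm j).comp measurable_fst).add ((hgpm j).comp measurable_snd)).mul
      (hindmq j)).mul (((my_meas_ball _).comp measurable_fst).inv)
  -- bound Part A
  have partA : ∀ j : ℤ, ∫⁻ x, ∫⁻ y, g j x ^ p * ind j x y * (m j x)⁻¹ ∂μ ∂μ
      ≤ D₂ * ∫⁻ x, g j x ^ p ∂μ := by
    intro j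
    have inner : ∀ x, ∫⁻ y, g j x ^ p * ind j x y * (m j x)⁻¹ ∂μ ≤ D₂ * g j x ^ p := by
      intro x
      have e1 : ∀ y, g j x ^ p * ind j x y * (m j x)⁻¹
          = (g j x ^ p * (m j x)⁻¹) * ind j x y := fun y => by ring
      simp_rw [e1]
      rw [lintegral_const_mul _ (hindmy j x)]
      have e2 : ∫⁻ y, ind j x y ∂μ ≤ μ (ball x ((2:ℝ) ^ (-j))) := by
        have e3 : (fun y => ind j x y) = ({y | (2:ℝ) ^ (-j-1) ≤ dist x y
            ∧ dist x y < (2:ℝ) ^ (-j)} : Set X).indicator 1 := by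
          funext y
          rw [hind, Set.indicator_apply]
          simp only [mem_setOf_eq, Pi.one_apply]
        rw [e3, lintegral_indicator_one]
        · refine μ.mono fun y hy => ?_
          exact mem_ball'.mpr hy.2
        · exact (hindm j).preimage measurable_prodMk_left
      calc g j x ^ p * (m j x)⁻¹ * ∫⁻ y, ind j x y ∂μ
          ≤ g j x ^ p * (m j x)⁻¹ * (D₂ * m j x) :=
            mul_le_mul_right (le_trans e2 (hdb2 x j)) _
        _ = g j x ^ p * D₂ * ((m j x)⁻¹ * m j x) := by ring
        _ = D₂ * g j x ^ p := by
            rw [ENNReal.inv_mul_cancel (hmpos j x).ne' (hmtop j x).ne, mul_one]; ring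
    calc ∫⁻ x, ∫⁻ y, g j x ^ p * ind j x y * (m j x)⁻¹ ∂μ ∂μ
        ≤ ∫⁻ x, D₂ * g j x ^ p ∂μ := lintegral_mono inner
      _ = D₂ * ∫⁻ x, g j x ^ p ∂μ := lintegral_const_mul' _ _ hD₂top
  -- bound Part B
  have partB : ∀ j : ℤ, ∫⁻ x, ∫⁻ y, g j y ^ p * ind j x y * (m j x)⁻¹ ∂μ ∂μ
      ≤ D₄ * D₂ * ∫⁻ y, g j y ^ p ∂μ := by
    intro j
    rw [lintegral_lintegral_swap (hterm2q j).aemeasurable]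
    have hmyx : ∀ y, Measurable fun x => ind j x y * (m j x)⁻¹ := by
      intro y
      refine Measurable.mul ?_ ((my_meas_ball (μ := μ) _).inv)
      rw [hind]
      refine Measurable.ite ?_ measurable_const measurable_const
      exact (hindm j).preimage (measurable_id.prodMk measurable_const)
    have inner : ∀ y, ∫⁻ x, ind j x y * (m j x)⁻¹ ∂μ ≤ D₄ * D₂ := by
      intro y
      have hb'pos := (hμ y _ (hrpos j)).1
      have hb'top := (hμ y _ (hrpos j)).2
      have pw : ∀ x, ind j x y * (m j x)⁻¹ ≤ (ball y ((2:ℝ) ^ (-j))).indicator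
          (fun _ => D₄ * (μ (ball y ((2:ℝ) ^ (-j-1))))⁻¹) x := by
        intro x
        by_cases hcond : (2:ℝ) ^ (-j-1) ≤ dist x y ∧ dist x y < (2:ℝ) ^ (-j)
        · have hxmem : x ∈ ball y ((2:ℝ) ^ (-j)) := mem_ball.mpr hcond.2
          rw [hind]
          simp only
          rw [if_pos hcond, one_mul, indicator_of_mem hxmem]
          have hsub : ball y ((2:ℝ) ^ (-j-1)) ⊆ ball x (4 * 2 ^ (-j-1)) := by
            intro z hz
            have hz1 : dist z y < 2 ^ (-j-1) := mem_ball.mp hz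
            have hz2 : dist z x ≤ dist z y + dist y x := dist_triangle _ _ _
            have hz3 : dist y x < (2:ℝ) ^ (-j) := by rw [dist_comm]; exact hcond.2
            rw [hzf j] at hz3
            exact mem_ball.mpr (by linarith [hrpos j])
          have hkey : μ (ball y ((2:ℝ) ^ (-j-1))) ≤ D₄ * m j x := by
            calc μ (ball y ((2:ℝ) ^ (-j-1))) ≤ μ (ball x (4 * 2 ^ (-j-1))) := μ.mono hsub
              _ ≤ D₄ * m j x := D x _ 4 (hrpos j) (by norm_num)
          exact my_inv_bound _ _ _ (hmpos j x).ne' (hmtop j x).ne hb'pos.ne' hb'top.ne hkey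
        · rw [hind]
          simp only
          rw [if_neg hcond, zero_mul]
          exact zero_le
      calc ∫⁻ x, ind j x y * (m j x)⁻¹ ∂μ
          ≤ ∫⁻ x, (ball y ((2:ℝ) ^ (-j))).indicator
            (fun _ => D₄ * (μ (ball y ((2:ℝ) ^ (-j-1))))⁻¹) x ∂μ := lintegral_mono pw
        _ = D₄ * (μ (ball y ((2:ℝ) ^ (-j-1))))⁻¹ * μ (ball y ((2:ℝ) ^ (-j))) :=
            lintegral_indicator_const measurableSet_ball _
        _ ≤ D₄ * (μ (ball y ((2:ℝ) ^ (-j-1))))⁻¹ * (D₂ * μ (ball y ((2:ℝ) ^ (-j-1)))) :=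
            mul_le_mul_right (hdb2 y j) _
        _ = D₄ * D₂ * ((μ (ball y ((2:ℝ) ^ (-j-1))))⁻¹ * μ (ball y ((2:ℝ) ^ (-j-1)))) := by ring
        _ = D₄ * D₂ := by rw [ENNReal.inv_mul_cancel hb'pos.ne' hb'top.ne, mul_one]
    have innerEq : ∀ y, ∫⁻ x, g j y ^ p * ind j x y * (m j x)⁻¹ ∂μ
        = g j y ^ p * ∫⁻ x, ind j x y * (m j x)⁻¹ ∂μ := by
      intro y
      rw [← lintegral_const_mul _ (hmyx y)]
      congr 1
      funext x
      ring
    calc ∫⁻ y, ∫⁻ x, g j y ^ p * ind j x y * (m j x)⁻¹ ∂μ ∂μ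
        = ∫⁻ y, g j y ^ p * ∫⁻ x, ind j x y * (m j x)⁻¹ ∂μ ∂μ := by simp_rw [innerEq]
      _ ≤ ∫⁻ y, g j y ^ p * (D₄ * D₂) ∂μ :=
          lintegral_mono fun y => mul_le_mul_right (inner y) _
      _ = D₄ * D₂ * ∫⁻ y, g j y ^ p ∂μ := by
          simp_rw [mul_comm (g j _ ^ p) (D₄ * D₂)]
          exact lintegral_const_mul' _ _ (ENNReal.mul_ne_top hD₄top hD₂top)
  -- assemble
  have hA : ∫⁻ x, ∫⁻ y, Φ x y ∂μ ∂μ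
      = ∑' j : ℤ, ∫⁻ x, ∫⁻ y, (g j x ^ p + g j y ^ p) * ind j x y * (m j x)⁻¹ ∂μ ∂μ := by
    have hy : ∀ x, ∫⁻ y, Φ x y ∂μ
        = ∑' j : ℤ, ∫⁻ y, (g j x ^ p + g j y ^ p) * ind j x y * (m j x)⁻¹ ∂μ := by
      intro x
      rw [hΦ]
      exact lintegral_tsum fun j => ((htermq j).comp measurable_prodMk_left).aemeasurable
    simp_rw [hy]
    exact lintegral_tsum fun j =>
      (Measurable.lintegral_prod_right' (f := fun q : X × X =>
        (g j q.1 ^ p + g j q.2 ^ p) * ind j q.1 q.2 * (m j q.1)⁻¹) (htermq j)).aemeasurable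
  have hsplitj : ∀ j : ℤ, ∫⁻ x, ∫⁻ y, (g j x ^ p + g j y ^ p) * ind j x y * (m j x)⁻¹ ∂μ ∂μ
      ≤ (D₂ + D₄ * D₂) * ∫⁻ x, g j x ^ p ∂μ := by
    intro j
    have e : ∀ x y, (g j x ^ p + g j y ^ p) * ind j x y * (m j x)⁻¹
        = g j x ^ p * ind j x y * (m j x)⁻¹ + g j y ^ p * ind j x y * (m j x)⁻¹ := by
      intro x y
      ring
    have e2 : ∀ x, ∫⁻ y, (g j x ^ p + g j y ^ p) * ind j x y * (m j x)⁻¹ ∂μ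
        = ∫⁻ y, g j x ^ p * ind j x y * (m j x)⁻¹ ∂μ
          + ∫⁻ y, g j y ^ p * ind j x y * (m j x)⁻¹ ∂μ := by
      intro x
      simp_rw [e]
      exact lintegral_add_left ((measurable_const.mul (hindmy j x)).mul measurable_const) _
    simp_rw [e2]
    rw [lintegral_add_left (Measurable.lintegral_prod_right' (f := fun q : X × X =>
      g j q.1 ^ p * ind j q.1 q.2 * (m j q.1)⁻¹) (hterm1q j))]
    rw [add_mul]
    exact add_le_add (partA j) (partB j)
  have hΦbound : ∫⁻ x, ∫⁻ y, Φ x y ∂μ ∂μ ≤ (D₂ + D₄ * D₂) * ∫⁻ x, ∑' k : ℤ, g k x ^ p ∂μ := by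
    rw [hA, lintegral_tsum fun j => (hgpm j).aemeasurable, ← ENNReal.tsum_mul_left]
    exact ENNReal.tsum_le_tsum hsplitj
  -- final chain
  have hae : ∀ᵐ y ∂μ, y ∉ E := measure_eq_zero_iff_ae_notMem.mp hE0
  have main1 : BPnormP μ s p u ≤ ∫⁻ x, ∫⁻ y, (2:ℝ≥0∞) ^ (p-1) * Φ x y ∂μ ∂μ := by
    rw [BPnormP]
    refine lintegral_mono_ae ?_
    filter_upwards [hae] with x hx
    refine lintegral_mono_ae ?_
    filter_upwards [hae] with y hy
    exact claimA x hx y hy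
  have main2 : ∫⁻ x, ∫⁻ y, (2:ℝ≥0∞) ^ (p-1) * Φ x y ∂μ ∂μ
      = (2:ℝ≥0∞) ^ (p-1) * ∫⁻ x, ∫⁻ y, Φ x y ∂μ ∂μ := by
    have h1 : ∀ x, ∫⁻ y, (2:ℝ≥0∞) ^ (p-1) * Φ x y ∂μ
        = (2:ℝ≥0∞) ^ (p-1) * ∫⁻ y, Φ x y ∂μ := fun x => lintegral_const_mul' _ _ h2top
    simp_rw [h1]
    exact lintegral_const_mul' _ _ h2top
  calc BPnormP μ s p u ≤ ∫⁻ x, ∫⁻ y, (2:ℝ≥0∞) ^ (p-1) * Φ x y ∂μ ∂μ := main1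
    _ = (2:ℝ≥0∞) ^ (p-1) * ∫⁻ x, ∫⁻ y, Φ x y ∂μ ∂μ := main2
    _ ≤ (2:ℝ≥0∞) ^ (p-1) * ((D₂ + D₄ * D₂) * ∫⁻ x, ∑' k : ℤ, g k x ^ p ∂μ) :=
        mul_le_mul_right hΦbound _
    _ = ((2:ℝ≥0∞) ^ (p-1) * (D₂ + D₄ * D₂)) * ∫⁻ x, ∑' k : ℤ, g k x ^ p ∂μ := by ring


end BPHhelpers

open MeasureTheory ENNReal Metric Set in
/-- Proposition 4.1: on an RD-space, `Ḃ^s_p(X) = Ṁ^s_{p,p}(X)` with equivalent norms,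
for `s ∈ (0,∞)` and `p ∈ [1,∞)`. -/
theorem bourdonPajot_eq_hajlaszBesov {X : Type*} [MetricSpace X] [MeasurableSpace X]
    [BorelSpace X] (μ : Measure X) (C₁ C₂ : ℝ≥0∞) (κ n : ℝ)
    (hC₁0 : 0 < C₁) (hC₁1 : C₁ ≤ 1) (hC₂1 : 1 ≤ C₂) (hC₂ : C₂ ≠ ∞)
    (hκ0 : 0 < κ) (hκn : κ ≤ n)
    (hRD : ∀ (x : X) (r lam : ℝ), 0 < r →
      ENNReal.ofReal r < 2 * EMetric.diam (Set.univ : Set X) → 1 ≤ lam →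
      ENNReal.ofReal (lam * r) < 2 * EMetric.diam (Set.univ : Set X) →
      C₁ * ENNReal.ofReal (lam ^ κ) * μ (Metric.ball x r) ≤ μ (Metric.ball x (lam * r)) ∧
      μ (Metric.ball x (lam * r)) ≤ C₂ * ENNReal.ofReal (lam ^ n) * μ (Metric.ball x r))
    (hμ : ∀ (x : X) (r : ℝ), 0 < r → 0 < μ (Metric.ball x r) ∧ μ (Metric.ball x r) < ∞)
    (s p : ℝ) (hs : 0 < s) (hp : 1 ≤ p) :
    ∃ C : ℝ≥0∞, 0 < C ∧ C ≠ ∞ ∧ ∀ u : X → ℝ, Measurable u →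
      MnormP μ s p u ≤ C * BPnormP μ s p u ∧ BPnormP μ s p u ≤ C * MnormP μ s p u := by
  classical
  have hn : 0 < n := lt_of_lt_of_le hκ0 hκn
  rcases isEmpty_or_nonempty X with hX | hX
  · refine ⟨1, one_pos, one_ne_top, fun u hu => ?_⟩
    have hμ0 : μ = 0 := μ.eq_zero_of_isEmpty
    have hBP : BPnormP μ s p u = 0 := by
      rw [BPnormP, hμ0, lintegral_zero_measure]
    have hM0 : MnormP μ s p u = 0 := by
      have hmem : IsFracHajlaszGradient μ s u (fun _ _ => 0) := by
        refine ⟨fun k => measurable_const, ∅, measure_empty, ?_⟩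
        intro k x hx
        exact (IsEmpty.false x).elim
      refine le_antisymm ?_ (zero_le)
      refine le_trans (iInf₂_le _ hmem) ?_
      rw [hμ0, lintegral_zero_measure]
    rw [hBP, hM0]
    simp
  · have hDub : ∀ (x : X) (r lam : ℝ), 0 < r → 1 ≤ lam →
        μ (Metric.ball x (lam * r)) ≤ C₂ * ENNReal.ofReal (lam ^ n) * μ (Metric.ball x r) :=
      my_doubling μ C₂ n hC₂1 hn (fun x r lam h1 h2 h3 h4 => (hRD x r lam h1 h2 h3 h4).2)
    have htb : ∀ (x₀ : X) (R : ℝ), 0 < R → TotallyBounded (Metric.ball x₀ R) :=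
      fun x₀ R hR => my_totallyBounded μ C₂ n hC₂ hn hDub hμ x₀ R hR
    haveI hsc : SecondCountableTopology X := my_secondCountable μ C₂ n hC₂ hn hDub hμ htb
    haveI hsf : SigmaFinite μ := my_sigmaFinite hμ
    set K₁ : ℝ≥0∞ := (2:ℝ≥0∞) ^ (p-1) * (C₂ * ENNReal.ofReal ((2:ℝ) ^ n)
      + C₂ * ENNReal.ofReal ((4:ℝ) ^ n) * (C₂ * ENNReal.ofReal ((2:ℝ) ^ n))) with hK₁
    set K₂ : ℝ≥0∞ := (2:ℝ≥0∞) ^ (p-1) * (C₂ * ENNReal.ofReal ((8:ℝ) ^ n))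
      * (ENNReal.ofReal ((4:ℝ) ^ (s*p)) * (1 - ENNReal.ofReal ((2:ℝ) ^ (-(s*p))))⁻¹) with hK₂
    have hp0 : (0:ℝ) < p := lt_of_lt_of_le one_pos hp
    have h2top : ((2:ℝ≥0∞) ^ (p-1)) ≠ ∞ :=
      (ENNReal.rpow_lt_top_of_nonneg (by linarith) (by norm_num)).ne
    have h20 : ((2:ℝ≥0∞) ^ (p-1)) ≠ 0 :=
      (ENNReal.rpow_pos (by norm_num) (by norm_num)).ne'
    have hK₁top : K₁ ≠ ∞ := by
      rw [hK₁]
      refine ENNReal.mul_ne_top h2top (ENNReal.add_ne_top.mpr ⟨?_, ?_⟩)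
      · exact ENNReal.mul_ne_top hC₂ ENNReal.ofReal_ne_top
      · exact ENNReal.mul_ne_top (ENNReal.mul_ne_top hC₂ ENNReal.ofReal_ne_top)
          (ENNReal.mul_ne_top hC₂ ENNReal.ofReal_ne_top)
    have hK₂top : K₂ ≠ ∞ := by
      rw [hK₂]
      refine ENNReal.mul_ne_top (ENNReal.mul_ne_top h2top
        (ENNReal.mul_ne_top hC₂ ENNReal.ofReal_ne_top)) ?_
      refine ENNReal.mul_ne_top ENNReal.ofReal_ne_top (ENNReal.inv_ne_top.mpr ?_)
      intro h0
      have h1 : ENNReal.ofReal ((2:ℝ) ^ (-(s*p))) < 1 := by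
        rw [← ENNReal.ofReal_one]
        refine (ENNReal.ofReal_lt_ofReal_iff one_pos).mpr ?_
        exact Real.rpow_lt_one_of_one_lt_of_neg one_lt_two
          (by nlinarith [mul_pos hs hp0])
      exact (tsub_pos_of_lt h1).ne' h0
    have hK₁0 : K₁ ≠ 0 := by
      rw [hK₁]
      refine mul_ne_zero h20 ?_
      intro h0
      have h1 : (0:ℝ≥0∞) < C₂ * ENNReal.ofReal ((2:ℝ) ^ n) := by
        refine ENNReal.mul_pos (by
          intro hh
          rw [hh] at hC₂1
          exact (not_le.mpr zero_lt_one) hC₂1) ?_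
        exact (ENNReal.ofReal_pos.mpr (Real.rpow_pos_of_pos (by norm_num) n)).ne'
      have h2 : (0:ℝ≥0∞) < C₂ * ENNReal.ofReal ((2:ℝ) ^ n)
          + C₂ * ENNReal.ofReal ((4:ℝ) ^ n) * (C₂ * ENNReal.ofReal ((2:ℝ) ^ n)) :=
        lt_of_lt_of_le h1 le_self_add
      exact h2.ne' h0
    refine ⟨K₁ + K₂ + 1, lt_of_lt_of_le zero_lt_one le_add_self, ?_, fun u hu => ⟨?_, ?_⟩⟩
    · exact ENNReal.add_ne_top.mpr ⟨ENNReal.add_ne_top.mpr ⟨hK₁top, hK₂top⟩, one_ne_top⟩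
    · -- MnormP ≤ C * BPnormP
      refine le_trans (my_direction2 μ C₂ n hC₂1 hC₂ hn hDub hμ s p hs hp u hu) ?_
      refine mul_le_mul_left ?_ _
      rw [← hK₂]
      exact le_trans le_add_self le_self_add
    · -- BPnormP ≤ C * MnormP
      by_cases hM : MnormP μ s p u = ∞
      · rw [hM, ENNReal.mul_top (lt_of_lt_of_le zero_lt_one le_add_self).ne']
        exact le_top
      · have hle : K₁⁻¹ * BPnormP μ s p u ≤ MnormP μ s p u := by
          rw [MnormP]
          refine le_iInf₂ fun g hg => ?_
          have hd1 := my_direction1 μ C₂ n hC₂ hn hDub hμ s p hs hp u g hg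
          calc K₁⁻¹ * BPnormP μ s p u
              ≤ K₁⁻¹ * (K₁ * ∫⁻ x, ∑' k : ℤ, g k x ^ p ∂μ) := mul_le_mul_right hd1 _
            _ = ∫⁻ x, ∑' k : ℤ, g k x ^ p ∂μ := by
                rw [← mul_assoc, ENNReal.inv_mul_cancel hK₁0 hK₁top, one_mul]
        have hBP : BPnormP μ s p u ≤ K₁ * MnormP μ s p u := by
          have he : K₁ * (K₁⁻¹ * BPnormP μ s p u) = BPnormP μ s p u := by
            rw [← mul_assoc, ENNReal.mul_inv_cancel hK₁0 hK₁top, one_mul]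
          rw [← he]
          exact mul_le_mul_right hle _
        refine le_trans hBP (mul_le_mul_left ?_ _)
        exact le_trans le_self_add le_self_add
end

section
/- If u ∈ Ṁ^{s,p}(X) on an Ahlfors n-regular metric measure space with 0 < s < n and p = n/s, then outside a set of Hausdorff dimension zero, the limit ũ(x) = lim_{r→0} ⨍_{B(x,r)} u(z) dμ(z) exists (Lebesgue point theorem for Hajłasz–Sobolev functions). -/
open MeasureTheory ENNReal

/-- `g` is an `s`-gradient of `u` (Hajłasz). -/
def IsHajlaszGradient {X : Type*} [MetricSpace X] [MeasurableSpace X]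
    (μ : Measure X) (s : ℝ) (u : X → ℝ) (g : X → ℝ≥0∞) : Prop :=
  Measurable g ∧
  ∃ E : Set X, μ E = 0 ∧ ∀ x ∉ E, ∀ y ∉ E,
    ENNReal.ofReal |u x - u y| ≤ ENNReal.ofReal (dist x y ^ s) * (g x + g y)

section Aux

open Filter Set Metric


lemma emdiam_closedBall {X : Type*} [PseudoMetricSpace X] (b : X) (R : ℝ) :
    EMetric.diam (Metric.closedBall b R) ≤ ENNReal.ofReal (2 * R) := by
  apply EMetric.diam_le
  intro p hp q hq
  rw [edist_dist]
  apply ENNReal.ofReal_le_ofReal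
  calc dist p q ≤ dist p b + dist q b := dist_triangle_right p q b
  _ ≤ R + R := add_le_add hp hq
  _ = 2 * R := by ring

lemma frostman_aux {X : Type*} [MetricSpace X] [MeasurableSpace X] [BorelSpace X]
    (ν : Measure X) (hν : ν Set.univ ≠ ∞) (d : ℝ) (hd : 0 < d) :
    μH[d] {x : X | ∀ δ : ℝ, 0 < δ → ∃ r : ℝ, 0 < r ∧ r ≤ δ ∧
      ENNReal.ofReal (r ^ d) < ν (Metric.closedBall x r)} ≠ ∞ := by
  classical
  set F := {x : X | ∀ δ : ℝ, 0 < δ → ∃ r : ℝ, 0 < r ∧ r ≤ δ ∧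
      ENNReal.ofReal (r ^ d) < ν (Metric.closedBall x r)} with hF
  have key : ∀ m : ℕ, ∃ (u : Set X) (rad : X → ℝ), u.Countable ∧
      (∀ b ∈ u, 0 < rad b ∧ rad b ≤ (1:ℝ)/(m+1) ∧
        ENNReal.ofReal (rad b ^ d) < ν (closedBall b (rad b))) ∧
      (u.PairwiseDisjoint fun b => closedBall b (rad b)) ∧
      (F ⊆ ⋃ b ∈ u, closedBall b (4 * rad b)) := by
    intro m
    have hm : (0:ℝ) < 1/(m+1) := by positivity
    have hsel : ∀ x, x ∈ F → ∃ r : ℝ, 0 < r ∧ r ≤ 1/(m+1) ∧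
        ENNReal.ofReal (r ^ d) < ν (closedBall x r) := fun x hx => hx _ hm
    set rad : X → ℝ := fun x => if hx : x ∈ F then (hsel x hx).choose else 1 with hrad
    have hrad1 : ∀ x ∈ F, 0 < rad x ∧ rad x ≤ 1/(m+1) ∧
        ENNReal.ofReal (rad x ^ d) < ν (closedBall x (rad x)) := by
      intro x hx
      simp only [hrad, dif_pos hx]
      exact (hsel x hx).choose_spec
    obtain ⟨u, huF, hdisj, hcov⟩ :=
      Vitali.exists_disjoint_subfamily_covering_enlargement_closedBall
        F id rad (1/(m+1)) (fun a ha => (hrad1 a ha).2.1) 4 (by norm_num)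
    refine ⟨u, rad, ?_, fun b hb => hrad1 b (huF hb), hdisj, ?_⟩
    · have hcnt : Set.Countable
          {b : X | 0 < ν (if b ∈ u then closedBall b (rad b) else ∅)} := by
        apply MeasureTheory.Measure.countable_meas_pos_of_disjoint_of_meas_iUnion_ne_top ν
        · intro b
          split
          · exact measurableSet_closedBall
          · exact MeasurableSet.empty
        · intro i j hij
          simp only [Function.onFun]
          split_ifs with hi hj hj
          · exact hdisj hi hj hij
          · simp
          · simp
          · simp
        · exact ne_top_of_le_ne_top hν (measure_mono (Set.subset_univ _))
      apply hcnt.mono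
      intro b hb
      have h1 := hrad1 b (huF hb)
      simp only [Set.mem_setOf_eq, if_pos hb]
      exact lt_of_le_of_lt zero_le h1.2.2
    · intro a ha
      obtain ⟨b, hb, hsub⟩ := hcov a ha
      have h1 := hrad1 a ha
      exact Set.mem_biUnion hb (hsub (Metric.mem_closedBall_self h1.1.le))
  choose u rad hcount hprop hdisj hcov using key
  have hsum : ∀ m : ℕ, ∑' (b : ↥(u m)), EMetric.diam (closedBall (b : X) (4 * rad m b)) ^ d
      ≤ ENNReal.ofReal (8 ^ d) * ν Set.univ := by
    intro m
    have := (hcount m).to_subtype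
    calc ∑' (b : ↥(u m)), EMetric.diam (closedBall (b : X) (4 * rad m b)) ^ d
        ≤ ∑' (b : ↥(u m)), ENNReal.ofReal (8 ^ d) * ν (closedBall (b : X) (rad m b)) := by
          apply ENNReal.tsum_le_tsum
          intro b
          obtain ⟨hr0, hrle, hrν⟩ := hprop m b b.2
          calc EMetric.diam (closedBall (b : X) (4 * rad m b)) ^ d
              ≤ ENNReal.ofReal (2 * (4 * rad m b)) ^ d :=
                ENNReal.rpow_le_rpow (emdiam_closedBall _ _) hd.le
            _ = ENNReal.ofReal ((8 * rad m b) ^ d) := by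
                rw [show (2 : ℝ) * (4 * rad m b) = 8 * rad m b by ring,
                  ← ENNReal.ofReal_rpow_of_pos (by positivity)]
            _ = ENNReal.ofReal (8 ^ d) * ENNReal.ofReal (rad m b ^ d) := by
                rw [Real.mul_rpow (by norm_num) hr0.le, ENNReal.ofReal_mul (by positivity)]
            _ ≤ ENNReal.ofReal (8 ^ d) * ν (closedBall (b : X) (rad m b)) :=
                mul_le_mul_right hrν.le _
      _ = ENNReal.ofReal (8 ^ d) * ∑' (b : ↥(u m)), ν (closedBall (b : X) (rad m b)) :=
          ENNReal.tsum_mul_left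
      _ ≤ ENNReal.ofReal (8 ^ d) * ν Set.univ := by
          apply mul_le_mul_right
          apply tsum_measure_le_measure_univ
          · intro b; exact measurableSet_closedBall.nullMeasurableSet
          · intro i j hij
            exact ((hdisj m) i.2 j.2 (fun h => hij (Subtype.ext h))).aedisjoint
  have hle : μH[d] F ≤ liminf (fun m : ℕ =>
      ∑' (b : ↥(u m)), EMetric.diam (closedBall (b : X) (4 * rad m b)) ^ d) atTop := by
    have hct : ∀ n : ℕ, Countable ↥(u n) := fun n => (hcount n).to_subtype
    apply MeasureTheory.Measure.hausdorffMeasure_le_liminf_tsum d F (fun m : ℕ => ENNReal.ofReal (8 * (1/(m+1))))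
    · rw [show (0:ℝ≥0∞) = ENNReal.ofReal 0 by simp]
      apply ENNReal.tendsto_ofReal
      have := tendsto_one_div_add_atTop_nhds_zero_nat (𝕜 := ℝ)
      simpa using this.const_mul 8
    · apply Filter.Eventually.of_forall
      intro m b
      obtain ⟨hr0, hrle, _⟩ := hprop m b b.2
      refine le_trans (emdiam_closedBall _ _) (ENNReal.ofReal_le_ofReal ?_)
      nlinarith
    · apply Filter.Eventually.of_forall
      intro m
      intro a ha
      obtain ⟨b, hb, hab⟩ := Set.mem_iUnion₂.mp (hcov m ha)
      exact Set.mem_iUnion.mpr ⟨⟨b, hb⟩, hab⟩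
  have hfin : liminf (fun m : ℕ =>
      ∑' (b : ↥(u m)), EMetric.diam (closedBall (b : X) (4 * rad m b)) ^ d) atTop
      ≤ ENNReal.ofReal (8 ^ d) * ν Set.univ := by
    refine le_trans (Filter.liminf_le_liminf (Filter.Eventually.of_forall hsum)) ?_
    simp [Filter.liminf_const]
  exact ne_top_of_le_ne_top (ENNReal.mul_ne_top ENNReal.ofReal_ne_top hν) (hle.trans hfin)


section AvgHelpers
variable {X : Type*} [MeasurableSpace X] {μ : Measure X} {B : Set X}

lemma setAvg_abs_le (f : X → ℝ) :
    |⨍ w in B, f w ∂μ| ≤ ⨍ w in B, |f w| ∂μ := by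
  rw [setAverage_eq, setAverage_eq, measureReal_def, smul_eq_mul, smul_eq_mul, abs_mul,
    abs_of_nonneg (inv_nonneg.mpr ENNReal.toReal_nonneg)]
  refine mul_le_mul_of_nonneg_left ?_ (inv_nonneg.mpr ENNReal.toReal_nonneg)
  simpa [Real.norm_eq_abs] using norm_integral_le_integral_norm (μ := μ.restrict B) f

lemma setAvg_mono (f h : X → ℝ) (hf : IntegrableOn f B μ) (hh : IntegrableOn h B μ)
    (hle : ∀ᵐ w ∂(μ.restrict B), f w ≤ h w) :
    ⨍ w in B, f w ∂μ ≤ ⨍ w in B, h w ∂μ := by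
  rw [setAverage_eq, setAverage_eq, smul_eq_mul, smul_eq_mul]
  exact mul_le_mul_of_nonneg_left (integral_mono_ae hf hh hle)
    (inv_nonneg.mpr ENNReal.toReal_nonneg)

lemma setAvg_sub_const (h0 : μ B ≠ 0) (h1 : μ B ≠ ∞) (f : X → ℝ)
    (hf : IntegrableOn f B μ) (c : ℝ) :
    ⨍ w in B, (f w - c) ∂μ = (⨍ w in B, f w ∂μ) - c := by
  have hm : (μ B).toReal ≠ 0 := (ENNReal.toReal_pos h0 h1).ne'
  rw [setAverage_eq, setAverage_eq, smul_eq_mul, smul_eq_mul,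
    integral_sub hf (integrableOn_const h1), setIntegral_const,
    measureReal_def, smul_eq_mul, mul_sub, inv_mul_cancel_left₀ hm]

lemma setAvg_const_sub (h0 : μ B ≠ 0) (h1 : μ B ≠ ∞) (f : X → ℝ)
    (hf : IntegrableOn f B μ) (c : ℝ) :
    ⨍ w in B, (c - f w) ∂μ = c - ⨍ w in B, f w ∂μ := by
  have hm : (μ B).toReal ≠ 0 := (ENNReal.toReal_pos h0 h1).ne'
  rw [setAverage_eq, setAverage_eq, smul_eq_mul, smul_eq_mul,
    integral_sub (μ := μ.restrict B) (f := fun _ => c) (integrableOn_const h1) hf, setIntegral_const,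
    measureReal_def, smul_eq_mul, mul_sub, inv_mul_cancel_left₀ hm]

lemma setAvg_mul_add (h0 : μ B ≠ 0) (h1 : μ B ≠ ∞) (f : X → ℝ)
    (hf : IntegrableOn f B μ) (c b : ℝ) :
    ⨍ w in B, c * (f w + b) ∂μ = c * ((⨍ w in B, f w ∂μ) + b) := by
  have hm : (μ B).toReal ≠ 0 := (ENNReal.toReal_pos h0 h1).ne'
  have hre : (fun w => c * (f w + b)) = fun w => c * f w + c * b := by
    funext w; ring
  rw [setAverage_eq, setAverage_eq, smul_eq_mul, smul_eq_mul, hre,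
    integral_add (hf.const_mul c) (integrableOn_const h1),
    setIntegral_const, measureReal_def, smul_eq_mul, MeasureTheory.integral_const_mul, mul_add,
    inv_mul_cancel_left₀ hm]
  ring

end AvgHelpers

lemma conv_aux {X : Type*} [MetricSpace X] [MeasurableSpace X] [BorelSpace X]
    (μ : Measure X) (n s : ℝ) (hn : 0 < n) (hs : 0 < s) (hsn : s < n)
    (c₁ c₂ : ℝ≥0∞) (hc₁ : 0 < c₁) (hc₂ : c₂ ≠ ∞)
    (hreg : ∀ (x : X) (r : ℝ), 0 < r →
      ENNReal.ofReal r < EMetric.diam (Set.univ : Set X) →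
      c₁ * ENNReal.ofReal (r ^ n) ≤ μ (Metric.ball x r) ∧
      μ (Metric.ball x r) ≤ c₂ * ENNReal.ofReal (r ^ n))
    (u : X → ℝ) (hu : Measurable u) (g : X → ℝ≥0∞) (hgmeas : Measurable g)
    (N : Set X) (hN : μ N = 0)
    (hNineq : ∀ x ∉ N, ∀ y ∉ N,
      ENNReal.ofReal |u x - u y| ≤ ENNReal.ofReal (dist x y ^ s) * (g x + g y))
    (hgL : (∫⁻ z, g z ^ (n / s) ∂μ) ≠ ∞)
    (hdiam : EMetric.diam (Set.univ : Set X) ≠ 0)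
    (ε : ℝ) (hε : 0 < ε) (x : X) (δ₀ : ℝ) (hδ₀ : 0 < δ₀)
    (hx : ∀ r : ℝ, 0 < r → r ≤ δ₀ →
      (∫⁻ z in Metric.closedBall x r, g z ^ (n / s) ∂μ) ≤ ENNReal.ofReal (r ^ ε)) :
    ∃ L : ℝ, Filter.Tendsto (fun r => ⨍ z in Metric.ball x r, u z ∂μ)
      (nhdsWithin 0 (Set.Ioi 0)) (nhds L) := by
  classical
  set p := n / s with hp_def
  have hp1 : 1 < p := (one_lt_div hs).mpr hsn
  have hp0 : 0 < p := lt_trans one_pos hp1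
  have hinvp : 1 / p = s / n := by rw [hp_def, one_div_div]
  set q := Real.conjExponent p with hq_def
  have hpq : p.HolderConjugate q := Real.HolderConjugate.conjExponent hp1
  have hq0 : 0 < q := lt_trans one_pos hpq.symm.lt
  set e := ε / p with he_def
  have he : 0 < e := div_pos hε hp0
  -- a positive real scale below the diameter
  have hdiam' : (0:ℝ≥0∞) < EMetric.diam (Set.univ : Set X) := pos_iff_ne_zero.mpr hdiam
  obtain ⟨c, hc0, hcD⟩ := exists_between hdiam'
  have hcne : c ≠ ∞ := ne_top_of_lt hcD
  set δ' := c.toReal with hδ'_def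
  have hδ'0 : 0 < δ' := ENNReal.toReal_pos hc0.ne' hcne
  have hδ'D : ∀ r : ℝ, r < δ' → ENNReal.ofReal r < EMetric.diam (Set.univ : Set X) := by
    intro r hr
    calc ENNReal.ofReal r < ENNReal.ofReal δ' := (ENNReal.ofReal_lt_ofReal_iff hδ'0).mpr hr
    _ = c := ENNReal.ofReal_toReal hcne
    _ < _ := hcD
  set δ₁ := min δ' δ₀ with hδ₁_def
  have hδ₁0 : 0 < δ₁ := lt_min hδ'0 hδ₀
  -- the exceptional null set
  have hgfin : ∀ᵐ z ∂μ, g z < ∞ := by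
    have h1 : ∀ᵐ z ∂μ, g z ^ p < ∞ := ae_lt_top (hgmeas.pow_const p) hgL
    filter_upwards [h1] with z hz
    by_contra hc'
    push_neg at hc'
    rw [top_le_iff.mp hc'] at hz
    simp [ENNReal.top_rpow_of_pos hp0] at hz
  set bad := N ∪ {z : X | ¬ g z < ∞} with hbad_def
  have hbadnull : μ bad = 0 := measure_union_null hN (by simpa [ae_iff] using hgfin)
  have hbadae : ∀ᵐ z ∂μ, z ∉ bad := measure_eq_zero_iff_ae_notMem.mp hbadnull
  set g' : X → ℝ := fun z => (g z).toReal with hg'_def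
  have hg'nonneg : ∀ z, 0 ≤ g' z := fun z => ENNReal.toReal_nonneg
  have hg'meas : Measurable g' := hgmeas.ennreal_toReal
  have hptwise : ∀ z, z ∉ bad → ∀ w, w ∉ bad →
      |u z - u w| ≤ dist z w ^ s * (g' z + g' w) := by
    intro z hz w hw
    simp only [hbad_def, Set.mem_union, Set.mem_setOf_eq, not_or, not_not] at hz hw
    have h := hNineq z hz.1 w hw.1
    have hfin : ENNReal.ofReal (dist z w ^ s) * (g z + g w) ≠ ∞ :=
      ENNReal.mul_ne_top ENNReal.ofReal_ne_top (ENNReal.add_ne_top.mpr ⟨hz.2.ne, hw.2.ne⟩)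
    have h' := ENNReal.toReal_mono hfin h
    rwa [ENNReal.toReal_ofReal (abs_nonneg _), ENNReal.toReal_mul,
      ENNReal.toReal_ofReal (Real.rpow_nonneg dist_nonneg s),
      ENNReal.toReal_add hz.2.ne hw.2.ne] at h'
  -- ball measure facts
  have hm_lb : ∀ r : ℝ, 0 < r → r < δ₁ →
      c₁ * ENNReal.ofReal (r ^ n) ≤ μ (Metric.ball x r) := fun r hr0 hr1 =>
    (hreg x r hr0 (hδ'D r (lt_of_lt_of_le hr1 (min_le_left _ _)))).1
  have hm0 : ∀ r : ℝ, 0 < r → r < δ₁ → μ (Metric.ball x r) ≠ 0 := by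
    intro r hr0 hr1
    have hpos : (0:ℝ≥0∞) < c₁ * ENNReal.ofReal (r ^ n) :=
      ENNReal.mul_pos hc₁.ne' (by simp [ENNReal.ofReal_pos, Real.rpow_pos_of_pos hr0])
    exact (lt_of_lt_of_le hpos (hm_lb r hr0 hr1)).ne'
  have hmfin : ∀ r : ℝ, 0 < r → r < δ₁ → μ (Metric.ball x r) ≠ ∞ := by
    intro r hr0 hr1
    have h := (hreg x r hr0 (hδ'D r (lt_of_lt_of_le hr1 (min_le_left _ _)))).2
    exact ne_top_of_le_ne_top (ENNReal.mul_ne_top hc₂ ENNReal.ofReal_ne_top) h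
  have hNp_le : ∀ r : ℝ, 0 < r → r < δ₁ →
      (∫⁻ z in Metric.ball x r, g z ^ p ∂μ) ≤ ENNReal.ofReal (r ^ ε) := by
    intro r hr0 hr1
    exact le_trans (lintegral_mono_set Metric.ball_subset_closedBall)
      (hx r hr0 (le_of_lt (lt_of_lt_of_le hr1 (min_le_right _ _))))
  have hHolder : ∀ r : ℝ, 0 < r → r < δ₁ →
      (∫⁻ z in Metric.ball x r, g z ∂μ) ≤
        (∫⁻ z in Metric.ball x r, g z ^ p ∂μ) ^ (1/p) * (μ (Metric.ball x r)) ^ (1/q) := by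
    intro r hr0 hr1
    have h := ENNReal.lintegral_mul_le_Lp_mul_Lq (μ.restrict (Metric.ball x r)) hpq
      hgmeas.aemeasurable (aemeasurable_const (b := (1:ℝ≥0∞)))
    simpa [ENNReal.one_rpow, MeasureTheory.lintegral_one, Measure.restrict_apply_univ] using h
  have hIfin : ∀ r : ℝ, 0 < r → r < δ₁ → (∫⁻ z in Metric.ball x r, g z ∂μ) ≠ ∞ := by
    intro r hr0 hr1
    refine ne_top_of_le_ne_top ?_ (hHolder r hr0 hr1)
    apply ENNReal.mul_ne_top
    · exact ENNReal.rpow_ne_top_of_nonneg (by positivity)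
        (ne_top_of_le_ne_top hgL (setLIntegral_le_lintegral _ _))
    · exact ENNReal.rpow_ne_top_of_nonneg (by positivity) (hmfin r hr0 hr1)
  have hkey : ∀ r : ℝ, 0 < r → r < δ₁ →
      ENNReal.ofReal (r ^ s) * ((μ (Metric.ball x r))⁻¹ * ∫⁻ z in Metric.ball x r, g z ∂μ)
        ≤ (c₁ ^ (1/p))⁻¹ * ENNReal.ofReal (r ^ e) := by
    intro r hr0 hr1
    set m := μ (Metric.ball x r) with hm_def
    set I := ∫⁻ z in Metric.ball x r, g z ∂μ with hI_def
    set Np := ∫⁻ z in Metric.ball x r, g z ^ p ∂μ with hNp_def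
    have hm0' := hm0 r hr0 hr1
    have hmf := hmfin r hr0 hr1
    have h1 : m⁻¹ * I ≤ m⁻¹ * (Np ^ (1/p) * m ^ (1/q)) :=
      mul_le_mul_right (hHolder r hr0 hr1) _
    have hexp : (-1 : ℝ) + 1/q = -(1/p) := by
      have hconj := hpq.inv_add_inv_eq_one
      rw [← one_div, ← one_div] at hconj
      linarith
    have hmexp : m⁻¹ * m ^ (1/q) = m ^ (-(1/p)) := by
      rw [← ENNReal.rpow_neg_one, ← ENNReal.rpow_add _ _ hm0' hmf, hexp]
    have h2 : m⁻¹ * (Np ^ (1/p) * m ^ (1/q)) = m ^ (-(1/p)) * Np ^ (1/p) := by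
      rw [← hmexp]; ring
    have h3 : m ^ (-(1/p)) ≤ (c₁ * ENNReal.ofReal (r^n)) ^ (-(1/p)) := by
      rw [ENNReal.rpow_neg, ENNReal.rpow_neg]
      exact ENNReal.inv_le_inv' (ENNReal.rpow_le_rpow (hm_lb r hr0 hr1) (by positivity))
    have hofs0 : ENNReal.ofReal (r ^ s) ≠ 0 := by
      simp only [ne_eq, ENNReal.ofReal_eq_zero, not_le]
      exact Real.rpow_pos_of_pos hr0 s
    have hns : (r ^ n) ^ (1/p) = r ^ s := by
      rw [← Real.rpow_mul hr0.le]
      congr 1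
      rw [hinvp]
      field_simp
    have h4 : (c₁ * ENNReal.ofReal (r^n)) ^ (-(1/p)) =
        (c₁ ^ (1/p))⁻¹ * (ENNReal.ofReal (r^s))⁻¹ := by
      rw [ENNReal.rpow_neg, ENNReal.mul_rpow_of_nonneg _ _ (by positivity),
        ENNReal.ofReal_rpow_of_pos (Real.rpow_pos_of_pos hr0 n), hns,
        ENNReal.mul_inv (Or.inr ENNReal.ofReal_ne_top) (Or.inr hofs0)]
    have h5 : Np ^ (1/p) ≤ ENNReal.ofReal (r ^ e) := by
      calc Np ^ (1/p) ≤ (ENNReal.ofReal (r ^ ε)) ^ (1/p) :=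
            ENNReal.rpow_le_rpow (hNp_le r hr0 hr1) (by positivity)
      _ = ENNReal.ofReal ((r ^ ε) ^ (1/p)) :=
            ENNReal.ofReal_rpow_of_pos (Real.rpow_pos_of_pos hr0 ε)
      _ = ENNReal.ofReal (r ^ e) := by
            rw [← Real.rpow_mul hr0.le]
            congr 1
            rw [he_def]
            ring
    calc ENNReal.ofReal (r^s) * (m⁻¹ * I)
        ≤ ENNReal.ofReal (r^s) * (m ^ (-(1/p)) * Np ^ (1/p)) := by
          rw [← h2]; exact mul_le_mul_right h1 _
    _ ≤ ENNReal.ofReal (r^s) * (((c₁ ^ (1/p))⁻¹ * (ENNReal.ofReal (r^s))⁻¹) * Np ^ (1/p)) := by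
          rw [← h4]; exact mul_le_mul_right (mul_le_mul_left h3 _) _
    _ = (ENNReal.ofReal (r^s) * (ENNReal.ofReal (r^s))⁻¹) * ((c₁ ^ (1/p))⁻¹ * Np ^ (1/p)) := by
          ring
    _ = (c₁ ^ (1/p))⁻¹ * Np ^ (1/p) := by
          rw [ENNReal.mul_inv_cancel hofs0 ENNReal.ofReal_ne_top, one_mul]
    _ ≤ (c₁ ^ (1/p))⁻¹ * ENNReal.ofReal (r ^ e) := mul_le_mul_right h5 _
  set Cen := (c₁ ^ (1/p))⁻¹ with hCen_def
  have hCenfin : Cen ≠ ∞ := by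
    rw [hCen_def, ENNReal.inv_ne_top]
    intro hzero
    rw [ENNReal.rpow_eq_zero_iff] at hzero
    rcases hzero with ⟨h0, _⟩ | ⟨_, h0⟩
    · exact hc₁.ne' h0
    · have : (0:ℝ) < 1/p := by positivity
      linarith
  set C := Cen.toReal with hC_def
  have hC0 : 0 ≤ C := ENNReal.toReal_nonneg
  have hg'int : ∀ r : ℝ, 0 < r → r < δ₁ → IntegrableOn g' (Metric.ball x r) μ :=
    fun r hr0 hr1 =>
      integrable_toReal_of_lintegral_ne_top hgmeas.aemeasurable.restrict (hIfin r hr0 hr1)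
  have havg_g' : ∀ r : ℝ, 0 < r → r < δ₁ →
      ⨍ z in Metric.ball x r, g' z ∂μ =
        ((μ (Metric.ball x r))⁻¹ * ∫⁻ z in Metric.ball x r, g z ∂μ).toReal := by
    intro r hr0 hr1
    rw [setAverage_eq, measureReal_def, smul_eq_mul, hg'_def,
      integral_toReal hgmeas.aemeasurable.restrict (ae_restrict_of_ae hgfin),
      ENNReal.toReal_mul, ENNReal.toReal_inv]
  have hmain : ∀ r : ℝ, 0 < r → r < δ₁ →
      r ^ s * ⨍ z in Metric.ball x r, g' z ∂μ ≤ C * r ^ e := by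
    intro r hr0 hr1
    rw [havg_g' r hr0 hr1]
    have h6 := hkey r hr0 hr1
    calc r ^ s * ((μ (Metric.ball x r))⁻¹ * ∫⁻ z in Metric.ball x r, g z ∂μ).toReal
        = (ENNReal.ofReal (r ^ s) *
            ((μ (Metric.ball x r))⁻¹ * ∫⁻ z in Metric.ball x r, g z ∂μ)).toReal := by
          rw [ENNReal.toReal_mul (a := ENNReal.ofReal (r ^ s)),
            ENNReal.toReal_ofReal (Real.rpow_nonneg hr0.le s)]
    _ ≤ (Cen * ENNReal.ofReal (r ^ e)).toReal :=
          ENNReal.toReal_mono (ENNReal.mul_ne_top hCenfin ENNReal.ofReal_ne_top) h6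
    _ = C * r ^ e := by
          rw [ENNReal.toReal_mul (a := Cen),
            ENNReal.toReal_ofReal (Real.rpow_nonneg hr0.le e), hC_def]
  have hGnonneg : ∀ r : ℝ, 0 ≤ ⨍ z in Metric.ball x r, g' z ∂μ := by
    intro r
    rw [setAverage_eq, smul_eq_mul]
    exact mul_nonneg (inv_nonneg.mpr ENNReal.toReal_nonneg)
      (integral_nonneg hg'nonneg)
  have huint : ∀ r : ℝ, 0 < r → r < δ₁ → IntegrableOn u (Metric.ball x r) μ := by
    intro r hr0 hr1
    have hpos : μ (Metric.ball x r \ bad) ≠ 0 := by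
      rw [measure_diff_null hbadnull]
      exact hm0 r hr0 hr1
    obtain ⟨w, hwB, hwb⟩ := nonempty_of_measure_ne_zero hpos
    refine Integrable.mono' (g := fun z => |u w| + (2*r) ^ s * (g' z + g' w)) ?_
      hu.aestronglyMeasurable.restrict ?_
    · refine Integrable.add (integrableOn_const (hmfin r hr0 hr1)) ?_
      exact ((hg'int r hr0 hr1).add
        (integrableOn_const (hmfin r hr0 hr1))).const_mul _
    · filter_upwards [ae_restrict_mem measurableSet_ball, ae_restrict_of_ae hbadae]
        with z hzB hzb
      have h8 := hptwise z hzb w hwb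
      have hdzw : dist z w ^ s ≤ (2*r) ^ s := by
        apply Real.rpow_le_rpow dist_nonneg _ hs.le
        calc dist z w ≤ dist z x + dist w x := dist_triangle_right z w x
        _ ≤ r + r := add_le_add (le_of_lt (Metric.mem_ball.mp hzB))
            (le_of_lt (Metric.mem_ball.mp hwB))
        _ = 2*r := by ring
      have habs : |u z| ≤ |u w| + |u z - u w| := by
        have h9 : u z = u w + (u z - u w) := by ring
        calc |u z| = |u w + (u z - u w)| := by rw [← h9]
        _ ≤ |u w| + |u z - u w| := abs_add_le _ _
      have h10 : |u z - u w| ≤ (2*r)^s * (g' z + g' w) :=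
        le_trans h8 (mul_le_mul_of_nonneg_right hdzw
          (add_nonneg (hg'nonneg z) (hg'nonneg w)))
      calc ‖u z‖ = |u z| := Real.norm_eq_abs _
      _ ≤ |u w| + (2*r)^s * (g' z + g' w) := by linarith
  set A : ℝ → ℝ := fun r => ⨍ z in Metric.ball x r, u z ∂μ with hA_def
  have hcore : ∀ ρ r : ℝ, 0 < ρ → ρ ≤ r → r < δ₁ →
      |A ρ - A r| ≤ (2*r)^s * ((⨍ z in Metric.ball x ρ, g' z ∂μ) +
        ⨍ z in Metric.ball x r, g' z ∂μ) := by
    intro ρ r hρ0 hρr hr1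
    have hρ1 : ρ < δ₁ := lt_of_le_of_lt hρr hr1
    have hr0 : 0 < r := lt_of_lt_of_le hρ0 hρr
    set Gρ := ⨍ z in Metric.ball x ρ, g' z ∂μ with hGρ_def
    set Gr := ⨍ z in Metric.ball x r, g' z ∂μ with hGr_def
    have hm0ρ := hm0 ρ hρ0 hρ1
    have hmfρ := hmfin ρ hρ0 hρ1
    have hm0r := hm0 r hr0 hr1
    have hmfr := hmfin r hr0 hr1
    have hstepA : A ρ - A r = ⨍ w in Metric.ball x ρ, (u w - A r) ∂μ :=
      (setAvg_sub_const hm0ρ hmfρ u (huint ρ hρ0 hρ1) (A r)).symm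
    have hw_bound : ∀ᵐ w ∂(μ.restrict (Metric.ball x ρ)),
        |u w - A r| ≤ (2*r)^s * (g' w + Gr) := by
      filter_upwards [ae_restrict_mem measurableSet_ball, ae_restrict_of_ae hbadae]
        with w hwB hwb
      have h10 : u w - A r = ⨍ z in Metric.ball x r, (u w - u z) ∂μ :=
        (setAvg_const_sub hm0r hmfr u (huint r hr0 hr1) (u w)).symm
      rw [h10]
      refine le_trans (setAvg_abs_le _) ?_
      have h11 : ⨍ z in Metric.ball x r, |u w - u z| ∂μ ≤
          ⨍ z in Metric.ball x r, (2*r)^s * (g' z + g' w) ∂μ := by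
        apply setAvg_mono
        · exact ((integrableOn_const hmfr).sub
            (huint r hr0 hr1)).abs
        · exact ((hg'int r hr0 hr1).add
            (integrableOn_const hmfr)).const_mul _
        · filter_upwards [ae_restrict_mem measurableSet_ball, ae_restrict_of_ae hbadae]
            with z hzB hzb
          have h12 := hptwise w hwb z hzb
          have hdwz : dist w z ^ s ≤ (2*r)^s := by
            apply Real.rpow_le_rpow dist_nonneg _ hs.le
            calc dist w z ≤ dist w x + dist z x := dist_triangle_right w z x
            _ ≤ ρ + r := add_le_add (le_of_lt (Metric.mem_ball.mp hwB))
                (le_of_lt (Metric.mem_ball.mp hzB))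
            _ ≤ 2*r := by linarith
          calc |u w - u z| ≤ dist w z ^ s * (g' w + g' z) := h12
          _ ≤ (2*r)^s * (g' w + g' z) := mul_le_mul_of_nonneg_right hdwz
              (add_nonneg (hg'nonneg w) (hg'nonneg z))
          _ = (2*r)^s * (g' z + g' w) := by ring
      refine le_trans h11 ?_
      rw [setAvg_mul_add hm0r hmfr g' (hg'int r hr0 hr1) _ (g' w)]
      have heq : (2*r:ℝ)^s * (Gr + g' w) = (2*r)^s * (g' w + Gr) := by ring
      rw [← hGr_def, heq]
    have h13 : |A ρ - A r| ≤ ⨍ w in Metric.ball x ρ, |u w - A r| ∂μ := by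
      rw [hstepA]
      exact setAvg_abs_le _
    have h14 : ⨍ w in Metric.ball x ρ, |u w - A r| ∂μ ≤
        ⨍ w in Metric.ball x ρ, (2*r)^s * (g' w + Gr) ∂μ := by
      apply setAvg_mono
      · exact ((huint ρ hρ0 hρ1).sub
          (integrableOn_const hmfρ)).abs
      · exact ((hg'int ρ hρ0 hρ1).add
          (integrableOn_const hmfρ)).const_mul _
      · exact hw_bound
    have h15 : ⨍ w in Metric.ball x ρ, (2*r)^s * (g' w + Gr) ∂μ = (2*r)^s * (Gρ + Gr) :=
      setAvg_mul_add hm0ρ hmfρ g' (hg'int ρ hρ0 hρ1) _ Gr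
    rw [h15] at h14
    exact le_trans h13 h14
  set C₂ : ℝ := 2^s*(2^s+1)*C with hC₂_def
  have h2s : (0:ℝ) ≤ 2^s := Real.rpow_nonneg (by norm_num) s
  have hC₂0 : 0 ≤ C₂ := by
    apply mul_nonneg (mul_nonneg h2s (by linarith)) hC0
  have hsingle : ∀ ρ r : ℝ, 0 < ρ → ρ ≤ r → r ≤ 2*ρ → r < δ₁ →
      |A ρ - A r| ≤ C₂ * r ^ e := by
    intro ρ r hρ0 hρr hr2ρ hr1
    have hr0 : 0 < r := lt_of_lt_of_le hρ0 hρr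
    have hρ1 : ρ < δ₁ := lt_of_le_of_lt hρr hr1
    have h16 := hcore ρ r hρ0 hρr hr1
    set Gρ := ⨍ z in Metric.ball x ρ, g' z ∂μ with hGρ_def
    set Gr := ⨍ z in Metric.ball x r, g' z ∂μ with hGr_def
    have h17 : (2*r:ℝ)^s = 2^s * r^s := Real.mul_rpow (by norm_num) hr0.le
    have h18 : r^s * Gρ ≤ 2^s * (C * r^e) := by
      calc r^s * Gρ ≤ (2*ρ)^s * Gρ := mul_le_mul_of_nonneg_right
            (Real.rpow_le_rpow hr0.le hr2ρ hs.le) (hGnonneg ρ)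
      _ = 2^s * (ρ^s * Gρ) := by rw [Real.mul_rpow (by norm_num) hρ0.le]; ring
      _ ≤ 2^s * (C * ρ^e) := mul_le_mul_of_nonneg_left (hmain ρ hρ0 hρ1) h2s
      _ ≤ 2^s * (C * r^e) := by
          apply mul_le_mul_of_nonneg_left _ h2s
          exact mul_le_mul_of_nonneg_left (Real.rpow_le_rpow hρ0.le hρr he.le) hC0
    have h19 : r^s * Gr ≤ C * r^e := hmain r hr0 hr1
    calc |A ρ - A r| ≤ (2*r)^s * (Gρ + Gr) := h16
    _ = 2^s * (r^s * Gρ + r^s * Gr) := by rw [h17]; ring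
    _ ≤ 2^s * (2^s * (C * r^e) + C * r^e) := by
        apply mul_le_mul_of_nonneg_left _ h2s
        linarith
    _ = C₂ * r^e := by rw [hC₂_def]; ring
  set a : ℝ := ((2:ℝ)^e)⁻¹ with ha_def
  have h2e1 : (1:ℝ) < 2^e := by
    rw [show (1:ℝ) = (2:ℝ)^(0:ℝ) by simp]
    exact Real.rpow_lt_rpow_left_iff (by norm_num) |>.mpr he
  have ha0 : 0 ≤ a := by
    rw [ha_def]
    positivity
  have ha1 : a < 1 := by
    rw [ha_def]
    rw [inv_lt_one_iff₀]
    right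
    exact h2e1
  have hchain : ∀ k : ℕ, ∀ ρ r : ℝ, 0 < ρ → ρ ≤ r → r < δ₁ → r ≤ 2^k * ρ →
      |A ρ - A r| ≤ C₂ * r ^ e * ∑ j ∈ Finset.range (k+1), a ^ j := by
    intro k
    induction k with
    | zero =>
      intro ρ r hρ0 hρr hr1 hrk
      have hρeq : ρ = r := le_antisymm hρr (by simpa using hrk)
      rw [hρeq, sub_self, abs_zero]
      apply mul_nonneg (mul_nonneg hC₂0 (Real.rpow_nonneg (hρ0.trans_le hρr).le e))
      exact Finset.sum_nonneg fun j _ => pow_nonneg ha0 j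
    | succ k ih =>
      intro ρ r hρ0 hρr hr1 hrk
      have hr0 : 0 < r := lt_of_lt_of_le hρ0 hρr
      by_cases hcase : r ≤ 2^k * ρ
      · refine le_trans (ih ρ r hρ0 hρr hr1 hcase) ?_
        apply mul_le_mul_of_nonneg_left _
          (mul_nonneg hC₂0 (Real.rpow_nonneg hr0.le e))
        apply Finset.sum_le_sum_of_subset_of_nonneg
          (Finset.range_subset_range.mpr (by omega))
        intro j _ _
        exact pow_nonneg ha0 j
      · push_neg at hcase
        by_cases hhalf : r ≤ 2*ρ
        · refine le_trans (hsingle ρ r hρ0 hρr hhalf hr1) ?_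
          nth_rewrite 1 [← mul_one (C₂ * r^e)]
          apply mul_le_mul_of_nonneg_left _
            (mul_nonneg hC₂0 (Real.rpow_nonneg hr0.le e))
          have hone : (1:ℝ) = a^0 := by simp
          rw [hone]
          exact Finset.single_le_sum (f := fun j => a^j)
            (fun j _ => pow_nonneg ha0 j) (Finset.mem_range.mpr (Nat.succ_pos _))
        · push_neg at hhalf
          set ρ' := r/2 with hρ'_def
          have hρ'0 : 0 < ρ' := by rw [hρ'_def]; positivity
          have hρρ' : ρ ≤ ρ' := by rw [hρ'_def]; linarith
          have hρ'r : ρ' ≤ r := by rw [hρ'_def]; linarith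
          have hρ'1 : ρ' < δ₁ := lt_of_le_of_lt hρ'r hr1
          have hρ'k : ρ' ≤ 2^k * ρ := by
            rw [hρ'_def]
            rw [pow_succ] at hrk
            linarith
          have h20 := ih ρ ρ' hρ0 hρρ' hρ'1 hρ'k
          have h21 : |A ρ' - A r| ≤ C₂ * r ^ e := by
            apply hsingle ρ' r hρ'0 hρ'r _ hr1
            rw [hρ'_def]
            linarith
          have h22 : ρ'^e = r^e * a := by
            rw [hρ'_def, Real.div_rpow hr0.le (by norm_num), div_eq_mul_inv, ha_def]
          calc |A ρ - A r| ≤ |A ρ - A ρ'| + |A ρ' - A r| := abs_sub_le _ _ _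
          _ ≤ C₂ * ρ'^e * (∑ j ∈ Finset.range (k+1), a^j) + C₂ * r^e :=
              add_le_add h20 h21
          _ = C₂ * r^e * (a * ∑ j ∈ Finset.range (k+1), a^j + 1) := by
              rw [h22]; ring
          _ = C₂ * r^e * ∑ j ∈ Finset.range (k+1+1), a^j := by
              conv_rhs => rw [geom_sum_succ]
  have hsumbound : ∀ k : ℕ, ∑ j ∈ Finset.range (k+1), a^j ≤ (1-a)⁻¹ := by
    intro k
    have h23 := (summable_geometric_of_lt_one ha0 ha1).sum_le_tsum (Finset.range (k+1)) (fun j _ => pow_nonneg ha0 j)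
    rwa [tsum_geometric_of_lt_one ha0 ha1] at h23
  set C₃ : ℝ := C₂ * (1-a)⁻¹ with hC₃_def
  have hC₃0 : 0 ≤ C₃ := mul_nonneg hC₂0 (inv_nonneg.mpr (by linarith))
  have hfinal : ∀ ρ r : ℝ, 0 < ρ → ρ ≤ r → r < δ₁ → |A ρ - A r| ≤ C₃ * r ^ e := by
    intro ρ r hρ0 hρr hr1
    have hr0 : 0 < r := lt_of_lt_of_le hρ0 hρr
    obtain ⟨k, hk⟩ := pow_unbounded_of_one_lt (r/ρ) (by norm_num : (1:ℝ) < 2)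
    have hrk : r ≤ 2^k * ρ := by
      rw [div_lt_iff₀ hρ0] at hk
      linarith
    refine le_trans (hchain k ρ r hρ0 hρr hr1 hrk) ?_
    calc C₂ * r^e * ∑ j ∈ Finset.range (k+1), a^j ≤ C₂ * r^e * (1-a)⁻¹ :=
        mul_le_mul_of_nonneg_left (hsumbound k)
          (mul_nonneg hC₂0 (Real.rpow_nonneg hr0.le e))
    _ = C₃ * r^e := by rw [hC₃_def]; ring
  have hcauchy : Cauchy (Filter.map A (nhdsWithin (0:ℝ) (Set.Ioi 0))) := by
    rw [Metric.cauchy_iff]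
    constructor
    · exact Filter.map_neBot
    · intro ε₀ hε₀
      set b := (ε₀ / (C₃ + 1)) ^ e⁻¹ with hb_def
      have hbpos : 0 < b := Real.rpow_pos_of_pos (div_pos hε₀ (by linarith)) _
      set δ₂ := min (δ₁/2) (b/2) with hδ₂_def
      have hδ₂0 : 0 < δ₂ := lt_min (by linarith) (by linarith)
      refine ⟨A '' Set.Ioo 0 δ₂, ?_, ?_⟩
      · exact Filter.image_mem_map (Ioo_mem_nhdsGT_of_mem ⟨le_refl 0, hδ₂0⟩)
      · have key2 : ∀ r1 r2 : ℝ, r1 ∈ Set.Ioo (0:ℝ) δ₂ → r2 ∈ Set.Ioo (0:ℝ) δ₂ →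
            r1 ≤ r2 → |A r1 - A r2| < ε₀ := by
          intro r1 r2 h1 h2 h12
          have hr2δ : r2 < δ₁ := by
            have := lt_of_lt_of_le h2.2 (min_le_left _ _)
            linarith
          have h24 := hfinal r1 r2 h1.1 h12 hr2δ
          have hr2b : r2 < b := by
            have := lt_of_lt_of_le h2.2 (min_le_right _ _)
            linarith
          have h25 : r2 ^ e < b ^ e := Real.rpow_lt_rpow h2.1.le hr2b he
          have h26 : b ^ e = ε₀ / (C₃+1) :=
            Real.rpow_inv_rpow (div_pos hε₀ (by linarith)).le (ne_of_gt he)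
          calc |A r1 - A r2| ≤ C₃ * r2^e := h24
          _ ≤ (C₃+1) * r2^e := mul_le_mul_of_nonneg_right (by linarith)
              (Real.rpow_nonneg h2.1.le e)
          _ < (C₃+1) * (ε₀/(C₃+1)) := by
              apply mul_lt_mul_of_pos_left _ (by linarith)
              rw [← h26]
              exact h25
          _ = ε₀ := by field_simp
        rintro y ⟨r1, h1, rfl⟩ z ⟨r2, h2, rfl⟩
        rcases le_total r1 r2 with h | h
        · rw [Real.dist_eq]
          exact key2 r1 r2 h1 h2 h
        · rw [Real.dist_eq, abs_sub_comm]
          exact key2 r2 r1 h2 h1 h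
  obtain ⟨L, hL⟩ := CompleteSpace.complete hcauchy
  exact ⟨L, hL⟩
end Aux

open Filter in
/-- Lemma 5.2: Lebesgue point theorem for Hajłasz–Sobolev functions: if `u ∈ Ṁ^{s,n/s}(X)`
on an Ahlfors `n`-regular space with `0 < s < n`, then outside a set of Hausdorff dimension
zero the limit of averages `lim_{r→0} ⨍_{B(x,r)} u dμ` exists. -/
theorem hajlasz_sobolev_lebesgue_points {X : Type*} [MetricSpace X] [MeasurableSpace X]
    [BorelSpace X] (μ : Measure X) (n s : ℝ) (hn : 0 < n) (hs : 0 < s) (hsn : s < n)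
    (c₁ c₂ : ℝ≥0∞) (hc₁ : 0 < c₁) (hc₂ : c₂ ≠ ∞)
    (hreg : ∀ (x : X) (r : ℝ), 0 < r →
      ENNReal.ofReal r < EMetric.diam (Set.univ : Set X) →
      c₁ * ENNReal.ofReal (r ^ n) ≤ μ (Metric.ball x r) ∧
      μ (Metric.ball x r) ≤ c₂ * ENNReal.ofReal (r ^ n))
    (u : X → ℝ) (hu : Measurable u) (g : X → ℝ≥0∞)
    (hg : IsHajlaszGradient μ s u g) (hgL : (∫⁻ x, g x ^ (n / s) ∂μ) ≠ ∞) :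
    ∃ E : Set X, (∀ t : ℝ, 0 < t → μH[t] E = 0) ∧
      ∀ x ∉ E, ∃ L : ℝ, Filter.Tendsto (fun r => ⨍ z in Metric.ball x r, u z ∂μ)
        (nhdsWithin 0 (Set.Ioi 0)) (nhds L) := by
  classical
  obtain ⟨hgmeas, N, hN, hNineq⟩ := hg
  set P : X → Prop := fun x => ∃ L : ℝ, Filter.Tendsto
    (fun r => ⨍ z in Metric.ball x r, u z ∂μ)
    (nhdsWithin 0 (Set.Ioi 0)) (nhds L) with hP_def
  refine ⟨{x | ¬ P x}, ?_, fun x hx => not_not.mp hx⟩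
  intro t ht
  by_cases hdiam : EMetric.diam (Set.univ : Set X) = 0
  · have hsub : (Set.univ : Set X).Subsingleton := by
      rw [← EMetric.diam_eq_zero_iff]
      exact hdiam
    have hall : ∀ x : X, P x := by
      intro x
      refine ⟨⨍ z in (Set.univ : Set X), u z ∂μ, ?_⟩
      have hev : (fun r => ⨍ z in Metric.ball x r, u z ∂μ)
          =ᶠ[nhdsWithin (0:ℝ) (Set.Ioi 0)]
          (fun _ => ⨍ z in (Set.univ : Set X), u z ∂μ) := by
        filter_upwards [self_mem_nhdsWithin] with r hr
        have hball : Metric.ball x r = Set.univ := by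
          ext y
          simp only [Metric.mem_ball, Set.mem_univ, iff_true]
          have hyx : y = x := hsub (Set.mem_univ y) (Set.mem_univ x)
          rw [hyx, dist_self]
          exact hr
        rw [hball]
      exact Filter.Tendsto.congr' hev.symm tendsto_const_nhds
    have hempty : {x : X | ¬ P x} = ∅ := by
      ext x
      simp [hall x]
    rw [hempty]
    exact measure_empty
  · set ν := μ.withDensity (fun z => g z ^ (n / s)) with hν_def
    have hνuniv : ν Set.univ ≠ ∞ := by
      rw [hν_def, withDensity_apply _ MeasurableSet.univ, setLIntegral_univ]
      exact hgL
    have hνcb : ∀ (y : X) (r : ℝ), ν (Metric.closedBall y r) =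
        ∫⁻ z in Metric.closedBall y r, g z ^ (n / s) ∂μ :=
      fun y r => withDensity_apply _ measurableSet_closedBall
    have hconv : ∀ x : X, (∃ δ₀ : ℝ, 0 < δ₀ ∧ ∀ r : ℝ, 0 < r → r ≤ δ₀ →
        ν (Metric.closedBall x r) ≤ ENNReal.ofReal (r ^ (t/2))) → P x := by
      rintro x ⟨δ₀, hδ₀, hx⟩
      refine conv_aux μ n s hn hs hsn c₁ c₂ hc₁ hc₂ hreg u hu g hgmeas N hN hNineq hgL
        hdiam (t/2) (by linarith) x δ₀ hδ₀ ?_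
      intro r hr0 hrδ
      rw [← hνcb]
      exact hx r hr0 hrδ
    have hsubset : {x : X | ¬ P x} ⊆ {x : X | ∀ δ : ℝ, 0 < δ → ∃ r : ℝ, 0 < r ∧ r ≤ δ ∧
        ENNReal.ofReal (r ^ (t/2)) < ν (Metric.closedBall x r)} := by
      intro x hx
      by_contra hcon
      simp only [Set.mem_setOf_eq, not_forall] at hcon
      obtain ⟨δ, hδ0, hδ⟩ := hcon
      push_neg at hδ
      exact hx (hconv x ⟨δ, hδ0, fun r hr0 hrδ => hδ r hr0 hrδ⟩)
    have hfin := frostman_aux ν hνuniv (t/2) (by linarith)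
    rcases MeasureTheory.Measure.hausdorffMeasure_zero_or_top
        (show t/2 < t by linarith)
        {x : X | ∀ δ : ℝ, 0 < δ → ∃ r : ℝ, 0 < r ∧ r ≤ δ ∧
          ENNReal.ofReal (r ^ (t/2)) < ν (Metric.closedBall x r)} with h0 | htop
    · exact measure_mono_null hsubset h0
    · exact absurd htop hfin
end

section
/- Bounded multiplicity of distortion scales: let f : ℝⁿ → ℝⁿ be a quasiconformal (equivalently quasisymmetric) mapping satisfying, for some α ∈ (0,1] and C > 0, |f(E)|/|f(B)| ≤ C (|E|/|B|)^α for all balls B and measurable E ⊂ B, and suppose L_f(x,r)ⁿ ≍ |f(B(x,r))| for all x, r. Then there is N ∈ ℕ, independent of y and k, such that for all y ∈ ℝⁿ and k ∈ ℤ, the set { j ∈ ℤ : L_f(y, 2^{-j}) ∈ [2^{-k-1}, 2^{-k}) } has at most N elements. -/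
open MeasureTheory ENNReal

/-- `L_f(x,r) = sup{ |f(x)−f(y)| : |x−y| ≤ r }`. -/
noncomputable def distortionL {n : ℕ} (f : EuclideanSpace ℝ (Fin n) → EuclideanSpace ℝ (Fin n))
    (x : EuclideanSpace ℝ (Fin n)) (r : ℝ) : ℝ :=
  sSup {t : ℝ | ∃ y, dist x y ≤ r ∧ t = dist (f x) (f y)}

lemma distortionL_zero_dim (f : EuclideanSpace ℝ (Fin 0) → EuclideanSpace ℝ (Fin 0))
    (x : EuclideanSpace ℝ (Fin 0)) {r : ℝ} (hr : 0 ≤ r) : distortionL f x r = 0 := by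
  have hsub : Subsingleton (EuclideanSpace ℝ (Fin 0)) :=
    ⟨fun a b => by ext i; exact i.elim0⟩
  have : {t : ℝ | ∃ y, dist x y ≤ r ∧ t = dist (f x) (f y)} = {0} := by
    ext t
    simp only [Set.mem_setOf_eq, Set.mem_singleton_iff]
    constructor
    · rintro ⟨y, -, rfl⟩
      rw [hsub.elim (f x) (f y), dist_self]
    · rintro rfl
      exact ⟨x, by simp [hr], by rw [dist_self]⟩
  rw [distortionL, this, csSup_singleton]

set_option maxHeartbeats 1000000 in
/-- Bounded multiplicity of distortion scales (inequality (5.5)): if a quasiconformal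
homeomorphism `f` of `ℝⁿ` satisfies `|f(E)|/|f(B)| ≤ C (|E|/|B|)^α` and
`L_f(x,r)ⁿ ≍ |f(B(x,r))|`, then there is `N` such that for all `y` and `k`, the set
`{j : L_f(y,2^{-j}) ∈ [2^{-k-1}, 2^{-k})}` has at most `N` elements. -/
theorem bounded_multiplicity_of_distortion_scales (n : ℕ)
    (f : EuclideanSpace ℝ (Fin n) ≃ₜ EuclideanSpace ℝ (Fin n))
    (α C : ℝ) (hα0 : 0 < α) (hα1 : α ≤ 1) (hC : 0 < C)
    (c₁ c₂ : ℝ≥0∞) (hc₁ : 0 < c₁) (hc₂ : c₂ ≠ ∞)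
    (hdistort : ∀ (x : EuclideanSpace ℝ (Fin n)) (r : ℝ) (E : Set (EuclideanSpace ℝ (Fin n))),
      0 < r → MeasurableSet E → E ⊆ Metric.ball x r →
      volume (⇑f '' E) / volume (⇑f '' Metric.ball x r) ≤
        ENNReal.ofReal C * (volume E / volume (Metric.ball x r)) ^ α)
    (hL : ∀ (x : EuclideanSpace ℝ (Fin n)) (r : ℝ), 0 < r →
      c₁ * ENNReal.ofReal (distortionL (⇑f) x r ^ n) ≤ volume (⇑f '' Metric.ball x r) ∧
      volume (⇑f '' Metric.ball x r) ≤ c₂ * ENNReal.ofReal (distortionL (⇑f) x r ^ n)) :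
    ∃ N : ℕ, ∀ (y : EuclideanSpace ℝ (Fin n)) (k : ℤ),
      {j : ℤ | (2 : ℝ) ^ (-k - 1) ≤ distortionL (⇑f) y ((2 : ℝ) ^ (-j)) ∧
        distortionL (⇑f) y ((2 : ℝ) ^ (-j)) < (2 : ℝ) ^ (-k)}.Finite ∧
      {j : ℤ | (2 : ℝ) ^ (-k - 1) ≤ distortionL (⇑f) y ((2 : ℝ) ^ (-j)) ∧
        distortionL (⇑f) y ((2 : ℝ) ^ (-j)) < (2 : ℝ) ^ (-k)}.ncard ≤ N := by
  rcases Nat.eq_zero_or_pos n with hn0 | hn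
  · subst hn0
    refine ⟨0, fun y k => ?_⟩
    have hempty : {j : ℤ | (2 : ℝ) ^ (-k - 1) ≤ distortionL (⇑f) y ((2 : ℝ) ^ (-j)) ∧
        distortionL (⇑f) y ((2 : ℝ) ^ (-j)) < (2 : ℝ) ^ (-k)} = ∅ := by
      ext j
      simp only [Set.mem_setOf_eq, Set.mem_empty_iff_false, iff_false, not_and]
      intro h
      rw [distortionL_zero_dim _ _ (zpow_pos two_pos (-j)).le] at h
      exact absurd h (not_le.mpr (zpow_pos two_pos _))
    rw [hempty]
    simp
  · -- n ≥ 1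
    haveI : Nontrivial (EuclideanSpace ℝ (Fin n)) :=
      Module.nontrivial_of_finrank_pos (R := ℝ) (by rw [finrank_euclideanSpace_fin]; exact hn)
    set c : ℝ≥0∞ := min c₁ 1 with hc_def
    have hc0 : c ≠ 0 := (lt_min hc₁ one_pos).ne'
    have hctop : c ≠ ∞ := ((min_le_right _ _).trans_lt one_lt_top).ne
    have hcR : 0 < c.toReal := ENNReal.toReal_pos hc0 hctop
    set q : ℝ := (2 : ℝ) ^ (-α) with hq_def
    have hq0 : 0 < q := Real.rpow_pos_of_pos two_pos _
    have hq1 : q < 1 := Real.rpow_lt_one_of_one_lt_of_neg one_lt_two (neg_lt_zero.mpr hα0)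
    set ε : ℝ := c.toReal * (2 : ℝ)⁻¹ ^ n / (C * c₂.toReal + 1) with hε_def
    have hden : (0 : ℝ) < C * c₂.toReal + 1 := by positivity
    have hε : 0 < ε := by positivity
    obtain ⟨D, hD⟩ := exists_pow_lt_of_lt_one hε hq1
    refine ⟨2 * D + 1, fun y k => ?_⟩
    set S := {j : ℤ | (2 : ℝ) ^ (-k - 1) ≤ distortionL (⇑f) y ((2 : ℝ) ^ (-j)) ∧
        distortionL (⇑f) y ((2 : ℝ) ^ (-j)) < (2 : ℝ) ^ (-k)} with hS
    have key : ∀ j ∈ S, ∀ j' ∈ S, j' ≤ j → j - j' < (D : ℤ) := by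
      intro j hj j' hj' hle
      by_contra hcon
      push_neg at hcon
      simp only [hS, Set.mem_setOf_eq] at hj hj'
      obtain ⟨hja, hjb⟩ := hj
      obtain ⟨hj'a, hj'b⟩ := hj'
      set a : ℝ := (2 : ℝ) ^ (-k - 1) with ha_def
      set b : ℝ := (2 : ℝ) ^ (-k) with hb_def
      have ha : 0 < a := zpow_pos two_pos _
      have hb : 0 < b := zpow_pos two_pos _
      set r : ℝ := (2 : ℝ) ^ (-j) with hr_def
      set r' : ℝ := (2 : ℝ) ^ (-j') with hr'_def
      have hr : 0 < r := zpow_pos two_pos _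
      have hr' : 0 < r' := zpow_pos two_pos _
      have hrr' : r ≤ r' := zpow_le_zpow_right₀ one_le_two (by omega)
      set Lj : ℝ := distortionL (⇑f) y r with hLj_def
      set Lj' : ℝ := distortionL (⇑f) y r' with hLj'_def
      have hLj'0 : 0 < Lj' := ha.trans_le hj'a
      obtain ⟨hEl, -⟩ := hL y r hr
      obtain ⟨hBl, hBu⟩ := hL y r' hr'
      have hdist := hdistort y r' (Metric.ball y r) hr' measurableSet_ball
        (Metric.ball_subset_ball hrr')
      -- compute the measure ratio
      have hv0 : volume (Metric.ball (0 : EuclideanSpace ℝ (Fin n)) 1) ≠ 0 :=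
        (Metric.measure_ball_pos volume 0 one_pos).ne'
      have hvt : volume (Metric.ball (0 : EuclideanSpace ℝ (Fin n)) 1) ≠ ∞ :=
        measure_ball_lt_top.ne
      have hvol : volume (Metric.ball y r) / volume (Metric.ball y r')
          = ENNReal.ofReal ((r / r') ^ n) := by
        rw [Measure.addHaar_ball volume y hr.le, Measure.addHaar_ball volume y hr'.le,
          finrank_euclideanSpace_fin, ENNReal.mul_div_mul_right _ _ hv0 hvt,
          ← ENNReal.ofReal_div_of_pos (pow_pos hr' n), div_pow]
      set s : ℝ := ((r / r') ^ n) ^ α with hs_def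
      have hs0 : 0 < s := Real.rpow_pos_of_pos (pow_pos (div_pos hr hr') n) α
      have hdist' : volume (⇑f '' Metric.ball y r) / volume (⇑f '' Metric.ball y r')
          ≤ ENNReal.ofReal C * ENNReal.ofReal s := by
        rw [← ENNReal.ofReal_rpow_of_pos (pow_pos (div_pos hr hr') n), ← hvol]
        exact hdist
      have hBne0 : volume (⇑f '' Metric.ball y r') ≠ 0 := by
        refine fun h0 => absurd (hBl.trans_eq h0) (not_le.mpr ?_)
        exact ENNReal.mul_pos hc₁.ne' (ENNReal.ofReal_pos.mpr (pow_pos hLj'0 n)).ne'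
      have hBtop : volume (⇑f '' Metric.ball y r') ≠ ∞ :=
        (hBu.trans_lt (ENNReal.mul_lt_top hc₂.lt_top ENNReal.ofReal_lt_top)).ne
      have hchain : c * ENNReal.ofReal (a ^ n) ≤
          ENNReal.ofReal C * ENNReal.ofReal s * (c₂ * ENNReal.ofReal (b ^ n)) := by
        calc c * ENNReal.ofReal (a ^ n)
            ≤ c₁ * ENNReal.ofReal (Lj ^ n) :=
              mul_le_mul' (min_le_left _ _)
                (ENNReal.ofReal_le_ofReal (pow_le_pow_left₀ ha.le hja n))
          _ ≤ volume (⇑f '' Metric.ball y r) := hEl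
          _ ≤ ENNReal.ofReal C * ENNReal.ofReal s * volume (⇑f '' Metric.ball y r') :=
              (ENNReal.div_le_iff_le_mul (Or.inl hBne0) (Or.inl hBtop)).mp hdist'
          _ ≤ ENNReal.ofReal C * ENNReal.ofReal s * (c₂ * ENNReal.ofReal (b ^ n)) := by
              refine mul_le_mul_right (hBu.trans (mul_le_mul_right ?_ c₂)) _
              exact ENNReal.ofReal_le_ofReal (pow_le_pow_left₀ hLj'0.le hj'b.le n)
      have hR : c.toReal * a ^ n ≤ C * s * (c₂.toReal * b ^ n) := by
        have htop : ENNReal.ofReal C * ENNReal.ofReal s * (c₂ * ENNReal.ofReal (b ^ n)) ≠ ∞ := by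
          exact (ENNReal.mul_lt_top
            (ENNReal.mul_lt_top ENNReal.ofReal_lt_top ENNReal.ofReal_lt_top)
            (ENNReal.mul_lt_top hc₂.lt_top ENNReal.ofReal_lt_top)).ne
        have h := ENNReal.toReal_mono htop hchain
        rwa [ENNReal.toReal_mul, ENNReal.toReal_mul, ENNReal.toReal_mul, ENNReal.toReal_mul,
          ENNReal.toReal_ofReal (pow_nonneg ha.le n), ENNReal.toReal_ofReal hC.le,
          ENNReal.toReal_ofReal hs0.le, ENNReal.toReal_ofReal (pow_nonneg hb.le n)] at h
      -- divide out b^n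
      have hab : a = b * 2⁻¹ := by
        rw [ha_def, hb_def, sub_eq_add_neg, zpow_add₀ (two_ne_zero (α := ℝ)), zpow_neg_one]
      have h2 : c.toReal * (2 : ℝ)⁻¹ ^ n ≤ C * c₂.toReal * s := by
        have hbn : (0 : ℝ) < b ^ n := pow_pos hb n
        rw [hab, mul_pow] at hR
        have h' : (c.toReal * (2 : ℝ)⁻¹ ^ n) * b ^ n ≤ (C * c₂.toReal * s) * b ^ n := by
          nlinarith [hR]
        exact le_of_mul_le_mul_right h' hbn
      have hεs : ε ≤ s := by
        have hc₂R : (0 : ℝ) ≤ c₂.toReal := ENNReal.toReal_nonneg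
        have : c.toReal * (2 : ℝ)⁻¹ ^ n ≤ s * (C * c₂.toReal + 1) := by nlinarith [hs0.le, h2]
        exact (div_le_iff₀ hden).mpr this
      -- bound s by q ^ d
      set d : ℕ := (j - j').toNat with hd_def
      have hdZ : (d : ℤ) = j - j' := Int.toNat_of_nonneg (by omega)
      have hrs : r / r' = ((2 : ℝ) ^ (d * n))⁻¹ ^ (1 : ℕ) → True := fun _ => trivial
      have hrr : (r / r') ^ n = ((2 : ℝ) ^ (d * n))⁻¹ := by
        rw [hr_def, hr'_def, ← zpow_sub₀ (two_ne_zero (α := ℝ))]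
        have : -j - -j' = -(d : ℤ) := by omega
        rw [this, zpow_neg, zpow_natCast, inv_pow, ← pow_mul]
      have hsq : s ≤ q ^ d := by
        have h2le : (1 : ℝ) ≤ 2 := one_le_two
        have e1 : s = (2 : ℝ) ^ (-(((d * n : ℕ) : ℝ)) * α) := by
          rw [hs_def, hrr, ← Real.rpow_natCast (2 : ℝ) (d * n), ← Real.rpow_neg two_pos.le,
            ← Real.rpow_mul two_pos.le]
        have e2 : q ^ d = (2 : ℝ) ^ (-α * (d : ℝ)) := by
          rw [hq_def, ← Real.rpow_natCast ((2 : ℝ) ^ (-α)) d, ← Real.rpow_mul two_pos.le]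
        rw [e1, e2]
        apply Real.rpow_le_rpow_of_exponent_le h2le
        have hdn : (d : ℝ) ≤ ((d * n : ℕ) : ℝ) := by
          exact_mod_cast Nat.le_mul_of_pos_right d hn
        have := mul_le_mul_of_nonneg_left hdn hα0.le
        linarith
      have hdD : D ≤ d := by omega
      have : q ^ d ≤ q ^ D := pow_le_pow_of_le_one hq0.le hq1.le hdD
      linarith [hD, hεs, hsq]
    rcases S.eq_empty_or_nonempty with hSe | ⟨j₀, hj₀⟩
    · rw [hSe]; simp
    · have hsub : S ⊆ Set.Icc (j₀ - D) (j₀ + D) := by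
        intro j hj
        simp only [Set.mem_Icc]
        rcases le_total j j₀ with h | h
        · have := key j₀ hj₀ j hj h; omega
        · have := key j hj j₀ hj₀ h; omega
      have hfin : S.Finite := (Set.finite_Icc _ _).subset hsub
      refine ⟨hfin, ?_⟩
      calc S.ncard ≤ (Set.Icc (j₀ - (D : ℤ)) (j₀ + D)).ncard :=
            Set.ncard_le_ncard hsub (Set.finite_Icc _ _)
        _ = 2 * D + 1 := by
            rw [← Finset.coe_Icc, Set.ncard_coe_finset, Int.card_Icc]
            omega
end
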